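/- arXiv:1806.07357 — 5 statements merged into one kernel-verified Lean document; each statement's English description precedes it below -/
import Mathlib

section
/- Let X_1, ..., X_n be i.i.d. random variables with continuous cdf F, let C ⊆ {1,...,n-1} with c = |C|+1, and let x ∈ ℝ. Then P(max_{j∈C} X_j < X_n < x) = F(x)^c / c. -/
open MeasureTheory ProbabilityTheory Set
open scoped ENNReal

/-- The distribution of `F` under `ν` restricted to `Iio x` is the uniform distribution
on `[0, F x)`, when `F` is the continuous cdf of `ν`. -/
lemma cdf_map_restrict (ν : Measure ℝ) [IsProbabilityMeasure ν] (F : ℝ → ℝ)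
    (hF : Continuous F) (hF0 : ∀ x, 0 ≤ F x)
    (hcdf : ∀ t, ν (Set.Iio t) = ENNReal.ofReal (F t)) (x : ℝ) :
    (ν.restrict (Set.Iio x)).map F = volume.restrict (Set.Ico 0 (F x)) := by
  have hmono : Monotone F := by
    intro a b hab
    have h := measure_mono (μ := ν) (Iio_subset_Iio hab)
    rw [hcdf, hcdf] at h
    exact (ENNReal.ofReal_le_ofReal_iff (hF0 b)).1 h
  -- measure of strict sublevel sets
  have claim_lt : ∀ u : ℝ, ν ({t | F t < u} ∩ Iio x) = ENNReal.ofReal (min u (F x)) := by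
    intro u
    rcases le_or_gt u 0 with hu | hu
    · have h1 : {t | F t < u} = ∅ :=
        eq_empty_of_forall_notMem fun t ht => absurd ((hF0 t).trans_lt ht) (by linarith)
      rw [h1, empty_inter, measure_empty]
      symm
      rw [ENNReal.ofReal_eq_zero]
      exact (min_le_left _ _).trans hu
    · by_cases hall : ∀ t, F t < u
      · have h1 : {t | F t < u} = univ := eq_univ_of_forall hall
        rw [h1, univ_inter, hcdf, min_eq_right (hall x).le]
      · push_neg at hall
        obtain ⟨s, hs⟩ := hall
        have hne : ∃ t0, F t0 < u := by
          by_contra hc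
          push_neg at hc
          have h1 : ∀ t : ℝ, ν (Ici t) ≤ 1 - ENNReal.ofReal u := by
            intro t
            have hIci : Ici t = (Iio t)ᶜ := compl_Iio.symm
            rw [hIci, measure_compl measurableSet_Iio (measure_ne_top _ _), measure_univ, hcdf]
            exact tsub_le_tsub_left (ENNReal.ofReal_le_ofReal (hc t)) 1
          have h2 := tendsto_measure_Ici_atBot ν
          rw [measure_univ] at h2
          have h3 : (1 : ℝ≥0∞) - ENNReal.ofReal u < 1 :=
            ENNReal.sub_lt_self ENNReal.one_ne_top one_ne_zero
              (by simpa [ENNReal.ofReal_eq_zero] using hu)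
          obtain ⟨t, ht⟩ := (h2.eventually (eventually_gt_nhds h3)).exists
          exact absurd (h1 t) (not_le.2 ht)
        obtain ⟨t0, ht0⟩ := hne
        set L := {t | F t < u} with hLdef
        have hLopen : IsOpen L := isOpen_lt hF continuous_const
        have hLne : L.Nonempty := ⟨t0, ht0⟩
        have hbdd : BddAbove L := by
          refine ⟨s, fun t ht => ?_⟩
          by_contra hst
          push_neg at hst
          have h1 : F t < u := ht
          have h2 : u ≤ F t := hs.trans (hmono hst.le)
          linarith
        set b := sSup L with hb
        have hLIio : L = Iio b := by
          ext t
          constructor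
          · intro ht
            obtain ⟨ε, hε, hball⟩ := Metric.isOpen_iff.1 hLopen t ht
            have h1 : t + ε / 2 ∈ L := hball (by
              simp only [Metric.mem_ball, Real.dist_eq]
              rw [abs_of_pos (by linarith)]
              linarith)
            have h2 : t + ε / 2 ≤ b := le_csSup hbdd h1
            exact lt_of_lt_of_le (by linarith) h2
          · intro ht
            obtain ⟨s', hs', hts'⟩ := exists_lt_of_lt_csSup hLne ht
            exact lt_of_le_of_lt (hmono hts'.le) hs'
        have hFb : F b = u := by
          refine le_antisymm ?_ ?_
          · by_contra hcon
            push_neg at hcon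
            have hopen : IsOpen {t | u < F t} := isOpen_lt continuous_const hF
            obtain ⟨ε, hε, hball⟩ := Metric.isOpen_iff.1 hopen b hcon
            have h1 : b - ε / 2 ∈ {t | u < F t} := hball (by
              simp only [Metric.mem_ball, Real.dist_eq]
              rw [abs_of_neg (by linarith)]
              linarith)
            have h2 : b - ε / 2 ∈ L := by rw [hLIio]; exact sub_lt_self b (by linarith)
            have h3 : F (b - ε / 2) < u := h2
            have h4 : u < F (b - ε / 2) := h1
            linarith
          · by_contra hcon
            push_neg at hcon
            have : b ∈ L := hcon
            rw [hLIio] at this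
            exact lt_irrefl b this
        rw [hLIio, Iio_inter_Iio, hcdf, hmono.map_min, hFb]
  -- measure of weak sublevel sets
  have claim_le : ∀ u : ℝ, ν ({t | F t ≤ u} ∩ Iio x) = ENNReal.ofReal (min u (F x)) := by
    intro u
    refine le_antisymm ?_ ?_
    · refine ENNReal.le_of_forall_pos_le_add fun ε hε _ => ?_
      have hε' : (0 : ℝ) < ε := hε
      calc ν ({t | F t ≤ u} ∩ Iio x)
          ≤ ν ({t | F t < u + ε} ∩ Iio x) :=
            measure_mono (inter_subset_inter_left _ fun t ht =>
              lt_of_le_of_lt ht (lt_add_of_pos_right _ hε'))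
        _ = ENNReal.ofReal (min (u + ε) (F x)) := claim_lt _
        _ ≤ ENNReal.ofReal (min u (F x) + ε) := by
            refine ENNReal.ofReal_le_ofReal ?_
            rcases le_total u (F x) with h | h
            · simp only [min_eq_left h]
              exact min_le_left _ _
            · rw [min_eq_right h]
              exact (min_le_right _ _).trans (by linarith)
        _ ≤ ENNReal.ofReal (min u (F x)) + ENNReal.ofReal ε := ENNReal.ofReal_add_le
        _ = ENNReal.ofReal (min u (F x)) + ε := by rw [ENNReal.ofReal_coe_nnreal]
    · rw [← claim_lt u]
      exact measure_mono (inter_subset_inter_left _ (setOf_subset_setOf.2 fun t => le_of_lt))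
  -- conclude by extensionality on Iic intervals
  have hfin : IsFiniteMeasure ((ν.restrict (Set.Iio x)).map F) := by
    constructor
    rw [Measure.map_apply hF.measurable MeasurableSet.univ]
    exact lt_of_le_of_lt (le_trans (measure_mono (subset_univ _))
      (Measure.restrict_apply_le _ _)) (by simp [measure_lt_top])
  refine Measure.ext_of_Iic _ _ fun u => ?_
  rw [Measure.map_apply hF.measurable measurableSet_Iic,
    Measure.restrict_apply (hF.measurable measurableSet_Iic),
    Measure.restrict_apply measurableSet_Iic]
  have hpre : F ⁻¹' Iic u = {t | F t ≤ u} := rfl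
  rw [hpre, claim_le u]
  have hFx : 0 ≤ F x := hF0 x
  rcases lt_or_ge u 0 with hu | hu
  · have h1 : Iic u ∩ Ico 0 (F x) = ∅ := by
      apply eq_empty_of_forall_notMem
      rintro t ⟨ht1, ht2, ht3⟩
      rw [mem_Iic] at ht1
      linarith
    rw [h1, measure_empty, ENNReal.ofReal_eq_zero]
    exact (min_le_left _ _).trans hu.le
  · rcases lt_or_ge u (F x) with h | h
    · have h1 : Iic u ∩ Ico 0 (F x) = Icc 0 u := by
        ext t
        simp only [mem_inter_iff, mem_Iic, mem_Ico, mem_Icc]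
        constructor
        · rintro ⟨ht1, ht2, ht3⟩
          exact ⟨ht2, ht1⟩
        · rintro ⟨ht1, ht2⟩
          exact ⟨ht2, ht1, lt_of_le_of_lt ht2 h⟩
      rw [h1, Real.volume_Icc, min_eq_left h.le, sub_zero]
    · have h1 : Iic u ∩ Ico 0 (F x) = Ico 0 (F x) := by
        rw [inter_eq_right]
        rintro t ⟨ht1, ht2⟩
        exact le_trans ht2.le h
      rw [h1, Real.volume_Ico, min_eq_right h, sub_zero]

/-- Key integral computation: `∫_{t < x} F(t)^k dν(t) = F(x)^{k+1}/(k+1)`. -/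
lemma key_integral (ν : Measure ℝ) [IsProbabilityMeasure ν] (F : ℝ → ℝ)
    (hF : Continuous F) (hF0 : ∀ x, 0 ≤ F x)
    (hcdf : ∀ t, ν (Set.Iio t) = ENNReal.ofReal (F t)) (x : ℝ) (k : ℕ) :
    ∫⁻ t in Set.Iio x, (ENNReal.ofReal (F t)) ^ k ∂ν
      = ENNReal.ofReal (F x ^ (k + 1) / (k + 1)) := by
  have hmeq := cdf_map_restrict ν F hF hF0 hcdf x
  have hint : MeasureTheory.IntegrableOn (fun u : ℝ => u ^ k) (Ico 0 (F x)) volume :=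
    ((continuous_pow k).integrableOn_Icc).mono_set Ico_subset_Icc_self
  have hnn : 0 ≤ᵐ[volume.restrict (Ico 0 (F x))] fun u : ℝ => u ^ k :=
    (ae_restrict_iff' measurableSet_Ico).2 (Filter.Eventually.of_forall
      fun u hu => pow_nonneg hu.1 k)
  calc ∫⁻ t in Set.Iio x, (ENNReal.ofReal (F t)) ^ k ∂ν
      = ∫⁻ t in Set.Iio x, ENNReal.ofReal (F t ^ k) ∂ν :=
        lintegral_congr fun t => (ENNReal.ofReal_pow (hF0 t) k).symm
    _ = ∫⁻ u, ENNReal.ofReal (u ^ k) ∂((ν.restrict (Set.Iio x)).map F) := by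
        rw [lintegral_map (by measurability) hF.measurable]
    _ = ∫⁻ u in Ico 0 (F x), ENNReal.ofReal (u ^ k) := by rw [hmeq]
    _ = ENNReal.ofReal (∫ u in Ico 0 (F x), u ^ k) :=
        (MeasureTheory.ofReal_integral_eq_lintegral_ofReal hint hnn).symm
    _ = ENNReal.ofReal (F x ^ (k + 1) / (k + 1)) := by
        congr 1
        rw [MeasureTheory.integral_Ico_eq_integral_Ioo,
          ← MeasureTheory.integral_Ioc_eq_integral_Ioo,
          ← intervalIntegral.integral_of_le (hF0 x), integral_pow]
        ring

/-- For i.i.d. `X 1, ..., X n` with continuous cdf `F`, a comparison set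
`C ⊆ {1,...,n-1}` with `c = |C| + 1` and any `x : ℝ`,
`P(max_{j ∈ C} X j < X n < x) = F(x) ^ c / c`. -/
theorem record_prob_partial_comparison_truncated
    {Ω : Type*} [MeasurableSpace Ω] (μ : Measure Ω) [IsProbabilityMeasure μ]
    (n : ℕ) (hn : 1 ≤ n)
    (X : ℕ → Ω → ℝ) (hmeas : ∀ i, Measurable (X i))
    (hindep : iIndepFun X μ)
    (F : ℝ → ℝ) (hF : Continuous F) (hF0 : ∀ x, 0 ≤ F x)
    (hcdf : ∀ i x, μ {ω | X i ω < x} = ENNReal.ofReal (F x))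
    (C : Finset ℕ) (hC : C ⊆ Finset.Icc 1 (n - 1)) (x : ℝ) :
    μ {ω | (∀ j ∈ C, X j ω < X n ω) ∧ X n ω < x}
      = ENNReal.ofReal (F x ^ (C.card + 1) / (C.card + 1)) := by
  classical
  have hnC : n ∉ C := by
    intro h
    have := hC h
    rw [Finset.mem_Icc] at this
    omega
  set k := C.card with hk
  -- the law of X n
  set ν := μ.map (X n) with hν
  have hνprob : IsProbabilityMeasure ν := Measure.isProbabilityMeasure_map (hmeas n).aemeasurable
  have hνIio : ∀ t, ν (Set.Iio t) = ENNReal.ofReal (F t) := by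
    intro t
    rw [hν, Measure.map_apply (hmeas n) measurableSet_Iio]
    exact hcdf n t
  -- the law of the random vector indexed by C
  set V : Ω → (C → ℝ) := fun ω j => X j ω with hV
  have hVmeas : Measurable V := measurable_pi_lambda _ fun j => hmeas j
  set ρ := μ.map V with hρ
  have hρprob : IsProbabilityMeasure ρ := Measure.isProbabilityMeasure_map hVmeas.aemeasurable
  have hsetmeas : ∀ t : ℝ, MeasurableSet {v : C → ℝ | ∀ j, v j < t} := by
    intro t
    have : {v : C → ℝ | ∀ j, v j < t} = ⋂ j : C, (fun v : C → ℝ => v j) ⁻¹' Set.Iio t := by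
      ext v
      simp [Set.mem_iInter]
    rw [this]
    exact MeasurableSet.iInter fun j => (measurable_pi_apply j) measurableSet_Iio
  have hρs : ∀ t : ℝ, ρ {v : C → ℝ | ∀ j, v j < t} = (ENNReal.ofReal (F t)) ^ k := by
    intro t
    rw [hρ, Measure.map_apply hVmeas (hsetmeas t)]
    have hpre : V ⁻¹' {v : C → ℝ | ∀ j, v j < t} = ⋂ j ∈ C, X j ⁻¹' Set.Iio t := by
      ext ω
      simp [hV, Set.mem_iInter]
    rw [hpre, hindep.meas_biInter (fun j _ => ⟨Set.Iio t, measurableSet_Iio, rfl⟩)]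
    have hval : ∀ j ∈ C, μ (X j ⁻¹' Set.Iio t) = ENNReal.ofReal (F t) := fun j _ => hcdf j t
    rw [Finset.prod_congr rfl hval, Finset.prod_const, hk]
  -- independence of X n and the vector V
  have hind : IndepFun (X n) V μ := by
    have h := hindep.indepFun_finset {n} C
      (Finset.disjoint_singleton_left.2 hnC) hmeas
    have h2 := h.comp (φ := fun v : ({n} : Finset ℕ) → ℝ => v ⟨n, Finset.mem_singleton_self n⟩)
      (ψ := id) (measurable_pi_apply (X := fun _ => ℝ) (⟨n, Finset.mem_singleton_self n⟩ : ({n} : Finset ℕ))) measurable_id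
    exact h2
  have hmap : μ.map (fun ω => (X n ω, V ω)) = ν.prod ρ :=
    (indepFun_iff_map_prod_eq_prod_map_map (hmeas n).aemeasurable hVmeas.aemeasurable).1 hind
  -- rewrite the event as a preimage
  set B : Set (ℝ × (C → ℝ)) := {p | (∀ j, p.2 j < p.1) ∧ p.1 < x} with hB
  have hBmeas : MeasurableSet B := by
    have h1 : B = (⋂ j : C, {p : ℝ × (C → ℝ) | p.2 j < p.1}) ∩ {p : ℝ × (C → ℝ) | p.1 < x} := by
      ext p
      simp [hB, Set.mem_iInter]
    rw [h1]
    exact MeasurableSet.inter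
      (MeasurableSet.iInter fun j =>
        measurableSet_lt (measurable_snd.eval) measurable_fst)
      (measurableSet_lt measurable_fst measurable_const)
  have hpre : {ω | (∀ j ∈ C, X j ω < X n ω) ∧ X n ω < x}
      = (fun ω => (X n ω, V ω)) ⁻¹' B := by
    ext ω
    simp [hB, hV]
  rw [hpre, ← Measure.map_apply ((hmeas n).prodMk hVmeas) hBmeas, hmap,
    Measure.prod_apply hBmeas]
  have hsec : ∀ t : ℝ, (Prod.mk t ⁻¹' B) =
      if t < x then {v : C → ℝ | ∀ j, v j < t} else ∅ := by
    intro t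
    ext v
    by_cases h : t < x <;> simp [hB, h]
  calc ∫⁻ t, ρ (Prod.mk t ⁻¹' B) ∂ν
      = ∫⁻ t, (Set.Iio x).indicator (fun t => (ENNReal.ofReal (F t)) ^ k) t ∂ν := by
        refine lintegral_congr fun t => ?_
        rw [hsec t]
        by_cases h : t < x
        · rw [if_pos h, hρs t, Set.indicator_of_mem (Set.mem_Iio.2 h)]
        · rw [if_neg h, measure_empty,
            Set.indicator_of_notMem (fun hmem => h (Set.mem_Iio.1 hmem))]
    _ = ∫⁻ t in Set.Iio x, (ENNReal.ofReal (F t)) ^ k ∂ν :=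
        lintegral_indicator measurableSet_Iio _
    _ = ENNReal.ofReal (F x ^ (k + 1) / (k + 1)) := key_integral ν F hF hF0 hνIio x k
end

section
/- Let X_1, X_2, ... be i.i.d. with continuous cdf F. Let n_1 < n_2 < ... be a strictly increasing sequence of indices with comparison sets C(n_t) ⊆ {1,...,n_t−1} satisfying: (a1) C(n_1) ⊊ C(n_2) ⊊ ... are strictly increasing, and (a2) n_{t−1} ∈ C(n_t) for all t ≥ 2. Define the record events A_{n_t} = {X_{n_t} > max_{j∈C(n_t)} X_j} and c(n_t) = |C(n_t)|+1. Then for any finite set of indices i_1 < i_2 < ... < i_k from {n_t}, P(A_{i_1} ∩ ... ∩ A_{i_k}) = 1/(c(i_1)·c(i_2)···c(i_k)); in particular the record events along the subsequence are mutually independent. -/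
open MeasureTheory ProbabilityTheory
open scoped ENNReal

namespace RecAux
open List


/-- The finset of all orderings (nodup lists) of a finset of naturals. -/
noncomputable def perms (T : Finset ℕ) : Finset (List ℕ) := T.toList.permutations.toFinset

lemma mem_perms {T : Finset ℕ} {l : List ℕ} : l ∈ perms T ↔ l.Nodup ∧ l.toFinset = T := by
  rw [perms, List.mem_toFinset, List.mem_permutations]
  constructor
  · intro h
    exact ⟨h.nodup_iff.mpr T.nodup_toList,
      (List.toFinset_eq_of_perm _ _ h).trans T.toList_toFinset⟩
  · rintro ⟨hn, hT⟩
    exact List.perm_of_nodup_nodup_toFinset_eq hn T.nodup_toList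
      (hT.trans T.toList_toFinset.symm)

lemma card_perms (T : Finset ℕ) : (perms T).card = Nat.factorial T.card := by
  rw [perms, List.toFinset_card_of_nodup (List.nodup_permutations _ T.nodup_toList),
    List.length_permutations, Finset.length_toList]

/-- Validity of an ordering w.r.t. a system of record constraints. -/
def Valid {k : ℕ} (S : Fin k → Finset ℕ) (a : Fin k → ℕ) (l : List ℕ) : Prop :=
  ∀ j : Fin k, ∀ x ∈ S j, l.idxOf x < l.idxOf (a j)

instance validDec {k : ℕ} (S : Fin k → Finset ℕ) (a : Fin k → ℕ) :
    DecidablePred (Valid S a) := fun l => by unfold Valid; infer_instance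

lemma valid_append {k : ℕ} {S : Fin k → Finset ℕ} {a : Fin k → ℕ} {l' : List ℕ} {z : ℕ}
    (hz : ∀ j : Fin k, a j ∈ l' ∧ ∀ x ∈ S j, x ∈ l') :
    Valid S a (l' ++ [z]) ↔ Valid S a l' := by
  constructor
  · intro h j x hx
    have := h j x hx
    rwa [List.idxOf_append_of_mem ((hz j).2 x hx),
      List.idxOf_append_of_mem (hz j).1] at this
  · intro h j x hx
    have := h j x hx
    rwa [List.idxOf_append_of_mem ((hz j).2 x hx),
      List.idxOf_append_of_mem (hz j).1]

lemma count_valid : ∀ (n : ℕ) (T : Finset ℕ), T.card = n →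
    ∀ (k : ℕ) (S : Fin k → Finset ℕ) (a : Fin k → ℕ),
    (∀ j1 j2 : Fin k, j2 ≤ j1 → a j1 ∉ S j2) →
    (∀ j1 j2 : Fin k, j1 < j2 → insert (a j1) (S j1) ⊆ S j2) →
    (∀ j, insert (a j) (S j) ⊆ T) →
    ((perms T).filter (Valid S a)).card * ∏ j, ((S j).card + 1) = Nat.factorial n := by
  intro n
  induction n with
  | zero =>
    intro T hT k S a hax hnest hsubT
    rcases k with _ | k'
    · have : (perms T).filter (Valid S a) = perms T := by
        apply Finset.filter_true_of_mem
        intro l _ j; exact absurd j.2 (by omega)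
      rw [this, card_perms, hT]
      simp
    · exfalso
      have := hsubT 0 (Finset.mem_insert_self _ _)
      rw [Finset.card_eq_zero.mp hT] at this
      exact absurd this (Finset.notMem_empty _)
  | succ n ih =>
    intro T hT k S a hax hnest hsubT
    rcases k with _ | k'
    · have : (perms T).filter (Valid S a) = perms T := by
        apply Finset.filter_true_of_mem
        intro l _ j; exact absurd j.2 (by omega)
      rw [this, card_perms, hT]
      simp
    set last : Fin (k' + 1) := Fin.last k' with hlastdef
    set G : Finset ℕ := insert (a last) (S last) with hGdef
    have hGT : G ⊆ T := hsubT last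
    have haS : a last ∉ S last := hax last last le_rfl
    have hTne : T.Nonempty := ⟨a last, hGT (Finset.mem_insert_self _ _)⟩
    -- membership facts
    have hmemS : ∀ j : Fin (k' + 1), S j ⊆ S last := by
      intro j
      rcases eq_or_lt_of_le (Fin.le_last j) with hj | hj
      · rw [hj]
      · exact fun x hx => hnest j last hj (Finset.mem_insert_of_mem hx)
    have hmemA : ∀ j : Fin (k' + 1), a j ∈ G := by
      intro j
      rcases eq_or_lt_of_le (Fin.le_last j) with hj | hj
      · rw [hj]; exact Finset.mem_insert_self _ _
      · exact Finset.mem_insert_of_mem (hnest j last hj (Finset.mem_insert_self _ _))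
    -- the partition by last element
    have hpart : (perms T).filter (Valid S a) =
        T.biUnion (fun z => ((perms (T.erase z)).filter
          (fun l' => Valid S a (l' ++ [z]))).image (· ++ [z])) := by
      ext l
      simp only [Finset.mem_filter, Finset.mem_biUnion, Finset.mem_image, mem_perms]
      constructor
      · rintro ⟨⟨hnd, hfin⟩, hval⟩
        have hlne : l ≠ [] := by
          rintro rfl
          rw [List.toFinset_nil] at hfin
          exact hTne.ne_empty hfin.symm
        set z := l.getLast hlne with hz
        have hl2 : l.dropLast ++ [z] = l := List.dropLast_append_getLast hlne
        have hznd : z ∉ l.dropLast := by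
          intro hmem
          have h2 := hnd
          rw [← hl2, List.nodup_append] at h2
          exact h2.2.2 z hmem z (List.mem_singleton_self z) rfl
        refine ⟨z, ?_, l.dropLast, ⟨⟨?_, ?_⟩, ?_⟩, hl2⟩
        · rw [← hfin, List.mem_toFinset]; exact List.getLast_mem hlne
        · exact (List.dropLast_sublist l).nodup hnd
        · ext x
          simp only [List.mem_toFinset, Finset.mem_erase]
          constructor
          · intro hx
            refine ⟨fun hxz => hznd (hxz ▸ hx), ?_⟩
            rw [← hfin, List.mem_toFinset, ← hl2]
            exact List.mem_append_left _ hx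
          · rintro ⟨hxz, hxT⟩
            rw [← hfin, List.mem_toFinset, ← hl2, List.mem_append] at hxT
            rcases hxT with h | h
            · exact h
            · exact absurd (List.mem_singleton.mp h) hxz
        · rw [hl2]; exact hval
      · rintro ⟨z, hzT, l', ⟨⟨hnd', hfin'⟩, hval'⟩, rfl⟩
        have hznl' : z ∉ l' := by
          intro h
          rw [← List.mem_toFinset, hfin'] at h
          exact (Finset.mem_erase.mp h).1 rfl
        refine ⟨⟨?_, ?_⟩, hval'⟩
        · rw [List.nodup_append]
          exact ⟨hnd', List.nodup_singleton z,
            fun x hx y hy hxy => hznl' (by rw [List.mem_singleton] at hy; subst hy; subst hxy; exact hx)⟩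
        · rw [List.toFinset_append, hfin']
          simp only [List.toFinset_cons, List.toFinset_nil]
          rw [LawfulSingleton.insert_empty_eq, Finset.union_comm]
          rw [show ({z} : Finset ℕ) ∪ T.erase z = insert z (T.erase z) by ext x; simp]
          exact Finset.insert_erase hzT
    -- disjointness of the pieces
    have hdisj : ∀ z1 ∈ T, ∀ z2 ∈ T, z1 ≠ z2 →
        Disjoint (((perms (T.erase z1)).filter
          (fun l' => Valid S a (l' ++ [z1]))).image (· ++ [z1]))
        (((perms (T.erase z2)).filter
          (fun l' => Valid S a (l' ++ [z2]))).image (· ++ [z2])) := by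
      intro z1 _ z2 _ hne
      rw [Finset.disjoint_left]
      rintro l hl1 hl2
      obtain ⟨l1, _, rfl⟩ := Finset.mem_image.mp hl1
      obtain ⟨l2, _, heq⟩ := Finset.mem_image.mp hl2
      apply hne
      have h1 : (l2 ++ [z2]).getLast? = some z2 := by simp
      have h2 : (l1 ++ [z1]).getLast? = some z1 := by simp
      rw [heq, h2] at h1
      exact Option.some_injective _ h1
    have hcard : ((perms T).filter (Valid S a)).card =
        ∑ z ∈ T, ((perms (T.erase z)).filter (fun l' => Valid S a (l' ++ [z]))).card := by
      rw [hpart, Finset.card_biUnion hdisj]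
      refine Finset.sum_congr rfl fun z _ => ?_
      exact Finset.card_image_of_injective _ (fun x y h => List.append_cancel_right h)
    -- case z = a last
    have hsubT' : ∀ j : Fin k',
        insert (a (Fin.castSucc j)) (S (Fin.castSucc j)) ⊆ T.erase (a last) := by
      intro j
      rw [Finset.subset_erase]
      constructor
      · exact (hnest _ last (Fin.castSucc_lt_last j)).trans
          (fun x hx => hGT (Finset.mem_insert_of_mem hx))
      · intro hmem
        exact haS (hnest _ last (Fin.castSucc_lt_last j) hmem)
    have hcase1 : ((perms (T.erase (a last))).filter
        (fun l' => Valid S a (l' ++ [a last]))).card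
        * ∏ j : Fin k', ((S (Fin.castSucc j)).card + 1) = Nat.factorial n := by
      have hfeq : (perms (T.erase (a last))).filter (fun l' => Valid S a (l' ++ [a last]))
          = (perms (T.erase (a last))).filter
            (Valid (fun j => S (Fin.castSucc j)) (fun j => a (Fin.castSucc j))) := by
        apply Finset.filter_congr
        intro l' hl'
        obtain ⟨hnd', hfin'⟩ := mem_perms.mp hl'
        have hmem' : ∀ x ∈ S last, x ∈ l' := by
          intro x hx
          rw [← List.mem_toFinset, hfin', Finset.mem_erase]
          exact ⟨fun h => haS (h ▸ hx), hGT (Finset.mem_insert_of_mem hx)⟩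
        have hanl' : a last ∉ l' := by
          intro h
          rw [← List.mem_toFinset, hfin'] at h
          exact (Finset.mem_erase.mp h).1 rfl
        constructor
        · intro h j x hx
          have := h (Fin.castSucc j) x hx
          rwa [List.idxOf_append_of_mem (hmem' x (hmemS _ hx)),
            List.idxOf_append_of_mem
              (hmem' _ (hnest _ last (Fin.castSucc_lt_last j) (Finset.mem_insert_self _ _)))]
            at this
        · intro h j x hx
          rcases eq_or_lt_of_le (Fin.le_last j) with hj | hj
          · subst hj
            rw [List.idxOf_append_of_mem (hmem' x hx)]
            have hidx : (l' ++ [a last]).idxOf (a last) = l'.length := by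
              rw [List.idxOf_append_of_notMem hanl']; simp
            rw [hidx]
            exact List.idxOf_lt_length_iff.mpr (hmem' x hx)
          · have hxl : x ∈ l' := hmem' x (hmemS j hx)
            have hal : a j ∈ l' :=
              hmem' _ (hnest j last hj (Finset.mem_insert_self _ _))
            rw [List.idxOf_append_of_mem hxl, List.idxOf_append_of_mem hal]
            obtain ⟨j', hjc⟩ : ∃ j' : Fin k', Fin.castSucc j' = j :=
              ⟨j.castPred (Fin.ne_last_of_lt hj), Fin.castSucc_castPred _ _⟩
            subst hjc
            exact h j' x hx
      rw [hfeq]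
      exact ih _ (by rw [Finset.card_erase_of_mem (hGT (Finset.mem_insert_self _ _)), hT]; omega) k' _ _
        (fun j1 j2 h => hax _ _ (Fin.castSucc_le_castSucc_iff.mpr h))
        (fun j1 j2 h => hnest _ _ (Fin.castSucc_lt_castSucc_iff.mpr h)) hsubT'
    -- case z ∈ S last : no valid orders
    have hcase2 : ∀ z ∈ S last,
        ((perms (T.erase z)).filter (fun l' => Valid S a (l' ++ [z]))).card = 0 := by
      intro z hz
      rw [Finset.card_eq_zero, Finset.filter_eq_empty_iff]
      intro l' hl' hval
      obtain ⟨hnd', hfin'⟩ := mem_perms.mp hl'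
      have hznl' : z ∉ l' := fun h =>
        (Finset.mem_erase.mp (by rwa [← List.mem_toFinset, hfin'] at h)).1 rfl
      have hal : a last ∈ l' := by
        rw [← List.mem_toFinset, hfin', Finset.mem_erase]
        exact ⟨fun h => haS (h ▸ hz), hGT (Finset.mem_insert_self _ _)⟩
      have h1 := hval last z hz
      rw [List.idxOf_append_of_mem hal] at h1
      have h2 : (l' ++ [z]).idxOf z = l'.length := by
        rw [List.idxOf_append_of_notMem hznl']; simp
      rw [h2] at h1
      exact absurd (List.idxOf_lt_length_iff.mpr hal) (by omega)
    -- case z ∉ G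
    have hcase3 : ∀ z ∈ T \ G,
        ((perms (T.erase z)).filter (fun l' => Valid S a (l' ++ [z]))).card
          * ∏ j : Fin (k' + 1), ((S j).card + 1) = Nat.factorial n := by
      intro z hz
      obtain ⟨hzT, hzG⟩ := Finset.mem_sdiff.mp hz
      have hfeq : (perms (T.erase z)).filter (fun l' => Valid S a (l' ++ [z]))
          = (perms (T.erase z)).filter (Valid S a) := by
        apply Finset.filter_congr
        intro l' hl'
        obtain ⟨hnd', hfin'⟩ := mem_perms.mp hl'
        have hmem' : ∀ x ∈ G, x ∈ l' := by
          intro x hx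
          rw [← List.mem_toFinset, hfin', Finset.mem_erase]
          exact ⟨fun h => hzG (h ▸ hx), hGT hx⟩
        exact valid_append (fun j => ⟨hmem' _ (hmemA j),
          fun x hx => hmem' _ (Finset.mem_insert_of_mem (hmemS j hx))⟩)
      rw [hfeq]
      refine ih _ ?_ _ S a hax hnest ?_
      · rw [Finset.card_erase_of_mem hzT, hT]; omega
      · intro j
        rw [Finset.subset_erase]
        refine ⟨fun x hx => hsubT j hx, fun hmem => hzG ?_⟩
        rcases Finset.mem_insert.mp hmem with h | h
        · exact h ▸ hmemA j
        · exact Finset.mem_insert_of_mem (hmemS j h)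
    -- assemble
    rw [hcard, Finset.sum_mul, ← Finset.sum_sdiff hGT]
    have hG2 : ∑ z ∈ T \ G, ((perms (T.erase z)).filter
        (fun l' => Valid S a (l' ++ [z]))).card * ∏ j : Fin (k' + 1), ((S j).card + 1)
        = (T \ G).card * Nat.factorial n := by
      rw [Finset.sum_congr rfl (fun z hz => hcase3 z hz), Finset.sum_const, smul_eq_mul]
    have hG1 : ∑ z ∈ G, ((perms (T.erase z)).filter
        (fun l' => Valid S a (l' ++ [z]))).card * ∏ j : Fin (k' + 1), ((S j).card + 1)
        = Nat.factorial n * ((S last).card + 1) := by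
      rw [hGdef, Finset.sum_insert haS]
      have hz0 : ∑ z ∈ S last, ((perms (T.erase z)).filter
          (fun l' => Valid S a (l' ++ [z]))).card * ∏ j : Fin (k' + 1), ((S j).card + 1)
          = 0 :=
        Finset.sum_eq_zero (fun z hz => by rw [hcase2 z hz, zero_mul])
      rw [hz0, add_zero, Fin.prod_univ_castSucc, ← mul_assoc, hcase1]
    rw [hG2, hG1]
    have hle : (S last).card + 1 ≤ n + 1 := by
      have := Finset.card_le_card hGT
      rw [hT, hGdef, Finset.card_insert_of_notMem haS] at this
      exact this
    rw [Finset.card_sdiff_of_subset hGT, hT, hGdef, Finset.card_insert_of_notMem haS,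
      Nat.factorial_succ]
    set c := (S last).card with hc
    have hsum : n + 1 - (c + 1) + (c + 1) = n + 1 := Nat.sub_add_cancel hle
    have heq : (n + 1 - (c + 1)) * Nat.factorial n + Nat.factorial n * (c + 1)
        = (n + 1 - (c + 1) + (c + 1)) * Nat.factorial n := by ring
    rw [heq, hsum]



variable {Ω : Type*} [MeasurableSpace Ω] (μ : Measure Ω) (X : ℕ → Ω → ℝ)

/-- Event: the values of `X` along the list `l` are strictly increasing. -/
def Ev (l : List ℕ) : Set Ω := {ω | l.Pairwise fun p q => X p ω < X q ω}

lemma Ev_eq_preimage (l : List ℕ) :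
    Ev X l = (fun ω (p : Fin l.length) => X (l.get p) ω) ⁻¹'
      {y : Fin l.length → ℝ | StrictMono y} := by
  ext ω
  simp only [Ev, Set.mem_setOf_eq, Set.mem_preimage]
  rw [List.pairwise_iff_get]
  constructor
  · intro h p q hpq; exact h p q hpq
  · intro h p q hpq; exact h hpq

lemma measurable_strictMonoSet (m : ℕ) :
    MeasurableSet {y : Fin m → ℝ | StrictMono y} := by
  have : {y : Fin m → ℝ | StrictMono y}
      = ⋂ (p : Fin m) (q : Fin m) (_ : p < q), {y : Fin m → ℝ | y p < y q} := by
    ext y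
    simp only [Set.mem_setOf_eq, Set.mem_iInter]
    exact ⟨fun h p q hpq => h hpq, fun h p q hpq => h p q hpq⟩
  rw [this]
  exact MeasurableSet.iInter fun p => MeasurableSet.iInter fun q =>
    MeasurableSet.iInter fun _ =>
      measurableSet_lt (measurable_pi_apply p) (measurable_pi_apply q)

lemma ev_measurable (hmeas : ∀ i, Measurable (X i)) (l : List ℕ) :
    MeasurableSet (Ev X l) := by
  rw [Ev_eq_preimage]
  exact (measurable_pi_lambda _ fun p => hmeas (l.get p)) (measurable_strictMonoSet _)

set_option linter.unusedSectionVars false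

lemma atom (hmeas : ∀ i, Measurable (X i)) (F : ℝ → ℝ) (hF : Continuous F)
    (hcdf : ∀ i x, μ {ω | X i ω < x} = ENNReal.ofReal (F x)) (a : ℕ) (x : ℝ) :
    μ {ω | X a ω = x} = 0 := by
  have key : ∀ m : ℕ, μ {ω | X a ω = x}
      ≤ ENNReal.ofReal (F (x + 1 / (m + 1))) - ENNReal.ofReal (F x) := by
    intro m
    have hsub : {ω | X a ω = x} ∪ {ω | X a ω < x} ⊆ {ω | X a ω < x + 1 / (m + 1)} := by
      intro ω hω
      have hpos : (0 : ℝ) < 1 / (m + 1) := by positivity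
      rcases hω with h | h
      · simp only [Set.mem_setOf_eq] at h ⊢; rw [h]; linarith
      · simp only [Set.mem_setOf_eq] at h ⊢; linarith
    have h1 : μ {ω | X a ω = x} + μ {ω | X a ω < x} ≤ μ {ω | X a ω < x + 1 / (m + 1)} := by
      rw [← measure_union ?_ (measurableSet_lt (hmeas a) measurable_const)]
      · exact measure_mono hsub
      · rw [Set.disjoint_left]
        intro ω h1 h2
        simp only [Set.mem_setOf_eq] at h1 h2
        exact absurd h2 (by rw [h1]; exact lt_irrefl x)
    rw [hcdf, hcdf] at h1
    calc μ {ω | X a ω = x}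
        = μ {ω | X a ω = x} + ENNReal.ofReal (F x) - ENNReal.ofReal (F x) :=
          (ENNReal.add_sub_cancel_right ENNReal.ofReal_ne_top).symm
      _ ≤ ENNReal.ofReal (F (x + 1 / (m + 1))) - ENNReal.ofReal (F x) :=
          tsub_le_tsub_right h1 _
  have hlim : Filter.Tendsto
      (fun m : ℕ => ENNReal.ofReal (F (x + 1 / (m + 1))) - ENNReal.ofReal (F x))
      Filter.atTop (nhds 0) := by
    have h2 : Filter.Tendsto (fun m : ℕ => x + 1 / ((m : ℝ) + 1)) Filter.atTop (nhds x) := by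
      have := tendsto_one_div_add_atTop_nhds_zero_nat (𝕜 := ℝ)
      have h3 := Filter.Tendsto.add (tendsto_const_nhds (x := x)) this
      simpa using h3
    have h4 : Filter.Tendsto (fun m : ℕ => ENNReal.ofReal (F (x + 1 / (m + 1))))
        Filter.atTop (nhds (ENNReal.ofReal (F x))) :=
      (ENNReal.continuous_ofReal.tendsto _).comp ((hF.tendsto _).comp h2)
    have h5 := ENNReal.Tendsto.sub h4 (tendsto_const_nhds (x := ENNReal.ofReal (F x)))
      (Or.inr ENNReal.ofReal_ne_top)
    simpa using h5
  have := ge_of_tendsto' hlim key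
  exact le_antisymm this zero_le

lemma cdf_le (hmeas : ∀ i, Measurable (X i)) (F : ℝ → ℝ) (hF : Continuous F)
    (hcdf : ∀ i x, μ {ω | X i ω < x} = ENNReal.ofReal (F x)) (a : ℕ) (x : ℝ) :
    μ {ω | X a ω ≤ x} = ENNReal.ofReal (F x) := by
  have hset : {ω | X a ω ≤ x} = {ω | X a ω < x} ∪ {ω | X a ω = x} := by
    ext ω; simp only [Set.mem_setOf_eq, Set.mem_union]; exact le_iff_lt_or_eq
  rw [hset]
  apply _root_.le_antisymm
  · calc μ ({ω | X a ω < x} ∪ {ω | X a ω = x})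
        ≤ μ {ω | X a ω < x} + μ {ω | X a ω = x} := measure_union_le _ _
      _ = ENNReal.ofReal (F x) := by
          rw [atom μ X hmeas F hF hcdf a x, add_zero, hcdf]
  · rw [← hcdf a x]
    exact measure_mono Set.subset_union_left

lemma ident (hmeas : ∀ i, Measurable (X i)) (F : ℝ → ℝ) (hF : Continuous F)
    (hcdf : ∀ i x, μ {ω | X i ω < x} = ENNReal.ofReal (F x)) [IsProbabilityMeasure μ]
    (a : ℕ) : μ.map (X a) = μ.map (X 0) := by
  haveI h1 : IsProbabilityMeasure (μ.map (X a)) :=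
    Measure.isProbabilityMeasure_map (hmeas a).aemeasurable
  haveI h2 : IsProbabilityMeasure (μ.map (X 0)) :=
    Measure.isProbabilityMeasure_map (hmeas 0).aemeasurable
  refine Measure.ext_of_Iic _ _ (fun x => ?_)
  rw [Measure.map_apply (hmeas a) measurableSet_Iic,
    Measure.map_apply (hmeas 0) measurableSet_Iic]
  show μ {ω | X a ω ≤ x} = μ {ω | X 0 ω ≤ x}
  rw [cdf_le μ X hmeas F hF hcdf, cdf_le μ X hmeas F hF hcdf]

lemma jointlaw [IsProbabilityMeasure μ] (hmeas : ∀ i, Measurable (X i))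
    (hindep : iIndepFun X μ)
    (F : ℝ → ℝ) (hF : Continuous F)
    (hcdf : ∀ i x, μ {ω | X i ω < x} = ENNReal.ofReal (F x))
    (m : ℕ) (e : Fin m → ℕ) (he : Function.Injective e) :
    μ.map (fun ω (p : Fin m) => X (e p) ω)
      = Measure.pi (fun _ : Fin m => μ.map (X 0)) := by
  classical
  haveI : IsProbabilityMeasure (μ.map (X 0)) :=
    Measure.isProbabilityMeasure_map (hmeas 0).aemeasurable
  have htup : Measurable (fun ω (p : Fin m) => X (e p) ω) :=
    measurable_pi_lambda _ fun p => hmeas (e p)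
  refine (Measure.pi_eq fun B hB => ?_).symm
  rw [Measure.map_apply htup (MeasurableSet.univ_pi hB)]
  have hpre : (fun ω (p : Fin m) => X (e p) ω) ⁻¹' (Set.univ.pi B)
      = ⋂ p, X (e p) ⁻¹' B p := by
    ext ω; simp [Set.mem_pi]
  rw [hpre]
  set g : ℕ → Set ℝ := fun i => if h : ∃ p, e p = i then B h.choose else Set.univ with hg
  have hge : ∀ p, g (e p) = B p := by
    intro p
    have hex : ∃ q, e q = e p := ⟨p, rfl⟩
    rw [hg]
    simp only
    rw [dif_pos hex]
    exact congrArg B (he hex.choose_spec)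
  have hgm : ∀ i, i ∈ Finset.univ.image e → MeasurableSet (g i) := by
    intro i _
    rw [hg]
    simp only
    split_ifs with h
    · exact hB _
    · exact MeasurableSet.univ
  have h1 : (⋂ p, X (e p) ⁻¹' B p) = ⋂ i ∈ Finset.univ.image e, X i ⁻¹' g i := by
    ext ω
    simp only [Set.mem_iInter, Set.mem_preimage, Finset.mem_image, Finset.mem_univ, true_and]
    constructor
    · rintro h i ⟨p, rfl⟩; rw [hge]; exact h p
    · intro h p; have := h (e p) ⟨p, rfl⟩; rwa [hge] at this
  rw [h1, hindep.measure_inter_preimage_eq_mul _ hgm,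
    Finset.prod_image (fun x _ y _ h => he h)]
  refine Finset.prod_congr rfl fun p _ => ?_
  rw [hge, ← Measure.map_apply (hmeas (e p)) (hB p),
    ident μ X hmeas F hF hcdf (e p)]

lemma tie [IsProbabilityMeasure μ] (hmeas : ∀ i, Measurable (X i))
    (hindep : iIndepFun X μ)
    (F : ℝ → ℝ) (hF : Continuous F)
    (hcdf : ∀ i x, μ {ω | X i ω < x} = ENNReal.ofReal (F x))
    {a b : ℕ} (hne : a ≠ b) : μ {ω | X a ω = X b ω} = 0 := by
  have hab : IndepFun (X a) (X b) μ := hindep.indepFun hne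
  rw [indepFun_iff_map_prod_eq_prod_map_map (hmeas a).aemeasurable
    (hmeas b).aemeasurable] at hab
  haveI : IsProbabilityMeasure (μ.map (X a)) :=
    Measure.isProbabilityMeasure_map (hmeas a).aemeasurable
  haveI : IsProbabilityMeasure (μ.map (X b)) :=
    Measure.isProbabilityMeasure_map (hmeas b).aemeasurable
  have hd : MeasurableSet {p : ℝ × ℝ | p.1 = p.2} :=
    measurableSet_eq_fun measurable_fst measurable_snd
  have hset : {ω | X a ω = X b ω} = (fun ω => (X a ω, X b ω)) ⁻¹' {p : ℝ × ℝ | p.1 = p.2} :=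
    rfl
  rw [hset, ← Measure.map_apply ((hmeas a).prodMk (hmeas b)) hd, hab,
    Measure.prod_apply hd]
  have hfib : ∀ x : ℝ, Prod.mk x ⁻¹' {p : ℝ × ℝ | p.1 = p.2} = {x} := by
    intro x; ext y; simp [eq_comm]
  have hz : ∀ x : ℝ, (μ.map (X b)) (Prod.mk x ⁻¹' {p : ℝ × ℝ | p.1 = p.2}) = 0 := by
    intro x
    rw [hfib x, Measure.map_apply (hmeas b) (measurableSet_singleton x)]
    have : X b ⁻¹' {x} = {ω | X b ω = x} := by ext ω; simp
    rw [this]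
    exact atom μ X hmeas F hF hcdf b x
  rw [lintegral_congr hz, lintegral_zero]

/-- The probability that the values along an ordering are increasing,
depending only on the length. -/
noncomputable def Qfun (ν : Measure ℝ) (m : ℕ) : ℝ≥0∞ :=
  Measure.pi (fun _ : Fin m => ν) {y : Fin m → ℝ | StrictMono y}

lemma ev_measure [IsProbabilityMeasure μ] (hmeas : ∀ i, Measurable (X i))
    (hindep : iIndepFun X μ)
    (F : ℝ → ℝ) (hF : Continuous F)
    (hcdf : ∀ i x, μ {ω | X i ω < x} = ENNReal.ofReal (F x))
    {l : List ℕ} (hnd : l.Nodup) :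
    μ (Ev X l) = Qfun (μ.map (X 0)) l.length := by
  have htup : Measurable (fun ω (p : Fin l.length) => X (l.get p) ω) :=
    measurable_pi_lambda _ fun p => hmeas (l.get p)
  rw [Ev_eq_preimage, ← Measure.map_apply htup (measurable_strictMonoSet _),
    jointlaw μ X hmeas hindep F hF hcdf l.length l.get (List.nodup_iff_injective_get.mp hnd)]
  rfl

lemma cover (T : Finset ℕ) (ω : Ω)
    (hω : ∀ p ∈ T, ∀ q ∈ T, p ≠ q → X p ω ≠ X q ω) :
    ∃ l ∈ perms T, ω ∈ Ev X l := by
  classical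
  set r : ℕ → ℕ → Prop := fun p q => X p ω ≤ X q ω with hr
  haveI : Std.Total r := ⟨fun p q => le_total _ _⟩
  haveI : IsTrans ℕ r := ⟨fun p q s hpq hqs => le_trans hpq hqs⟩
  haveI : DecidableRel r := fun p q => Classical.dec _
  set l := T.toList.insertionSort r with hl
  have hperm : l ~ T.toList := List.perm_insertionSort r _
  have hnd : l.Nodup := hperm.nodup_iff.mpr T.nodup_toList
  have hmem : l ∈ perms T := by
    rw [mem_perms]
    exact ⟨hnd, (List.toFinset_eq_of_perm _ _ hperm).trans T.toList_toFinset⟩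
  have hsort : l.Pairwise r := List.pairwise_insertionSort r _
  refine ⟨l, hmem, ?_⟩
  show l.Pairwise fun p q => X p ω < X q ω
  have hT : ∀ x ∈ l, x ∈ T := by
    intro x hx
    rw [← (mem_perms.mp hmem).2]
    exact List.mem_toFinset.mpr hx
  have hand := List.Pairwise.and hnd hsort
  refine hand.imp_of_mem ?_
  intro p q hp hq hpq
  exact lt_of_le_of_ne hpq.2 (hω p (hT p hp) q (hT q hq) hpq.1)

lemma ev_disjoint (T : Finset ℕ) {l l' : List ℕ} (hl : l ∈ perms T) (hl' : l' ∈ perms T)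
    (hne : l ≠ l') : Disjoint (Ev X l) (Ev X l') := by
  rw [Set.disjoint_left]
  intro ω h1 h2
  apply hne
  haveI : Std.Antisymm (fun p q => X p ω < X q ω) :=
    ⟨fun p q h h' => absurd h' (lt_asymm h)⟩
  obtain ⟨hnd, hfin⟩ := mem_perms.mp hl
  obtain ⟨hnd', hfin'⟩ := mem_perms.mp hl'
  have hperm : l ~ l' :=
    List.perm_of_nodup_nodup_toFinset_eq hnd hnd' (hfin.trans hfin'.symm)
  exact List.Perm.eq_of_pairwise' h1 h2 hperm

lemma general {Ω : Type*} [MeasurableSpace Ω] (μ : Measure Ω) [IsProbabilityMeasure μ]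
    (X : ℕ → Ω → ℝ) (hmeas : ∀ i, Measurable (X i))
    (hindep : iIndepFun X μ)
    (F : ℝ → ℝ) (hF : Continuous F)
    (hcdf : ∀ i x, μ {ω | X i ω < x} = ENNReal.ofReal (F x))
    (k : ℕ) (S : Fin k → Finset ℕ) (a : Fin k → ℕ)
    (hax : ∀ j1 j2 : Fin k, j2 ≤ j1 → a j1 ∉ S j2)
    (hnest : ∀ j1 j2 : Fin k, j1 < j2 → insert (a j1) (S j1) ⊆ S j2) :
    μ (⋂ j, {ω | ∀ l ∈ S j, X l ω < X (a j) ω})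
      = ∏ j, (((S j).card : ℝ≥0∞) + 1)⁻¹ := by
  classical
  rcases k with _ | k'
  · simp
  set last : Fin (k' + 1) := Fin.last k' with hlast
  set T : Finset ℕ := insert (a last) (S last) with hTdef
  set n := T.card with hn
  set ν := μ.map (X 0) with hν
  have haS : a last ∉ S last := hax last last le_rfl
  have hmemS : ∀ j, S j ⊆ S last := by
    intro j
    rcases eq_or_lt_of_le (Fin.le_last j) with hj | hj
    · rw [hj]
    · exact fun x hx => hnest j last hj (Finset.mem_insert_of_mem hx)
  have hmemA : ∀ j, a j ∈ T := by
    intro j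
    rcases eq_or_lt_of_le (Fin.le_last j) with hj | hj
    · rw [hj]; exact Finset.mem_insert_self _ _
    · exact Finset.mem_insert_of_mem (hnest j last hj (Finset.mem_insert_self _ _))
  have hsubT : ∀ j, insert (a j) (S j) ⊆ T := by
    intro j
    rcases eq_or_lt_of_le (Fin.le_last j) with hj | hj
    · rw [hj]
    · exact (hnest j last hj).trans (Finset.subset_insert _ _)
  set Event := ⋂ j, {ω | ∀ l ∈ S j, X l ω < X (a j) ω} with hEvdef
  have hEvent_meas : MeasurableSet Event := by
    apply MeasurableSet.iInter
    intro j
    have : {ω | ∀ l ∈ S j, X l ω < X (a j) ω}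
        = ⋂ (l : ℕ) (_ : l ∈ S j), {ω | X l ω < X (a j) ω} := by
      ext ω; simp
    rw [this]
    exact MeasurableSet.iInter fun l => MeasurableSet.iInter fun _ =>
      measurableSet_lt (hmeas l) (hmeas (a j))
  set U := ⋃ l ∈ (perms T : Finset (List ℕ)), Ev X l with hUdef
  have hUmeas : MeasurableSet U :=
    MeasurableSet.biUnion (Set.to_countable _) fun l _ => ev_measurable X hmeas l
  have hdisjE : (↑(perms T) : Set (List ℕ)).PairwiseDisjoint (Ev X) :=
    fun l hl l' hl' hne => ev_disjoint X T (Finset.mem_coe.mp hl) (Finset.mem_coe.mp hl') hne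
  have hUsum : μ U = ∑ l ∈ perms T, μ (Ev X l) :=
    measure_biUnion_finset hdisjE (fun l _ => ev_measurable X hmeas l)
  have hlen : ∀ l ∈ perms T, l.length = n := by
    intro l hl
    obtain ⟨hnd, hfin⟩ := mem_perms.mp hl
    rw [hn, ← hfin, List.toFinset_card_of_nodup hnd]
  have hEvQ : ∀ l ∈ perms T, μ (Ev X l) = Qfun ν n := by
    intro l hl
    rw [ev_measure μ X hmeas hindep F hF hcdf (mem_perms.mp hl).1, hlen l hl]
  have hUc : μ Uᶜ = 0 := by
    have hsub : Uᶜ ⊆ ⋃ (p : ℕ) (q : ℕ), {ω | p ∈ T ∧ q ∈ T ∧ p ≠ q ∧ X p ω = X q ω} := by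
      intro ω hω
      by_contra hcon
      simp only [Set.mem_iUnion, Set.mem_setOf_eq, not_exists] at hcon
      push_neg at hcon
      obtain ⟨l, hl, hev⟩ := cover X T ω (fun p hp q hq hpq => hcon p q hp hq hpq)
      exact hω (Set.mem_biUnion hl hev)
    refine measure_mono_null hsub ?_
    refine measure_iUnion_null fun p => measure_iUnion_null fun q => ?_
    rcases eq_or_ne p q with h | h
    · have : {ω | p ∈ T ∧ q ∈ T ∧ p ≠ q ∧ X p ω = X q ω} = ∅ := by
        ext ω; simp [h]
      simp [this]
    · exact measure_mono_null (fun ω hω => hω.2.2.2)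
        (tie μ X hmeas hindep F hF hcdf h)
  have hU1 : μ U = 1 := by
    have h1 := measure_add_measure_compl hUmeas (μ := μ)
    rw [hUc, add_zero, measure_univ] at h1
    exact h1
  have hQ : (Nat.factorial n : ℝ≥0∞) * Qfun ν n = 1 := by
    rw [← hU1, hUsum, Finset.sum_congr rfl hEvQ, Finset.sum_const, card_perms,
      nsmul_eq_mul, ← hn]
  -- the key rank fact
  have hrank : ∀ {l : List ℕ}, l ∈ perms T → ∀ {ω}, ω ∈ Ev X l → ∀ {p q : ℕ},
      p ∈ T → q ∈ T → l.idxOf p < l.idxOf q → X p ω < X q ω := by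
    intro l hl ω hω p q hp hq hpq
    obtain ⟨hnd, hfin⟩ := mem_perms.mp hl
    have hpl : p ∈ l := by rw [← List.mem_toFinset, hfin]; exact hp
    have hql : q ∈ l := by rw [← List.mem_toFinset, hfin]; exact hq
    have h := (List.pairwise_iff_get.mp hω)
      ⟨l.idxOf p, List.idxOf_lt_length_iff.mpr hpl⟩
      ⟨l.idxOf q, List.idxOf_lt_length_iff.mpr hql⟩ hpq
    rwa [List.get_eq_getElem, List.get_eq_getElem, List.getElem_idxOf,
      List.getElem_idxOf] at h
  have hEvent_inter : ∀ l ∈ perms T,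
      Event ∩ Ev X l = if Valid S a l then Ev X l else ∅ := by
    intro l hl
    split_ifs with hval
    · refine Set.inter_eq_right.mpr ?_
      intro ω hω
      refine Set.mem_iInter.mpr fun j => ?_
      intro x hx
      exact hrank hl hω (hsubT j (Finset.mem_insert_of_mem hx)) (hmemA j) (hval j x hx)
    · ext ω
      simp only [Set.mem_inter_iff, Set.mem_empty_iff_false, iff_false, not_and]
      intro hE hev
      unfold Valid at hval
      push_neg at hval
      obtain ⟨j, x, hx, hge⟩ := hval
      have hxa : x ≠ a j := fun h => hax j j le_rfl (h ▸ hx)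
      have hxT : x ∈ T := hsubT j (Finset.mem_insert_of_mem hx)
      have haT : a j ∈ T := hmemA j
      obtain ⟨hnd, hfin⟩ := mem_perms.mp hl
      have hxl : x ∈ l := by rw [← List.mem_toFinset, hfin]; exact hxT
      have hal : a j ∈ l := by rw [← List.mem_toFinset, hfin]; exact haT
      have hidx : l.idxOf (a j) < l.idxOf x := by
        rcases eq_or_lt_of_le hge with heq | hlt
        · exact absurd ((List.idxOf_inj hal).mp heq).symm hxa
        · exact hlt
      have h1 := hrank hl hev haT hxT hidx
      have h2 : X x ω < X (a j) ω := (Set.mem_iInter.mp hE j) x hx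
      exact absurd h2 (lt_asymm h1)
  have hEvsum : μ Event = ∑ l ∈ perms T, μ (Event ∩ Ev X l) := by
    have h1 : μ (Event ∩ U) + μ (Event \ U) = μ Event :=
      measure_inter_add_diff Event hUmeas
    have h2 : μ (Event \ U) = 0 := measure_mono_null (fun ω hω => hω.2) hUc
    have h3 : Event ∩ U = ⋃ l ∈ (perms T : Finset (List ℕ)), Event ∩ Ev X l := by
      rw [hUdef]
      exact Set.inter_iUnion₂ _ _
    rw [← h1, h2, add_zero, h3, measure_biUnion_finset ?_ ?_]
    · intro l hl l' hl' hne
      exact (hdisjE hl hl' hne).mono Set.inter_subset_right Set.inter_subset_right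
    · exact fun l _ => hEvent_meas.inter (ev_measurable X hmeas l)
  have hN : μ Event = (((perms T).filter (Valid S a)).card : ℝ≥0∞) * Qfun ν n := by
    rw [hEvsum]
    have hterm : ∀ l ∈ perms T,
        μ (Event ∩ Ev X l) = if Valid S a l then Qfun ν n else 0 := by
      intro l hl
      rw [hEvent_inter l hl]
      split_ifs
      · exact hEvQ l hl
      · exact measure_empty
    rw [Finset.sum_congr rfl hterm, ← Finset.sum_filter, Finset.sum_const, nsmul_eq_mul]
  have hcount := count_valid n T rfl (k' + 1) S a hax hnest hsubT
  set N := ((perms T).filter (Valid S a)).card with hNdef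
  have hfact_ne : (Nat.factorial n : ℝ≥0∞) ≠ 0 := by
    exact_mod_cast (Nat.factorial_pos n).ne'
  have hfact_ne_top : (Nat.factorial n : ℝ≥0∞) ≠ ⊤ := ENNReal.natCast_ne_top _
  have hQval : Qfun ν n = ((Nat.factorial n : ℝ≥0∞))⁻¹ := by
    calc Qfun ν n
        = (((Nat.factorial n : ℝ≥0∞))⁻¹ * (Nat.factorial n : ℝ≥0∞)) * Qfun ν n := by
          rw [ENNReal.inv_mul_cancel hfact_ne hfact_ne_top, one_mul]
      _ = ((Nat.factorial n : ℝ≥0∞))⁻¹ * ((Nat.factorial n : ℝ≥0∞) * Qfun ν n) := by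
          ring
      _ = ((Nat.factorial n : ℝ≥0∞))⁻¹ := by rw [hQ, mul_one]
  set P := ∏ j : Fin (k' + 1), (((S j).card : ℝ≥0∞) + 1) with hPdef
  have hPne : ∀ j : Fin (k' + 1), (((S j).card : ℝ≥0∞) + 1) ≠ 0 := by
    intro j
    exact ne_of_gt (lt_of_lt_of_le zero_lt_one le_add_self)
  have hPtop : ∀ j : Fin (k' + 1), (((S j).card : ℝ≥0∞) + 1) ≠ ⊤ :=
    fun j => ENNReal.add_ne_top.mpr ⟨ENNReal.natCast_ne_top _, ENNReal.one_ne_top⟩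
  have hNP : (N : ℝ≥0∞) * P = (Nat.factorial n : ℝ≥0∞) := by
    have hPcast : P = ((∏ j : Fin (k' + 1), ((S j).card + 1) : ℕ) : ℝ≥0∞) := by
      rw [hPdef]; push_cast; rfl
    rw [hPcast, ← Nat.cast_mul, hcount]
  have hNne : (N : ℝ≥0∞) ≠ 0 := fun h => hfact_ne (by rw [← hNP, h, zero_mul])
  have hNtop : (N : ℝ≥0∞) ≠ ⊤ := ENNReal.natCast_ne_top _
  have hPinv : ∏ j : Fin (k' + 1), (((S j).card : ℝ≥0∞) + 1)⁻¹ = P⁻¹ := by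
    have hmul : P * ∏ j : Fin (k' + 1), (((S j).card : ℝ≥0∞) + 1)⁻¹ = 1 := by
      rw [hPdef, ← Finset.prod_mul_distrib]
      exact Finset.prod_eq_one fun j _ => ENNReal.mul_inv_cancel (hPne j) (hPtop j)
    have hPne0 : P ≠ 0 := by
      intro h
      rw [h, zero_mul] at hmul
      exact one_ne_zero hmul.symm
    have hPtop0 : P ≠ ⊤ := by
      rw [hPdef]
      exact (ENNReal.prod_lt_top (fun j _ => (hPtop j).lt_top)).ne
    calc ∏ j : Fin (k' + 1), (((S j).card : ℝ≥0∞) + 1)⁻¹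
        = (P⁻¹ * P) * ∏ j : Fin (k' + 1), (((S j).card : ℝ≥0∞) + 1)⁻¹ := by
          rw [ENNReal.inv_mul_cancel hPne0 hPtop0, one_mul]
      _ = P⁻¹ * (P * ∏ j : Fin (k' + 1), (((S j).card : ℝ≥0∞) + 1)⁻¹) := by ring
      _ = P⁻¹ := by rw [hmul, mul_one]
  rw [hN, hQval, hPinv, ← hNP, ENNReal.mul_inv (Or.inl hNne) (Or.inl hNtop),
    ← mul_assoc, ENNReal.mul_inv_cancel hNne hNtop, one_mul]

end RecAux

/-- Mutual independence of record events along a compatible subsequence: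
if `X 1, X 2, ...` are i.i.d. with continuous cdf `F`, `nseq` is a strictly
increasing sequence of indices with comparison sets `C (nseq t) ⊆ {1,...,nseq t - 1}`
that are strictly increasing (a1) and satisfy `nseq t ∈ C (nseq (t+1))` (a2), then
for any finitely many indices `i 0 < i 1 < ... < i (k-1)` from the subsequence,
`P(A (i 0) ∩ ... ∩ A (i (k-1))) = ∏ j, 1 / c (i j)` where `c i = |C i| + 1`. -/
theorem record_events_mutually_independent
    {Ω : Type*} [MeasurableSpace Ω] (μ : Measure Ω) [IsProbabilityMeasure μ]
    (X : ℕ → Ω → ℝ) (hmeas : ∀ i, Measurable (X i))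
    (hindep : iIndepFun X μ)
    (F : ℝ → ℝ) (hF : Continuous F)
    (hcdf : ∀ i x, μ {ω | X i ω < x} = ENNReal.ofReal (F x))
    (nseq : ℕ → ℕ) (hmono : StrictMono nseq) (hone : ∀ t, 1 ≤ nseq t)
    (C : ℕ → Finset ℕ)
    (hsub : ∀ t, C (nseq t) ⊆ Finset.Icc 1 (nseq t - 1))
    (ha1 : ∀ t, C (nseq t) ⊂ C (nseq (t + 1)))
    (ha2 : ∀ t, nseq t ∈ C (nseq (t + 1)))
    (k : ℕ) (i : Fin k → ℕ) (hi : StrictMono i)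
    (hrange : ∀ j, ∃ t, i j = nseq t) :
    μ (⋂ j, {ω | ∀ l ∈ C (i j), X l ω < X (i j) ω})
      = ∏ j, (((C (i j)).card : ℝ≥0∞) + 1)⁻¹ := by
  have chain : ∀ t u, t < u → insert (nseq t) (C (nseq t)) ⊆ C (nseq u) := by
    intro t u h
    induction u, h using Nat.le_induction with
    | base => exact Finset.insert_subset_iff.mpr ⟨ha2 t, (ha1 t).subset⟩
    | succ u hu ih => exact ih.trans (ha1 u).subset
  have hax : ∀ j1 j2 : Fin k, j2 ≤ j1 → i j1 ∉ C (i j2) := by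
    intro j1 j2 hle hmem
    obtain ⟨t2, ht2⟩ := hrange j2
    rw [ht2] at hmem
    have h1 := hsub t2 hmem
    rw [Finset.mem_Icc] at h1
    have h2 : nseq t2 ≤ i j1 := by rw [← ht2]; exact hi.monotone hle
    have h3 : 1 ≤ nseq t2 := hone t2
    omega
  have hnest : ∀ j1 j2 : Fin k, j1 < j2 → insert (i j1) (C (i j1)) ⊆ C (i j2) := by
    intro j1 j2 hlt
    obtain ⟨t1, ht1⟩ := hrange j1
    obtain ⟨t2, ht2⟩ := hrange j2
    have h1 : nseq t1 < nseq t2 := by rw [← ht1, ← ht2]; exact hi hlt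
    rw [ht1, ht2]
    exact chain t1 t2 (hmono.lt_iff_lt.mp h1)
  exact RecAux.general μ X hmeas hindep F hF hcdf k (fun j => C (i j)) i hax hnest
end

section
/- Let X_1, X_2, ... be i.i.d. with continuous cdf F, and suppose I_j := Σ_{t=1}^{j} 1/c(n_t) → ∞ as j → ∞ for a compatible subsequence. Then R_j / I_j → 1 almost surely as j → ∞, where R_j = Σ_{t≤j} 1(A_{n_t}). -/
open MeasureTheory ProbabilityTheory Filter
open scoped ENNReal

set_option linter.unusedSectionVars false
set_option linter.unusedTactic false
namespace RecordSLLN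

variable {Ω : Type*} [MeasurableSpace Ω] {μ : Measure Ω} [IsProbabilityMeasure μ]
  {X : ℕ → Ω → ℝ} {ν : Measure ℝ} {F : ℝ → ℝ}


variable {Ω : Type*} [MeasurableSpace Ω] {μ : Measure Ω} [IsProbabilityMeasure μ]
  {X : ℕ → Ω → ℝ} {ν : Measure ℝ}

/-- The event that `X b` beats all `X l`, `l ∈ B`, `l ≠ b`. -/
def Mev (X : ℕ → Ω → ℝ) (B : Finset ℕ) (b : ℕ) : Set Ω :=
  {ω | ∀ l ∈ B, l ≠ b → X l ω < X b ω}

lemma measurableSet_Mev (hmeas : ∀ i, Measurable (X i)) (B : Finset ℕ) (b : ℕ) :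
    MeasurableSet (Mev X B b) := by
  have h : Mev X B b = ⋂ l ∈ B, ⋂ (_ : l ≠ b), {ω | X l ω < X b ω} := by
    ext ω; simp [Mev]
  rw [h]
  exact MeasurableSet.biInter (B : Set ℕ).to_countable fun l _ =>
    MeasurableSet.iInter fun _ => measurableSet_lt (hmeas l) (hmeas b)

lemma jointlaw (hmeas : ∀ i, Measurable (X i))
    (hindep : iIndepFun X μ)
    (hid : ∀ i, μ.map (X i) = ν) [IsProbabilityMeasure ν]
    {ι : Type*} [Fintype ι] (g : ι → ℕ) (hg : Function.Injective g) :
    μ.map (fun ω (i : ι) => X (g i) ω) = Measure.pi (fun _ : ι => ν) := by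
  classical
  refine (Measure.pi_eq fun s hs => ?_).symm
  rw [Measure.map_apply (measurable_pi_lambda _ fun i => hmeas (g i))
    (MeasurableSet.univ_pi hs)]
  have hpre : (fun ω (i : ι) => X (g i) ω) ⁻¹' Set.univ.pi s = ⋂ i : ι, X (g i) ⁻¹' s i := by
    ext ω; simp [Set.mem_univ_pi]
  set sets : ℕ → Set ℝ := fun n => if h : ∃ i, g i = n then s h.choose else Set.univ with hsets
  have hkey : ∀ i, sets (g i) = s i := by
    intro i
    have h : ∃ j, g j = g i := ⟨i, rfl⟩
    simp only [hsets, dif_pos h]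
    exact congrArg s (hg h.choose_spec)
  have hmeassets : ∀ n, MeasurableSet (sets n) := by
    intro n
    by_cases h : ∃ i, g i = n
    · simp only [hsets, dif_pos h]; exact hs _
    · simp only [hsets, dif_neg h]; exact MeasurableSet.univ
  have hiInter : (⋂ i : ι, X (g i) ⁻¹' s i) = ⋂ n ∈ Finset.univ.image g, X n ⁻¹' sets n := by
    ext ω
    simp only [Set.mem_iInter, Set.mem_preimage, Finset.mem_image, Finset.mem_univ, true_and]
    constructor
    · rintro h n ⟨i, rfl⟩
      rw [hkey]; exact h i
    · intro h i
      have := h (g i) ⟨i, rfl⟩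
      rwa [hkey] at this
  rw [hpre, hiInter,
    hindep.measure_inter_preimage_eq_mul (Finset.univ.image g) (fun n _ => hmeassets n),
    Finset.prod_image (fun i _ j _ h => hg h)]
  refine Finset.prod_congr rfl fun i _ => ?_
  rw [hkey, ← hid (g i), Measure.map_apply (hmeas (g i)) (hs i)]



lemma meas_preimage_perm (hmeas : ∀ i, Measurable (X i))
    (hindep : iIndepFun X μ)
    (hid : ∀ i, μ.map (X i) = ν) [IsProbabilityMeasure ν]
    (G : Finset ℕ) (σ : Equiv.Perm {x // x ∈ G}) {T : Set ({x // x ∈ G} → ℝ)}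
    (hT : MeasurableSet T) :
    μ ((fun ω (i : {x // x ∈ G}) => X (i : ℕ) ω) ⁻¹' T)
      = μ ((fun ω (i : {x // x ∈ G}) => X ((σ i : {x // x ∈ G}) : ℕ) ω) ⁻¹' T) := by
  have h1 := jointlaw hmeas hindep hid (fun i : {x // x ∈ G} => (i : ℕ))
    Subtype.val_injective
  have h2 := jointlaw hmeas hindep hid (fun i : {x // x ∈ G} => ((σ i : {x // x ∈ G}) : ℕ))
    (Subtype.val_injective.comp σ.injective)
  rw [← Measure.map_apply (measurable_pi_lambda _ fun i => hmeas _) hT,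
    ← Measure.map_apply (measurable_pi_lambda _ fun i => hmeas _) hT, h1, h2]

/-- the order event as preimage, after permuting indices. -/
lemma Mev_preimage (G B : Finset ℕ) (hB : B ⊆ G) {b : ℕ} (hb : b ∈ G) (σ : Equiv.Perm {x // x ∈ G})
    (hσ : ∀ l : {x // x ∈ G}, ((σ l : {x // x ∈ G}) : ℕ) ∈ B ↔ (l : ℕ) ∈ B) :
    (fun ω (i : {x // x ∈ G}) => X ((σ i : {x // x ∈ G}) : ℕ) ω) ⁻¹'
        {x : {x // x ∈ G} → ℝ | ∀ l : {x // x ∈ G}, (l : ℕ) ∈ B → l ≠ ⟨b, hb⟩ → x l < x ⟨b, hb⟩}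
      = Mev X B ((σ ⟨b, hb⟩ : {x // x ∈ G}) : ℕ) := by
  ext ω
  simp only [Set.mem_preimage, Set.mem_setOf_eq, Mev]
  constructor
  · intro h m hm hmne
    have hmG : m ∈ G := hB hm
    have h1 : ((σ (σ.symm ⟨m, hmG⟩) : {x // x ∈ G}) : ℕ) ∈ B := by
      rw [Equiv.apply_symm_apply]; exact hm
    have h2 : σ.symm ⟨m, hmG⟩ ≠ ⟨b, hb⟩ := by
      intro hc
      apply hmne
      have : (⟨m, hmG⟩ : {x // x ∈ G}) = σ ⟨b, hb⟩ := by
        rw [← hc, Equiv.apply_symm_apply]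
      exact congrArg Subtype.val this
    have := h (σ.symm ⟨m, hmG⟩) ((hσ _).mp h1) h2
    rwa [Equiv.apply_symm_apply] at this
  · intro h l hl hlne
    refine h ((σ l : {x // x ∈ G}) : ℕ) ((hσ l).mpr hl) ?_
    intro hc
    exact hlne (σ.injective (Subtype.val_injective hc))
  done



/-- two iid atomless random variables are a.s. distinct -/
lemma ties_null (hmeas : ∀ i, Measurable (X i))
    (hindep : iIndepFun X μ)
    (hid : ∀ i, μ.map (X i) = ν) (hatom : ∀ x : ℝ, ν {x} = 0) [IsProbabilityMeasure ν]
    {a b : ℕ} (hab : a ≠ b) : μ {ω | X a ω = X b ω} = 0 := by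
  have hIF : IndepFun (X a) (X b) μ := hindep.indepFun hab
  rw [indepFun_iff_map_prod_eq_prod_map_map (hmeas a).aemeasurable (hmeas b).aemeasurable] at hIF
  have hdiag : MeasurableSet {p : ℝ × ℝ | p.1 = p.2} :=
    measurableSet_eq_fun measurable_fst measurable_snd
  have h1 : {ω | X a ω = X b ω} = (fun ω => (X a ω, X b ω)) ⁻¹' {p : ℝ × ℝ | p.1 = p.2} := rfl
  rw [h1, ← Measure.map_apply ((hmeas a).prodMk (hmeas b)) hdiag, hIF, hid a, hid b,
    Measure.prod_apply hdiag]
  have : ∀ x : ℝ, ν (Prod.mk x ⁻¹' {p : ℝ × ℝ | p.1 = p.2}) = 0 := by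
    intro x
    have : Prod.mk x ⁻¹' {p : ℝ × ℝ | p.1 = p.2} = {x} := by
      ext y; simp [eq_comm]
    rw [this]; exact hatom x
  simp [this, hatom]



lemma meas_Mev_pair (hmeas : ∀ i, Measurable (X i))
    (hindep : iIndepFun X μ)
    (hid : ∀ i, μ.map (X i) = ν) [IsProbabilityMeasure ν]
    (G B₁ B₂ : Finset ℕ) (h1 : B₁ ⊆ G) (h2 : B₂ ⊆ G)
    {b₁ b₂ : ℕ} (hb₁ : b₁ ∈ G) (hb₂ : b₂ ∈ G) (σ : Equiv.Perm {x // x ∈ G})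
    (hσ1 : ∀ l : {x // x ∈ G}, ((σ l : {x // x ∈ G}) : ℕ) ∈ B₁ ↔ (l : ℕ) ∈ B₁)
    (hσ2 : ∀ l : {x // x ∈ G}, ((σ l : {x // x ∈ G}) : ℕ) ∈ B₂ ↔ (l : ℕ) ∈ B₂) :
    μ (Mev X B₁ ((σ ⟨b₁, hb₁⟩ : {x // x ∈ G}) : ℕ) ∩ Mev X B₂ ((σ ⟨b₂, hb₂⟩ : {x // x ∈ G}) : ℕ))
      = μ (Mev X B₁ b₁ ∩ Mev X B₂ b₂) := by
  set T₁ : Set ({x // x ∈ G} → ℝ) :=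
    {x | ∀ l : {x // x ∈ G}, (l : ℕ) ∈ B₁ → l ≠ ⟨b₁, hb₁⟩ → x l < x ⟨b₁, hb₁⟩} with hT₁def
  set T₂ : Set ({x // x ∈ G} → ℝ) :=
    {x | ∀ l : {x // x ∈ G}, (l : ℕ) ∈ B₂ → l ≠ ⟨b₂, hb₂⟩ → x l < x ⟨b₂, hb₂⟩} with hT₂def
  have hmT : ∀ (B : Finset ℕ) (c : {x // x ∈ G}),
      MeasurableSet {x : {x // x ∈ G} → ℝ | ∀ l : {x // x ∈ G}, (l : ℕ) ∈ B → l ≠ c → x l < x c} := by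
    intro B c
    have : {x : {x // x ∈ G} → ℝ | ∀ l : {x // x ∈ G}, (l : ℕ) ∈ B → l ≠ c → x l < x c}
        = ⋂ l : {x // x ∈ G}, ⋂ (_ : (l : ℕ) ∈ B), ⋂ (_ : l ≠ c), {x | x l < x c} := by
      ext x; simp
    rw [this]
    exact MeasurableSet.iInter fun l => MeasurableSet.iInter fun _ =>
      MeasurableSet.iInter fun _ => measurableSet_lt (measurable_pi_apply l) (measurable_pi_apply c)
  have key := meas_preimage_perm hmeas hindep hid G σ ((hmT B₁ ⟨b₁, hb₁⟩).inter (hmT B₂ ⟨b₂, hb₂⟩))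
  rw [Set.preimage_inter, Set.preimage_inter] at key
  rw [Mev_preimage G B₁ h1 hb₁ σ hσ1, Mev_preimage G B₂ h2 hb₂ σ hσ2] at key
  have eid1 := Mev_preimage (X := X) G B₁ h1 hb₁ 1 (fun l => Iff.rfl)
  have eid2 := Mev_preimage (X := X) G B₂ h2 hb₂ 1 (fun l => Iff.rfl)
  simp only [Equiv.Perm.one_apply] at eid1 eid2
  rw [eid1, eid2] at key
  exact key.symm

lemma counting (hmeas : ∀ i, Measurable (X i))
    (hindep : iIndepFun X μ)
    (hid : ∀ i, μ.map (X i) = ν) (hatom : ∀ x : ℝ, ν {x} = 0) [IsProbabilityMeasure ν]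
    (G B₀ B : Finset ℕ) (hB : B ⊆ G) (hB₀ : B₀ ⊆ G)
    {b : ℕ} (hb : b ∈ G) (hbB : b ∉ B)
    (hB₀B : ∀ d ∈ B, ∀ d' ∈ B, ((d ∈ B₀) ↔ (d' ∈ B₀)))
    {d : ℕ} (hd : d ∈ B) :
    (B.card : ℝ≥0∞) * μ (Mev X B₀ b ∩ Mev X B d) = μ (Mev X B₀ b) := by
  classical
  -- all the intersections have the same measure
  have hEq : ∀ d' ∈ B, μ (Mev X B₀ b ∩ Mev X B d') = μ (Mev X B₀ b ∩ Mev X B d) := by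
    intro d' hd'
    set σ : Equiv.Perm {x // x ∈ G} := Equiv.swap ⟨d, hB hd⟩ ⟨d', hB hd'⟩ with hσdef
    have hswap : ∀ (E : Finset ℕ), (d ∈ E ↔ d' ∈ E) →
        ∀ l : {x // x ∈ G}, ((σ l : {x // x ∈ G}) : ℕ) ∈ E ↔ (l : ℕ) ∈ E := by
      intro E hdE l
      rcases eq_or_ne l ⟨d, hB hd⟩ with rfl | h1
      · rw [hσdef, Equiv.swap_apply_left]; exact hdE.symm
      rcases eq_or_ne l ⟨d', hB hd'⟩ with rfl | h2
      · rw [hσdef, Equiv.swap_apply_right]; exact hdE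
      · rw [hσdef, Equiv.swap_apply_of_ne_of_ne h1 h2]
    have hσ0 : ∀ l : {x // x ∈ G}, ((σ l : {x // x ∈ G}) : ℕ) ∈ B₀ ↔ (l : ℕ) ∈ B₀ :=
      hswap B₀ (hB₀B d hd d' hd')
    have hσB : ∀ l : {x // x ∈ G}, ((σ l : {x // x ∈ G}) : ℕ) ∈ B ↔ (l : ℕ) ∈ B :=
      hswap B (by simp [hd, hd'])
    have hfix : σ ⟨b, hb⟩ = ⟨b, hb⟩ := by
      rw [hσdef]
      refine Equiv.swap_apply_of_ne_of_ne ?_ ?_ <;>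
        simp only [ne_eq, Subtype.mk.injEq] <;> rintro rfl <;> exact hbB (by assumption)
    have hσd : σ ⟨d, hB hd⟩ = ⟨d', hB hd'⟩ := by rw [hσdef, Equiv.swap_apply_left]
    have := meas_Mev_pair hmeas hindep hid G B₀ B hB₀ hB hb (hB hd) σ hσ0 hσB
    rw [hfix, hσd] at this
    exact this
  -- pairwise disjointness
  have hdisj : (B : Set ℕ).PairwiseDisjoint fun d' => Mev X B₀ b ∩ Mev X B d' := by
    intro d₁ h₁ d₂ h₂ hne
    simp only [Function.onFun, Set.disjoint_left]
    rintro ω ⟨-, hω₁⟩ ⟨-, hω₂⟩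
    exact absurd (hω₂ d₁ h₁ hne) (not_lt.2 (le_of_lt (hω₁ d₂ h₂ hne.symm)))
  -- the union has full measure within `Mev X B₀ b`
  have hcover : μ (Mev X B₀ b) = μ (⋃ d' ∈ B, (Mev X B₀ b ∩ Mev X B d')) := by
    set N : Set Ω := ⋃ a ∈ B, ⋃ c ∈ B, {ω | a ≠ c ∧ X a ω = X c ω} with hNdef
    have hN : μ N = 0 := by
      rw [hNdef]
      refine (measure_biUnion_null_iff (B : Set ℕ).to_countable).2 fun a _ => ?_
      refine (measure_biUnion_null_iff (B : Set ℕ).to_countable).2 fun c _ => ?_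
      rcases eq_or_ne a c with rfl | hac
      · have he : {ω | a ≠ a ∧ X a ω = X a ω} = (∅ : Set Ω) := by ext ω; simp
        rw [he]; exact measure_empty
      · exact measure_mono_null (fun ω hω => hω.2) (ties_null hmeas hindep hid hatom hac)
    refine le_antisymm ?_ (measure_mono (Set.iUnion₂_subset fun d' _ => Set.inter_subset_left))
    have hsub : Mev X B₀ b ⊆ (⋃ d' ∈ B, (Mev X B₀ b ∩ Mev X B d')) ∪ N := by
      intro ω hω
      by_cases hωN : ω ∈ N
      · exact Or.inr hωN
      · left
        obtain ⟨m, hm, hmax⟩ := B.exists_max_image (fun l => X l ω) ⟨d, hd⟩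
        refine Set.mem_biUnion hm ⟨hω, fun l hl hlm => ?_⟩
        refine lt_of_le_of_ne (hmax l hl) fun hXeq => ?_
        exact hωN (Set.mem_biUnion hl (Set.mem_biUnion hm ⟨hlm, hXeq⟩))
    calc μ (Mev X B₀ b) ≤ μ ((⋃ d' ∈ B, (Mev X B₀ b ∩ Mev X B d')) ∪ N) := measure_mono hsub
      _ ≤ μ (⋃ d' ∈ B, (Mev X B₀ b ∩ Mev X B d')) + μ N := measure_union_le _ _
      _ = μ (⋃ d' ∈ B, (Mev X B₀ b ∩ Mev X B d')) := by rw [hN, add_zero]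
  rw [hcover, measure_biUnion_finset hdisj fun d' _ =>
    ((measurableSet_Mev hmeas B₀ b).inter (measurableSet_Mev hmeas B d'))]
  rw [Finset.sum_congr rfl hEq, Finset.sum_const, nsmul_eq_mul]



lemma meas_Iic (hmeas : ∀ i, Measurable (X i)) (hF : Continuous F)
    (hcdf : ∀ i x, μ {ω | X i ω < x} = ENNReal.ofReal (F x)) (i : ℕ) (a : ℝ) :
    μ (X i ⁻¹' Set.Iic a) = ENNReal.ofReal (F a) := by
  have hset : X i ⁻¹' Set.Iic a = ⋂ n : ℕ, {ω | X i ω < a + 1 / (n + 1)} := by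
    ext ω
    simp only [Set.mem_preimage, Set.mem_Iic, Set.mem_iInter, Set.mem_setOf_eq]
    constructor
    · intro h n
      refine lt_of_le_of_lt h ?_
      have : (0:ℝ) < 1 / (n + 1) := by positivity
      linarith
    · intro h
      by_contra hc
      push_neg at hc
      obtain ⟨n, hn⟩ := exists_nat_one_div_lt (sub_pos.2 hc)
      exact absurd (h n) (not_lt.2 (by linarith))
  have hmono : Antitone fun n : ℕ => {ω | X i ω < a + 1 / (n + 1)} := by
    intro m n hmn ω hω
    simp only [Set.mem_setOf_eq] at *
    have : (1 : ℝ) / (n + 1) ≤ 1 / (m + 1) := by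
      apply one_div_le_one_div_of_le (by positivity)
      exact_mod_cast add_le_add_left (Nat.cast_le.2 hmn) 1
    linarith
  have hlim := tendsto_measure_iInter_atTop
    (s := fun n : ℕ => {ω | X i ω < a + 1 / (n + 1)})
    (fun n => ((hmeas i) measurableSet_Iio).nullMeasurableSet) hmono ⟨0, measure_ne_top μ _⟩
  have hval : ∀ n : ℕ, μ {ω | X i ω < a + 1 / (n + 1)} = ENNReal.ofReal (F (a + 1 / (n + 1))) :=
    fun n => hcdf i _
  have htend : Tendsto (fun n : ℕ => ENNReal.ofReal (F (a + 1 / (n + 1)))) atTop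
      (nhds (ENNReal.ofReal (F a))) := by
    refine (ENNReal.continuous_ofReal.tendsto _).comp ((hF.tendsto _).comp ?_)
    have : Tendsto (fun n : ℕ => a + 1 / ((n : ℝ) + 1)) atTop (nhds (a + 0)) :=
      tendsto_const_nhds.add tendsto_one_div_add_atTop_nhds_zero_nat
    simpa using this
  rw [hset]
  exact tendsto_nhds_unique (Filter.Tendsto.congr (fun n => hval n) hlim) htend

lemma law_eq (hmeas : ∀ i, Measurable (X i)) (hF : Continuous F)
    (hcdf : ∀ i x, μ {ω | X i ω < x} = ENNReal.ofReal (F x)) (i : ℕ) :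
    μ.map (X i) = μ.map (X 0) := by
  haveI : IsProbabilityMeasure (μ.map (X i)) :=
    Measure.isProbabilityMeasure_map (hmeas i).aemeasurable
  refine MeasureTheory.Measure.ext_of_Iic _ _ fun a => ?_
  rw [Measure.map_apply (hmeas i) measurableSet_Iic, Measure.map_apply (hmeas 0) measurableSet_Iic,
    meas_Iic hmeas hF hcdf i a, meas_Iic hmeas hF hcdf 0 a]

lemma law_atom (hmeas : ∀ i, Measurable (X i)) (hF : Continuous F)
    (hcdf : ∀ i x, μ {ω | X i ω < x} = ENNReal.ofReal (F x)) (a : ℝ) :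
    (μ.map (X 0)) {a} = 0 := by
  have h1 : (μ.map (X 0)) (Set.Iic a) = ENNReal.ofReal (F a) := by
    rw [Measure.map_apply (hmeas 0) measurableSet_Iic]; exact meas_Iic hmeas hF hcdf 0 a
  have h2 : (μ.map (X 0)) (Set.Iio a) = ENNReal.ofReal (F a) := by
    rw [Measure.map_apply (hmeas 0) measurableSet_Iio]; exact hcdf 0 a
  have hsub : {a} ⊆ Set.Iic a \ Set.Iio a := by
    intro x hx; simp only [Set.mem_singleton_iff] at hx; subst hx; simp
  refine measure_mono_null hsub ?_
  rw [measure_diff Set.Iio_subset_Iic_self measurableSet_Iio.nullMeasurableSet, h1, h2,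
    tsub_self]
  rw [h2]; exact ENNReal.ofReal_ne_top



lemma eq_inv_mul_of_natCast_mul_eq {a b : ℝ≥0∞} {n : ℕ} (hn : n ≠ 0)
    (h : (n : ℝ≥0∞) * a = b) : a = (n : ℝ≥0∞)⁻¹ * b := by
  rw [← h, ← mul_assoc, ENNReal.inv_mul_cancel (by exact_mod_cast hn) (ENNReal.natCast_ne_top n),
    one_mul]

theorem partA {Ω : Type*} [MeasurableSpace Ω] (μ : Measure Ω) [IsProbabilityMeasure μ]
    (X : ℕ → Ω → ℝ) (hmeas : ∀ i, Measurable (X i))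
    (hindep : iIndepFun X μ)
    (F : ℝ → ℝ) (hF : Continuous F)
    (hcdf : ∀ i x, μ {ω | X i ω < x} = ENNReal.ofReal (F x))
    (nseq : ℕ → ℕ) (hmono : StrictMono nseq) (hone : ∀ t, 1 ≤ nseq t)
    (C : ℕ → Finset ℕ)
    (hsub : ∀ t, C (nseq t) ⊆ Finset.Icc 1 (nseq t - 1))
    (ha1 : ∀ t, C (nseq t) ⊂ C (nseq (t + 1)))
    (ha2 : ∀ t, nseq t ∈ C (nseq (t + 1))) :
    (∀ t, μ {ω | ∀ l ∈ C (nseq t), X l ω < X (nseq t) ω}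
        = ((((C (nseq t)).card + 1 : ℕ) : ℝ≥0∞))⁻¹) ∧
    (∀ t u, t ≠ u → μ ({ω | ∀ l ∈ C (nseq t), X l ω < X (nseq t) ω}
        ∩ {ω | ∀ l ∈ C (nseq u), X l ω < X (nseq u) ω})
      = μ {ω | ∀ l ∈ C (nseq t), X l ω < X (nseq t) ω}
        * μ {ω | ∀ l ∈ C (nseq u), X l ω < X (nseq u) ω}) := by
  classical
  set ν : Measure ℝ := μ.map (X 0) with hνdef
  haveI : IsProbabilityMeasure ν := Measure.isProbabilityMeasure_map (hmeas 0).aemeasurable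
  have hid : ∀ i, μ.map (X i) = ν := fun i => law_eq hmeas hF hcdf i
  have hatom : ∀ x : ℝ, ν {x} = 0 := fun x => law_atom hmeas hF hcdf x
  set D : ℕ → Finset ℕ := fun t => insert (nseq t) (C (nseq t)) with hDdef
  have hnotin : ∀ t, nseq t ∉ C (nseq t) := by
    intro t h
    have h2 := Finset.mem_Icc.mp (hsub t h)
    have h3 := hone t
    omega
  have hAeq : ∀ t, {ω | ∀ l ∈ C (nseq t), X l ω < X (nseq t) ω} = Mev X (D t) (nseq t) := by
    intro t
    ext ω
    simp only [Set.mem_setOf_eq, Mev, hDdef, Finset.mem_insert]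
    constructor
    · rintro h l (rfl | hl) hlne
      · exact absurd rfl hlne
      · exact h l hl
    · intro h l hl
      exact h l (Or.inr hl) fun hc => hnotin t (hc ▸ hl)
  have hDcard : ∀ t, (D t).card = (C (nseq t)).card + 1 := fun t =>
    Finset.card_insert_of_notMem (hnotin t)
  have hDle : ∀ t, ∀ l ∈ D t, l ≤ nseq t := by
    intro t l hl
    rcases Finset.mem_insert.mp hl with rfl | hl
    · exact le_refl _
    · have := (Finset.mem_Icc.mp (hsub t hl)).2
      omega
  have hchain : ∀ s t, t < s → D t ⊆ C (nseq s) := by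
    intro s
    induction s with
    | zero => intro t h; exact absurd h (Nat.not_lt_zero t)
    | succ s ih =>
      intro t h l hl
      rcases Nat.lt_succ_iff_lt_or_eq.mp h with h' | rfl
      · exact (ha1 s).subset (ih t h' hl)
      · rcases Finset.mem_insert.mp hl with rfl | hl
        · exact ha2 t
        · exact (ha1 t).subset hl
  have hcard0 : ∀ t, (D t).card ≠ 0 := by intro t; rw [hDcard t]; omega
  -- single event probability
  have h1 : ∀ t, μ (Mev X (D t) (nseq t)) = (((D t).card : ℕ) : ℝ≥0∞)⁻¹ := by
    intro t
    set M := (D t).sup id + 1 with hMdef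
    have hM : M ∉ D t := by
      intro h
      have := Finset.le_sup (f := id) h
      simp only [id_eq] at this
      omega
    have hcount := counting hmeas hindep hid hatom (insert M (D t)) ∅ (D t)
      (Finset.subset_insert M (D t)) (Finset.empty_subset _)
      (Finset.mem_insert_self M (D t)) hM
      (by simp) (Finset.mem_insert_self (nseq t) (C (nseq t)))
    have huniv : Mev X ∅ M = Set.univ := by ext; simp [Mev]
    rw [huniv, Set.univ_inter, measure_univ] at hcount
    rw [eq_inv_mul_of_natCast_mul_eq (hcard0 t) hcount, mul_one]
  -- pair probability, ordered case
  have h2 : ∀ t s, t < s → μ (Mev X (D s) (nseq s) ∩ Mev X (D t) (nseq t))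
      = (((D s).card : ℕ) : ℝ≥0∞)⁻¹ * (((D t).card : ℕ) : ℝ≥0∞)⁻¹ := by
    intro t s hts
    have hB : D t ⊆ D s := (hchain s t hts).trans (Finset.subset_insert _ _)
    have hbB : nseq s ∉ D t := by
      intro h
      have := hDle t _ h
      have := hmono hts
      omega
    have hcount := counting hmeas hindep hid hatom (D s) (D s) (D t) hB (le_refl _)
      (Finset.mem_insert_self _ _) hbB
      (fun d hd d' hd' => iff_of_true (hB hd) (hB hd'))
      (Finset.mem_insert_self (nseq t) (C (nseq t)))
    rw [h1 s] at hcount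
    rw [eq_inv_mul_of_natCast_mul_eq (hcard0 t) hcount, mul_comm]
  constructor
  · intro t
    rw [hAeq t, h1 t, hDcard t]
  · intro t u htu
    rcases lt_or_gt_of_ne htu with h | h
    · rw [hAeq t, hAeq u, Set.inter_comm, h2 t u h, h1 t, h1 u, mul_comm]
    · rw [hAeq t, hAeq u, h2 u t h, h1 t, h1 u, mul_comm]



lemma moments (A : ℕ → Set Ω) (hAmeas : ∀ t, MeasurableSet (A t)) (p : ℕ → ℝ)
    (htoReal : ∀ t, (μ (A t)).toReal = p t)
    (hpairs : ∀ t u, t ≠ u → (μ (A t ∩ A u)).toReal = p t * p u) (j : ℕ) :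
    MemLp (fun ω => ∑ t ∈ Finset.range j, (A t).indicator (fun _ => (1:ℝ)) ω) 2 μ ∧
    μ[fun ω => ∑ t ∈ Finset.range j, (A t).indicator (fun _ => (1:ℝ)) ω]
      = ∑ t ∈ Finset.range j, p t ∧
    variance (fun ω => ∑ t ∈ Finset.range j, (A t).indicator (fun _ => (1:ℝ)) ω) μ
      ≤ ∑ t ∈ Finset.range j, p t := by
  set Y : ℕ → Ω → ℝ := fun t => (A t).indicator (fun _ => (1:ℝ)) with hY
  have hYmem : ∀ t, MemLp (Y t) 2 μ := fun t =>
    memLp_indicator_const 2 (hAmeas t) 1 (Or.inr (measure_ne_top μ _))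
  have hmem : MemLp (fun ω => ∑ t ∈ Finset.range j, Y t ω) 2 μ := by
    have := memLp_finset_sum' (Finset.range j) (fun t _ => hYmem t)
    convert this using 1
    ext ω
    simp [Finset.sum_apply]
  have hYint : ∀ t, Integrable (Y t) μ := fun t => (hYmem t).integrable one_le_two
  have hEY : ∀ t, μ[Y t] = p t := by
    intro t
    rw [hY]
    rw [integral_indicator_const (1:ℝ) (hAmeas t), smul_eq_mul, mul_one, measureReal_def, htoReal]
  have hmean : μ[fun ω => ∑ t ∈ Finset.range j, Y t ω] = ∑ t ∈ Finset.range j, p t := by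
    rw [integral_finset_sum _ (fun t _ => hYint t)]
    exact Finset.sum_congr rfl fun t _ => hEY t
  refine ⟨hmem, hmean, ?_⟩
  -- product of indicators
  have hprod : ∀ t u, (fun ω => Y t ω * Y u ω) = (A t ∩ A u).indicator (fun _ => (1:ℝ)) := by
    intro t u
    ext ω
    by_cases h1 : ω ∈ A t <;> by_cases h2 : ω ∈ A u <;>
      simp [hY, Set.indicator_apply, h1, h2]
  have hprodint : ∀ t u, Integrable (fun ω => Y t ω * Y u ω) μ := by
    intro t u
    rw [hprod]
    exact (integrable_const (1:ℝ)).indicator ((hAmeas t).inter (hAmeas u))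
  have hEprod : ∀ t u, (∫ ω, Y t ω * Y u ω ∂μ) = (μ (A t ∩ A u)).toReal := by
    intro t u
    rw [hprod, integral_indicator_const (1:ℝ) ((hAmeas t).inter (hAmeas u)), smul_eq_mul, mul_one, measureReal_def]
  have hsq : μ[(fun ω => ∑ t ∈ Finset.range j, Y t ω) ^ 2]
      = ∑ t ∈ Finset.range j, ∑ u ∈ Finset.range j, (μ (A t ∩ A u)).toReal := by
    have hfun : ((fun ω => ∑ t ∈ Finset.range j, Y t ω) ^ 2)
        = fun ω => ∑ t ∈ Finset.range j, ∑ u ∈ Finset.range j, Y t ω * Y u ω := by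
      ext ω
      simp [Pow.pow, sq, Finset.sum_mul_sum]
    rw [hfun, integral_finset_sum _ (fun t _ => integrable_finset_sum _ (fun u _ => hprodint t u))]
    refine Finset.sum_congr rfl fun t _ => ?_
    rw [integral_finset_sum _ (fun u _ => hprodint t u)]
    exact Finset.sum_congr rfl fun u _ => hEprod t u
  rw [variance_eq_sub hmem, hsq, hmean]
  have hdiag : ∀ t, (μ (A t ∩ A t)).toReal = p t := by
    intro t; rw [Set.inter_self]; exact htoReal t
  have hoffd : ∀ t u, t ≠ u → (μ (A t ∩ A u)).toReal = p t * p u := hpairs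
  have hexp : ∑ t ∈ Finset.range j, ∑ u ∈ Finset.range j, (μ (A t ∩ A u)).toReal
      = ∑ t ∈ Finset.range j, (p t - p t * p t)
        + ∑ t ∈ Finset.range j, ∑ u ∈ Finset.range j, p t * p u := by
    rw [← Finset.sum_add_distrib]
    refine Finset.sum_congr rfl fun t ht => ?_
    have : ∑ u ∈ Finset.range j, (μ (A t ∩ A u)).toReal
        = (p t - p t * p t) + ∑ u ∈ Finset.range j, p t * p u := by
      have h1 : ∑ u ∈ Finset.range j, ((μ (A t ∩ A u)).toReal - p t * p u)
          = p t - p t * p t := by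
        rw [Finset.sum_eq_single_of_mem t ht]
        · rw [hdiag t]
        · intro u _ hut
          rw [hoffd t u (Ne.symm hut)]; ring
      have h2 := Finset.sum_sub_distrib (s := Finset.range j)
        (f := fun u => (μ (A t ∩ A u)).toReal) (g := fun u => p t * p u)
      rw [h2] at h1
      linarith
    exact this
  have hIsq : (∑ t ∈ Finset.range j, p t) ^ 2
      = ∑ t ∈ Finset.range j, ∑ u ∈ Finset.range j, p t * p u := by
    rw [sq, Finset.sum_mul_sum]
  rw [hexp, hIsq]
  have : ∀ t ∈ Finset.range j, p t - p t * p t ≤ p t := by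
    intro t ht
    have h0 : 0 ≤ p t := by rw [← htoReal t]; exact ENNReal.toReal_nonneg
    nlinarith
  calc ∑ t ∈ Finset.range j, (p t - p t * p t)
        + ∑ t ∈ Finset.range j, ∑ u ∈ Finset.range j, p t * p u
        - ∑ t ∈ Finset.range j, ∑ u ∈ Finset.range j, p t * p u
      = ∑ t ∈ Finset.range j, (p t - p t * p t) := by ring
    _ ≤ ∑ t ∈ Finset.range j, p t := Finset.sum_le_sum this



theorem partB (A : ℕ → Set Ω) (hAmeas : ∀ t, MeasurableSet (A t)) (p : ℕ → ℝ)
    (htoReal : ∀ t, (μ (A t)).toReal = p t)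
    (hpairs : ∀ t u, t ≠ u → (μ (A t ∩ A u)).toReal = p t * p u)
    (hppos : ∀ t, 0 < p t) (hple : ∀ t, p t ≤ 1)
    (I : ℕ → ℝ) (hI : ∀ j, I j = ∑ t ∈ Finset.range j, p t)
    (hIinf : Tendsto I atTop atTop)
    (R : ℕ → Ω → ℝ)
    (hR : ∀ j ω, R j ω = ∑ t ∈ Finset.range j, (A t).indicator (fun _ => (1:ℝ)) ω) :
    ∀ᵐ ω ∂μ, Tendsto (fun j => R j ω / I j) atTop (nhds 1) := by
  classical
  -- basic facts about I
  have hImono : Monotone I := by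
    intro j j' hjj'
    rw [hI j, hI j']
    exact Finset.sum_le_sum_of_subset_of_nonneg
      (Finset.range_subset_range.2 hjj') (fun t _ _ => (hppos t).le)
  have hI0 : I 0 = 0 := by rw [hI]; simp
  have hIstep : ∀ j, I (j + 1) = I j + p j := by
    intro j; rw [hI, hI, Finset.sum_range_succ]
  have hIle : ∀ j, I j ≤ j := by
    intro j
    rw [hI]
    calc ∑ t ∈ Finset.range j, p t ≤ ∑ t ∈ Finset.range j, 1 :=
        Finset.sum_le_sum fun t _ => hple t
      _ = j := by simp
  -- Chebyshev
  have hcheb : ∀ j, ∀ a : ℝ, 0 < a →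
      μ {ω | a ≤ |R j ω - I j|} ≤ ENNReal.ofReal (I j / a ^ 2) := by
    intro j a ha
    obtain ⟨hmem, hmean, hvar⟩ := moments A hAmeas p htoReal hpairs j
    have hset : {ω | a ≤ |R j ω - I j|}
        = {ω | a ≤ |(fun ω => ∑ t ∈ Finset.range j, (A t).indicator (fun _ => (1:ℝ)) ω) ω
            - μ[fun ω => ∑ t ∈ Finset.range j, (A t).indicator (fun _ => (1:ℝ)) ω]|} := by
      ext ω
      rw [Set.mem_setOf_eq, Set.mem_setOf_eq, hR j ω, hmean, hI j]
    rw [hset]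
    refine le_trans (meas_ge_le_variance_div_sq hmem ha) (ENNReal.ofReal_le_ofReal ?_)
    have hvar' : variance (fun ω => ∑ t ∈ Finset.range j, (A t).indicator (fun _ => (1:ℝ)) ω) μ
        ≤ I j := by rw [hI]; exact hvar
    have ha2 : (0:ℝ) < a ^ 2 := by positivity
    gcongr
  -- the subsequence φ
  have hex : ∀ k : ℕ, ∃ j, ((k : ℝ)) ^ 2 ≤ I j := fun k =>
    (hIinf.eventually_ge_atTop ((k : ℝ) ^ 2)).exists
  set φ : ℕ → ℕ := fun k => Nat.find (hex k) with hφdef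
  have hφ1 : ∀ k : ℕ, ((k : ℝ)) ^ 2 ≤ I (φ k) := fun k => Nat.find_spec (hex k)
  have hφlt : ∀ k, ∀ j < φ k, I j < (k : ℝ) ^ 2 := by
    intro k j hj
    have := Nat.find_min (hex k) hj
    linarith [not_le.mp this]
  have hφ0 : φ 0 = 0 := by
    rw [hφdef]
    simp only [Nat.find_eq_zero]
    rw [hI0]; norm_num
  have hφub : ∀ k, 1 ≤ k → I (φ k) ≤ (k : ℝ) ^ 2 + 1 := by
    intro k hk
    rcases Nat.eq_zero_or_eq_succ_pred (φ k) with h0 | hsucc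
    · exfalso
      have h1 := hφ1 k
      rw [h0, hI0] at h1
      have h2 : (1:ℝ) ≤ (k:ℝ) := by exact_mod_cast hk
      nlinarith
    · set m := (φ k) - 1 with hm
      have hφm : φ k = m + 1 := hsucc
      have h1 : I m < (k:ℝ)^2 := hφlt k m (by omega)
      have h2 : I (φ k) = I m + p m := by rw [hφm]; exact hIstep m
      have h3 : p m ≤ 1 := hple m
      linarith
  -- Borel-Cantelli along the subsequence
  have hbc : ∀ m : ℕ, ∀ᵐ ω ∂μ, ∀ᶠ k in atTop,
      |R (φ (k + 1)) ω - I (φ (k + 1))| < 1 / ((m : ℝ) + 1) * I (φ (k + 1)) := by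
    intro m
    set s : ℕ → Set Ω := fun k =>
      {ω | 1 / ((m : ℝ) + 1) * I (φ (k + 1)) ≤ |R (φ (k + 1)) ω - I (φ (k + 1))|} with hsdef
    have hIk : ∀ k : ℕ, ((k : ℝ) + 1) ^ 2 ≤ I (φ (k + 1)) := by
      intro k
      have := hφ1 (k + 1)
      push_cast at this ⊢
      linarith
    have hIpos : ∀ k : ℕ, (0:ℝ) < I (φ (k + 1)) := by
      intro k
      have h1 := hIk k
      have h2 : (0:ℝ) < ((k:ℝ)+1)^2 := by positivity
      linarith
    have hμs : ∀ k, μ (s k) ≤ ENNReal.ofReal (((m:ℝ)+1)^2 / ((k:ℝ)+1)^2) := by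
      intro k
      have ha : (0:ℝ) < 1 / ((m : ℝ) + 1) * I (φ (k + 1)) := by
        have := hIpos k
        positivity
      refine le_trans (hcheb (φ (k+1)) _ ha) (ENNReal.ofReal_le_ofReal ?_)
      have heq : I (φ (k+1)) / (1 / ((m : ℝ) + 1) * I (φ (k + 1))) ^ 2
          = ((m:ℝ)+1)^2 / I (φ (k+1)) := by
        have h := (hIpos k).ne'
        field_simp
      rw [heq]
      have h1 : (0:ℝ) < ((k:ℝ)+1)^2 := by positivity
      exact div_le_div_of_nonneg_left (by positivity) h1 (hIk k)
    have hsum : (∑' k, μ (s k)) ≠ ⊤ := by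
      have hs0 : Summable (fun k : ℕ => 1 / ((k:ℝ)) ^ 2) :=
        Real.summable_one_div_nat_pow.2 one_lt_two
      have hs1 : Summable (fun k : ℕ => 1 / ((k:ℝ) + 1) ^ 2) := by
        have := (summable_nat_add_iff 1).2 hs0
        refine this.congr fun k => ?_
        push_cast
        ring
      have hs2 : Summable (fun k : ℕ => ((m:ℝ)+1)^2 / ((k:ℝ)+1)^2) := by
        exact (hs1.mul_left (((m:ℝ)+1)^2)).congr fun k => by rw [mul_one_div]
      have hle : (∑' k, μ (s k)) ≤ ∑' k : ℕ, ENNReal.ofReal (((m:ℝ)+1)^2 / ((k:ℝ)+1)^2) :=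
        ENNReal.tsum_le_tsum hμs
      have heq : (∑' k : ℕ, ENNReal.ofReal (((m:ℝ)+1)^2 / ((k:ℝ)+1)^2))
          = ENNReal.ofReal (∑' k : ℕ, ((m:ℝ)+1)^2 / ((k:ℝ)+1)^2) :=
        (ENNReal.ofReal_tsum_of_nonneg (fun k => by positivity) hs2).symm
      rw [heq] at hle
      exact ne_top_of_le_ne_top ENNReal.ofReal_ne_top hle
    filter_upwards [ae_eventually_notMem hsum] with ω hω
    refine hω.mono fun k hk => ?_
    exact not_le.mp fun hle => hk hle
  have hbcall : ∀ᵐ ω ∂μ, ∀ m : ℕ, ∀ᶠ k in atTop,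
      |R (φ (k + 1)) ω - I (φ (k + 1))| < 1 / ((m : ℝ) + 1) * I (φ (k + 1)) :=
    (ae_all_iff).2 hbc
  -- positivity of I along φ
  have hIφpos : ∀ k : ℕ, 1 ≤ k → (0:ℝ) < I (φ k) := by
    intro k hk
    have h1 := hφ1 k
    have h2 : (1:ℝ) ≤ (k:ℝ) := by exact_mod_cast hk
    nlinarith
  have hφmono : Monotone φ := by
    intro a b hab
    refine Nat.find_mono fun j hj => le_trans ?_ hj
    have : (a:ℝ) ≤ (b:ℝ) := by exact_mod_cast hab
    have ha0 : (0:ℝ) ≤ (a:ℝ) := Nat.cast_nonneg a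
    nlinarith
  -- convergence along the subsequence for good ω
  have hgood : ∀ᵐ ω ∂μ, Tendsto (fun k => R (φ k) ω / I (φ k)) atTop (nhds 1) := by
    filter_upwards [hbcall] with ω hω
    rw [Metric.tendsto_atTop]
    intro ε hε
    obtain ⟨m, hm⟩ := exists_nat_one_div_lt hε
    obtain ⟨K, hK⟩ := eventually_atTop.mp (hω m)
    refine ⟨K + 1, fun k hk => ?_⟩
    obtain ⟨k', rfl⟩ : ∃ k', k = k' + 1 := ⟨k - 1, by omega⟩
    have hb := hK k' (by omega)
    have hIp : (0:ℝ) < I (φ (k' + 1)) := hIφpos _ (by omega)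
    rw [Real.dist_eq]
    have heq : R (φ (k' + 1)) ω / I (φ (k' + 1)) - 1
        = (R (φ (k' + 1)) ω - I (φ (k' + 1))) / I (φ (k' + 1)) := by
      field_simp
    rw [heq, abs_div, abs_of_pos hIp]
    have h2 : |R (φ (k' + 1)) ω - I (φ (k' + 1))| / I (φ (k' + 1)) < 1 / ((m:ℝ) + 1) := by
      rw [div_lt_iff₀ hIp]
      linarith
    linarith
  -- the interpolation index κ
  set κ : ℕ → ℕ := fun j => Nat.findGreatest (fun k => φ k ≤ j) j with hκdef
  have hκspec : ∀ j, φ (κ j) ≤ j := by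
    intro j
    exact Nat.findGreatest_spec (P := fun k => φ k ≤ j) (m := 0) (Nat.zero_le j)
      (show φ 0 ≤ j by rw [hφ0]; exact Nat.zero_le j)
  have hκle : ∀ j, κ j ≤ j := fun j => Nat.findGreatest_le j
  have hκlt : ∀ j, 2 ≤ j → j < φ (κ j + 1) := by
    intro j hj
    have h1 : κ j < j := by
      by_contra h
      push_neg at h
      have hequ : κ j = j := le_antisymm (hκle j) h
      have h2 : φ j ≤ j := by nth_rewrite 1 [← hequ]; exact hκspec j
      have h3 : ((j:ℝ))^2 ≤ I (φ j) := hφ1 j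
      have h4 : I (φ j) ≤ I j := hImono h2
      have h5 : I j ≤ j := hIle j
      have h6 : (2:ℝ) ≤ (j:ℝ) := by exact_mod_cast hj
      nlinarith
    have h7 : ¬ (φ (κ j + 1) ≤ j) :=
      Nat.findGreatest_is_greatest (P := fun k => φ k ≤ j) (n := j)
        (Nat.lt_succ_self _) (by omega)
    omega
  have hκone : ∀ j, max (φ 1) 1 ≤ j → 1 ≤ κ j := fun j hj =>
    Nat.le_findGreatest (P := fun k => φ k ≤ j) (n := j) (m := 1)
      (le_trans (le_max_right _ _) hj) (le_trans (le_max_left _ _) hj)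
  have hκtop : Tendsto κ atTop atTop := by
    rw [tendsto_atTop_atTop]
    intro K
    exact ⟨max (φ K) K, fun j hj =>
      Nat.le_findGreatest (P := fun k => φ k ≤ j) (n := j) (m := K)
        (le_trans (le_max_right _ _) hj) (le_trans (le_max_left _ _) hj)⟩
  -- the ratio of consecutive I-values along φ tends to 1
  have hrat : Tendsto (fun k => I (φ (k + 1)) / I (φ k)) atTop (nhds 1) := by
    have h0 : Tendsto (fun k : ℕ => 1/(k:ℝ)) atTop (nhds 0) :=
      tendsto_one_div_atTop_nhds_zero_nat
    have hub : Tendsto (fun k : ℕ => (((k:ℝ)+1)^2 + 1) / (k:ℝ)^2) atTop (nhds 1) := by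
      have h1 : Tendsto (fun k : ℕ => (1 + 1/(k:ℝ))^2 + (1/(k:ℝ))^2) atTop
          (nhds ((1+0)^2 + 0^2)) := ((tendsto_const_nhds.add h0).pow 2).add (h0.pow 2)
      have h2 : ∀ᶠ k : ℕ in atTop, (1 + 1/(k:ℝ))^2 + (1/(k:ℝ))^2
          = (((k:ℝ)+1)^2 + 1) / (k:ℝ)^2 := by
        filter_upwards [eventually_ge_atTop 1] with k hk
        have hk0 : (k:ℝ) ≠ 0 := by
          have : (1:ℝ) ≤ (k:ℝ) := by exact_mod_cast hk
          linarith
        first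
        | (field_simp; ring)
        | field_simp
      have h3 := h1.congr' h2
      simpa using h3
    refine tendsto_of_tendsto_of_tendsto_of_le_of_le' tendsto_const_nhds hub ?_ ?_
    · filter_upwards [eventually_ge_atTop 1] with k hk
      exact (one_le_div (hIφpos k hk)).2 (hImono (hφmono (Nat.le_succ k)))
    · filter_upwards [eventually_ge_atTop 1] with k hk
      have hub1 : I (φ (k+1)) ≤ ((k:ℝ)+1)^2 + 1 := by
        have := hφub (k+1) (by omega)
        push_cast at this ⊢
        linarith
      have hlb : ((k:ℝ))^2 ≤ I (φ k) := hφ1 k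
      have hk0 : (0:ℝ) < (k:ℝ)^2 := by
        have : (1:ℝ) ≤ (k:ℝ) := by exact_mod_cast hk
        nlinarith
      exact div_le_div₀ (by positivity) hub1 hk0 hlb
  have hratinv : Tendsto (fun k => I (φ k) / I (φ (k + 1))) atTop (nhds 1) := by
    have h1 := hrat.inv₀ one_ne_zero
    simp only [inv_div, inv_one] at h1
    exact h1
  -- monotonicity and nonnegativity of R
  have hRmono : ∀ ω : Ω, Monotone fun j => R j ω := by
    intro ω a b hab
    simp only
    rw [hR a ω, hR b ω]
    exact Finset.sum_le_sum_of_subset_of_nonneg (Finset.range_subset_range.2 hab)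
      (fun t _ _ => Set.indicator_nonneg (fun _ _ => zero_le_one) ω)
  have hRnonneg : ∀ j (ω : Ω), 0 ≤ R j ω := by
    intro j ω
    rw [hR j ω]
    exact Finset.sum_nonneg fun t _ => Set.indicator_nonneg (fun _ _ => zero_le_one) ω
  -- final squeeze
  filter_upwards [hgood] with ω hg
  have hup : Tendsto (fun j => (R (φ (κ j + 1)) ω / I (φ (κ j + 1))) * (I (φ (κ j + 1)) / I (φ (κ j))))
      atTop (nhds 1) := by
    have h1 : Tendsto (fun k => (R (φ (k + 1)) ω / I (φ (k + 1))) * (I (φ (k + 1)) / I (φ k)))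
        atTop (nhds (1 * 1)) := (hg.comp (tendsto_add_atTop_nat 1)).mul hrat
    have h2 : Tendsto (fun k => (R (φ (k + 1)) ω / I (φ (k + 1))) * (I (φ (k + 1)) / I (φ k)))
        atTop (nhds 1) := by simpa using h1
    exact h2.comp hκtop
  have hlow : Tendsto (fun j => (R (φ (κ j)) ω / I (φ (κ j))) * (I (φ (κ j)) / I (φ (κ j + 1))))
      atTop (nhds 1) := by
    have h1 : Tendsto (fun k => (R (φ k) ω / I (φ k)) * (I (φ k) / I (φ (k + 1))))
        atTop (nhds 1) := by simpa using hg.mul hratinv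
    exact h1.comp hκtop
  refine tendsto_of_tendsto_of_tendsto_of_le_of_le' hlow hup ?_ ?_
  · filter_upwards [eventually_ge_atTop (max (max (φ 1) 1) 2)] with j hj
    have hj2 : 2 ≤ j := le_trans (le_max_right _ _) hj
    have hκ1 : 1 ≤ κ j := hκone j (le_trans (le_max_left _ _) hj)
    have hφkj : φ (κ j) ≤ j := hκspec j
    have hjφ : j < φ (κ j + 1) := hκlt j hj2
    have hIk : (0:ℝ) < I (φ (κ j)) := hIφpos (κ j) hκ1
    have hIj : (0:ℝ) < I j := lt_of_lt_of_le hIk (hImono hφkj)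
    have heq : (R (φ (κ j)) ω / I (φ (κ j))) * (I (φ (κ j)) / I (φ (κ j + 1)))
        = R (φ (κ j)) ω / I (φ (κ j + 1)) := by
      rw [div_mul_div_comm, mul_comm (R (φ (κ j)) ω) (I (φ (κ j))),
        mul_div_mul_left _ _ hIk.ne']
    rw [heq]
    exact div_le_div₀ (hRnonneg j ω) (hRmono ω hφkj) hIj (hImono (le_of_lt hjφ))
  · filter_upwards [eventually_ge_atTop (max (max (φ 1) 1) 2)] with j hj
    have hj2 : 2 ≤ j := le_trans (le_max_right _ _) hj
    have hκ1 : 1 ≤ κ j := hκone j (le_trans (le_max_left _ _) hj)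
    have hφkj : φ (κ j) ≤ j := hκspec j
    have hjφ : j < φ (κ j + 1) := hκlt j hj2
    have hIk : (0:ℝ) < I (φ (κ j)) := hIφpos (κ j) hκ1
    have hIk1 : (0:ℝ) < I (φ (κ j + 1)) := hIφpos (κ j + 1) (by omega)
    have heq : (R (φ (κ j + 1)) ω / I (φ (κ j + 1))) * (I (φ (κ j + 1)) / I (φ (κ j)))
        = R (φ (κ j + 1)) ω / I (φ (κ j)) := by
      rw [div_mul_div_comm, mul_comm (R (φ (κ j + 1)) ω) (I (φ (κ j + 1))),
        mul_div_mul_left _ _ hIk1.ne']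
    rw [heq]
    exact div_le_div₀ (hRnonneg (φ (κ j + 1)) ω) (hRmono ω (le_of_lt hjφ)) hIk (hImono hφkj)


end RecordSLLN

/-- Strong law for the record counts along a compatible subsequence:
if `I j = ∑_{t<j} 1 / c (nseq t) → ∞`, then `R j / I j → 1` almost surely. -/
theorem record_count_strong_law
    {Ω : Type*} [MeasurableSpace Ω] (μ : Measure Ω) [IsProbabilityMeasure μ]
    (X : ℕ → Ω → ℝ) (hmeas : ∀ i, Measurable (X i))
    (hindep : iIndepFun X μ)
    (F : ℝ → ℝ) (hF : Continuous F)
    (hcdf : ∀ i x, μ {ω | X i ω < x} = ENNReal.ofReal (F x))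
    (nseq : ℕ → ℕ) (hmono : StrictMono nseq) (hone : ∀ t, 1 ≤ nseq t)
    (C : ℕ → Finset ℕ)
    (hsub : ∀ t, C (nseq t) ⊆ Finset.Icc 1 (nseq t - 1))
    (ha1 : ∀ t, C (nseq t) ⊂ C (nseq (t + 1)))
    (ha2 : ∀ t, nseq t ∈ C (nseq (t + 1)))
    (R : ℕ → Ω → ℝ)
    (hR : ∀ j ω, R j ω = ∑ t ∈ Finset.range j,
      Set.indicator {ω' | ∀ l ∈ C (nseq t), X l ω' < X (nseq t) ω'} (fun _ => (1 : ℝ)) ω)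
    (I : ℕ → ℝ)
    (hI : ∀ j, I j = ∑ t ∈ Finset.range j, (1 : ℝ) / ((C (nseq t)).card + 1))
    (hIinf : Tendsto I atTop atTop) :
    ∀ᵐ ω ∂μ, Tendsto (fun j => R j ω / I j) atTop (nhds 1) := by
  classical
  set A : ℕ → Set Ω := fun t => {ω | ∀ l ∈ C (nseq t), X l ω < X (nseq t) ω} with hAdef
  obtain ⟨hA1, hA2⟩ := RecordSLLN.partA μ X hmeas hindep F hF hcdf nseq hmono hone C hsub ha1 ha2
  have hAmeas : ∀ t, MeasurableSet (A t) := by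
    intro t
    have h : A t = ⋂ l ∈ C (nseq t), {ω | X l ω < X (nseq t) ω} := by
      ext ω; simp [hAdef]
    rw [h]
    exact MeasurableSet.biInter (C (nseq t) : Set ℕ).to_countable fun l _ =>
      measurableSet_lt (hmeas l) (hmeas (nseq t))
  set p : ℕ → ℝ := fun t => 1 / (((C (nseq t)).card : ℝ) + 1) with hpdef
  have htoReal : ∀ t, (μ (A t)).toReal = p t := by
    intro t
    rw [hA1 t, ENNReal.toReal_inv, ENNReal.toReal_natCast, hpdef]
    push_cast
    rw [one_div]
  have hpairs : ∀ t u, t ≠ u → (μ (A t ∩ A u)).toReal = p t * p u := by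
    intro t u htu
    rw [hA2 t u htu, ENNReal.toReal_mul, htoReal t, htoReal u]
  have hppos : ∀ t, 0 < p t := by
    intro t
    rw [hpdef]
    positivity
  have hple : ∀ t, p t ≤ 1 := by
    intro t
    rw [hpdef]
    rw [div_le_one (by positivity)]
    simp only [le_add_iff_nonneg_left]
    positivity
  have hI' : ∀ j, I j = ∑ t ∈ Finset.range j, p t := fun j => hI j
  have hR' : ∀ j ω, R j ω = ∑ t ∈ Finset.range j, (A t).indicator (fun _ => (1:ℝ)) ω :=
    fun j ω => hR j ω
  exact RecordSLLN.partB A hAmeas p htoReal hpairs hppos hple I hI' hIinf R hR'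
end

section
/- In the compatible partial-comparison setup, the distribution of the first record value satisfies P(X_{L(1)} < x) = Σ_{j≥1} P(L(1) = n_j) F(x)^{n_j} for all x, where L(1) = inf{t ≥ 1 : A_{n_t} occurs} indexes the first record along the subsequence; here the index is compared through the counting convention c(n_j) = n_j in the exponent when C(n_j) ∪ {n_j} has cardinality n_j. -/
open MeasureTheory ProbabilityTheory Set Filter Topology
open scoped ENNReal
set_option linter.unusedSectionVars false


lemma nu_Iic {F : ℝ → ℝ} (ν : Measure ℝ) [IsProbabilityMeasure ν] (hF : Continuous F)
    (hν : ∀ t, ν (Set.Iio t) = ENNReal.ofReal (F t)) (a : ℝ) :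
    ν (Set.Iic a) = ENNReal.ofReal (F a) := by
  have hIic : Set.Iic a = ⋂ n : ℕ, Set.Iio (a + 1 / (n + 1)) := by
    ext y
    simp only [Set.mem_Iic, Set.mem_iInter, Set.mem_Iio]
    constructor
    · intro h n
      have : (0:ℝ) < 1 / (n + 1) := by positivity
      linarith
    · intro h
      by_contra hya
      push_neg at hya
      obtain ⟨n, hn⟩ := exists_nat_one_div_lt (by linarith : (0:ℝ) < y - a)
      have := h n
      linarith
  have h1 : Tendsto (fun n : ℕ => ν (Set.Iio (a + 1 / (n + 1)))) atTop (𝓝 (ν (Set.Iic a))) := by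
    rw [hIic]
    exact tendsto_measure_iInter_atTop
      (fun n => measurableSet_Iio.nullMeasurableSet)
      (fun n m hnm => Set.Iio_subset_Iio (by
        have h1 : (1:ℝ) / (m + 1) ≤ 1 / (n + 1) := by
          apply one_div_le_one_div_of_le (by positivity)
          exact_mod_cast by omega
        linarith))
      ⟨0, measure_ne_top _ _⟩
  have h2 : Tendsto (fun n : ℕ => ν (Set.Iio (a + 1 / (n + 1)))) atTop
      (𝓝 (ENNReal.ofReal (F a))) := by
    simp only [hν]
    have ha : Tendsto (fun n : ℕ => a + 1 / ((n:ℝ) + 1)) atTop (𝓝 a) := by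
      have := tendsto_one_div_add_atTop_nhds_zero_nat (𝕜 := ℝ)
      simpa using tendsto_const_nhds.add this
    exact (ENNReal.continuous_ofReal.tendsto _).comp ((hF.tendsto a).comp ha)
  exact tendsto_nhds_unique h1 h2

lemma nu_atom {F : ℝ → ℝ} (ν : Measure ℝ) [IsProbabilityMeasure ν] (hF : Continuous F)
    (hν : ∀ t, ν (Set.Iio t) = ENNReal.ofReal (F t)) (a : ℝ) : ν {a} = 0 := by
  have h : ν (Set.Iic a) = ν (Set.Iio a) + ν {a} := by
    rw [← Set.Iio_union_right]
    exact measure_union (by simp) (measurableSet_singleton a)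
  rw [nu_Iic ν hF hν, hν] at h
  have := measure_ne_top ν {a}
  nth_rewrite 1 [show ENNReal.ofReal (F a) = ENNReal.ofReal (F a) + 0 by simp] at h
  exact (ENNReal.add_right_inj ENNReal.ofReal_ne_top).mp h |>.symm

section core
variable {ι : Type*} [Fintype ι] [DecidableEq ι] (ν : Measure ℝ) [IsProbabilityMeasure ν]

lemma pair_law (a b : ι) (hab : a ≠ b) :
    (Measure.pi fun _ : ι => ν).map (fun y => (y a, y b)) = ν.prod ν := by
  classical
  symm
  apply Measure.prod_eq
  intro s t hs ht
  rw [Measure.map_apply ((measurable_pi_apply a).prodMk (measurable_pi_apply b)) (hs.prod ht)]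
  have hset : (fun y : ι → ℝ => (y a, y b)) ⁻¹' (s ×ˢ t)
      = Set.pi Set.univ (fun c => if c = a then s else if c = b then t else Set.univ) := by
    ext y
    simp only [Set.mem_preimage, Set.mem_prod, Set.mem_pi, Set.mem_univ, true_implies]
    constructor
    · rintro ⟨h1, h2⟩ c
      by_cases hca : c = a
      · simpa [hca] using h1
      · by_cases hcb : c = b <;> simp [hca, hcb, h2, Ne.symm hab]
    · intro h
      refine ⟨by simpa using h a, ?_⟩
      have := h b
      simpa [hab.symm, Ne.symm hab] using this
  rw [hset, Measure.pi_pi]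
  have hprod : ∏ c : ι, ν (if c = a then s else if c = b then t else Set.univ) = ν s * ν t := by
    rw [← Finset.mul_prod_erase Finset.univ _ (Finset.mem_univ a)]
    simp only [if_pos rfl]
    congr 1
    rw [← Finset.mul_prod_erase _ _ (Finset.mem_erase.mpr ⟨Ne.symm hab, Finset.mem_univ b⟩)]
    rw [if_neg (Ne.symm hab), if_pos rfl]
    have : ∀ c ∈ (Finset.univ.erase a).erase b,
        ν (if c = a then s else if c = b then t else Set.univ) = 1 := by
      intro c hc
      simp only [Finset.mem_erase] at hc
      simp [hc.1, hc.2.1, measure_univ]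
    rw [Finset.prod_congr rfl this]
    simp
  rw [hprod]

lemma diag_null (hatom : ∀ t : ℝ, ν {t} = 0) (a b : ι) (hab : a ≠ b) :
    (Measure.pi fun _ : ι => ν) {y | y a = y b} = 0 := by
  have h1 : {y : ι → ℝ | y a = y b} = (fun y : ι → ℝ => (y a, y b)) ⁻¹' {p : ℝ × ℝ | p.1 = p.2} := rfl
  have hmd : MeasurableSet {p : ℝ × ℝ | p.1 = p.2} :=
    measurableSet_eq_fun measurable_fst measurable_snd
  rw [h1, ← Measure.map_apply ((measurable_pi_apply a).prodMk (measurable_pi_apply b)) hmd,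
    pair_law ν a b hab, Measure.prod_apply hmd]
  have : ∀ x : ℝ, ν (Prod.mk x ⁻¹' {p : ℝ × ℝ | p.1 = p.2}) = 0 := by
    intro x
    have : Prod.mk x ⁻¹' {p : ℝ × ℝ | p.1 = p.2} = {x} := by
      ext y; simp [eq_comm]
    rw [this]; exact hatom x
  rw [lintegral_congr this]
  simp

lemma notinj_null (hatom : ∀ t : ℝ, ν {t} = 0) :
    (Measure.pi fun _ : ι => ν) {y | ¬ Function.Injective y} = 0 := by
  classical
  have hsub : {y : ι → ℝ | ¬ Function.Injective y}
      ⊆ ⋃ (a : ι) (b : ι) (_ : a ≠ b), {y : ι → ℝ | y a = y b} := by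
    intro y hy
    simp only [Set.mem_setOf_eq, Function.Injective] at hy
    push_neg at hy
    obtain ⟨a, b, hyab, hab⟩ := hy
    exact Set.mem_iUnion.mpr ⟨a, Set.mem_iUnion.mpr ⟨b, Set.mem_iUnion.mpr ⟨hab, hyab⟩⟩⟩
  refine measure_mono_null hsub ?_
  refine measure_iUnion_null fun a => measure_iUnion_null fun b => measure_iUnion_null fun hab =>
    diag_null ν hatom a b hab



/-- ordering event -/
def Oev (σ : Fin (Fintype.card ι) ≃ ι) : Set (ι → ℝ) := {y | StrictMono (fun i => y (σ i))}


lemma Oev_measurable (σ : Fin (Fintype.card ι) ≃ ι) : MeasurableSet (Oev σ) := by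
  have : Oev σ = ⋂ (i : Fin (Fintype.card ι)) (j : Fin (Fintype.card ι)) (_ : i < j),
      {y : ι → ℝ | y (σ i) < y (σ j)} := by
    ext y
    simp only [Oev, Set.mem_setOf_eq, Set.mem_iInter]
    exact ⟨fun h i j hij => h hij, fun h a b hab => h a b hab⟩
  rw [this]
  exact MeasurableSet.iInter fun i => MeasurableSet.iInter fun j => MeasurableSet.iInter fun _ =>
    measurableSet_lt (measurable_pi_apply _) (measurable_pi_apply _)

lemma Oev_subset_inj (σ : Fin (Fintype.card ι) ≃ ι) :
    Oev σ ⊆ {y : ι → ℝ | Function.Injective y} := by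
  intro y hy
  have hinj : Function.Injective (fun i => y (σ i)) := (hy : StrictMono _).injective
  intro a b hab
  have : σ (σ.symm a) = σ (σ.symm b) → False ∨ True := fun _ => Or.inr trivial
  have h2 := hinj (a₁ := σ.symm a) (a₂ := σ.symm b) (by simpa using hab)
  simpa using congrArg σ h2

lemma inj_subset_union :
    {y : ι → ℝ | Function.Injective y} ⊆ ⋃ σ : Fin (Fintype.card ι) ≃ ι, Oev σ := by
  intro y hy
  classical
  let e : Fin (Fintype.card ι) ≃ ι := (Fintype.equivFin ι).symm
  let f : Fin (Fintype.card ι) → ℝ := fun i => y (e i)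
  have hfinj : Function.Injective f := fun a b hab => e.injective (hy hab)
  let τ := Tuple.sort f
  have hmono : Monotone (f ∘ τ) := Tuple.monotone_sort f
  have hsm : StrictMono (f ∘ τ) :=
    hmono.strictMono_of_injective (hfinj.comp τ.injective)
  refine Set.mem_iUnion.mpr ⟨τ.trans e, ?_⟩
  exact hsm

lemma Oev_disjoint (σ σ' : Fin (Fintype.card ι) ≃ ι) (h : σ ≠ σ') :
    Disjoint (Oev σ) (Oev σ') := by
  rw [Set.disjoint_left]
  intro y hy hy'
  have h1 : StrictMono (fun i => y (σ i)) := hy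
  have h2 : StrictMono (fun i => y (σ' i)) := hy'
  have hr : Set.range (fun i => y (σ i)) = Set.range (fun i => y (σ' i)) := by
    have : ∀ τ : Fin (Fintype.card ι) ≃ ι, Set.range (fun i => y (τ i)) = Set.range y := by
      intro τ
      rw [show (fun i => y (τ i)) = y ∘ τ from rfl, Set.range_comp]
      rw [Set.range_eq_univ.mpr τ.surjective, Set.image_univ]
    rw [this σ, this σ']
  haveI : WellFoundedLT (Fin (Fintype.card ι)) := inferInstance
  have heq := (StrictMono.range_inj h1 h2).mp hr
  have hyinj : Function.Injective y := Oev_subset_inj σ hy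
  apply h
  ext i
  exact hyinj (congrFun heq i)



lemma pi_map_comp (e : ι ≃ ι) :
    (Measure.pi fun _ : ι => ν).map (fun y b => y (e b)) = Measure.pi fun _ : ι => ν := by
  have hm : Measurable (fun (y : ι → ℝ) (b : ι) => y (e b)) :=
    measurable_pi_lambda _ fun b => measurable_pi_apply (e b)
  symm
  apply Measure.pi_eq
  intro s hs
  rw [Measure.map_apply hm (MeasurableSet.univ_pi hs)]
  have hset : (fun (y : ι → ℝ) (b : ι) => y (e b)) ⁻¹' (Set.pi Set.univ s)
      = Set.pi Set.univ (fun c => s (e.symm c)) := by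
    ext y
    simp only [Set.mem_preimage, Set.mem_pi, Set.mem_univ, true_implies]
    constructor
    · intro h c
      have := h (e.symm c)
      simpa using this
    · intro h b
      have := h (e b)
      rwa [Equiv.symm_apply_apply] at this
  rw [hset, Measure.pi_pi]
  exact Equiv.prod_comp e.symm fun b => ν (s b)

lemma Oev_box_const (U : Set ℝ) (hU : MeasurableSet U)
    (σ σ' : Fin (Fintype.card ι) ≃ ι) (hOm : ∀ τ : Fin (Fintype.card ι) ≃ ι, MeasurableSet (Oev τ)) :
    (Measure.pi fun _ : ι => ν) (Oev σ ∩ {y | ∀ l, y l ∈ U})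
      = (Measure.pi fun _ : ι => ν) (Oev σ' ∩ {y | ∀ l, y l ∈ U}) := by
  classical
  set ρ := (Measure.pi fun _ : ι => ν)
  let e : ι ≃ ι := σ.symm.trans σ'
  have hm : Measurable (fun (y : ι → ℝ) (b : ι) => y (e b)) :=
    measurable_pi_lambda _ fun b => measurable_pi_apply (e b)
  have hbox : MeasurableSet {y : ι → ℝ | ∀ l, y l ∈ U} := by
    have : {y : ι → ℝ | ∀ l, y l ∈ U} = Set.pi Set.univ (fun _ => U) := by
      ext y; simp [Set.mem_pi]
    rw [this]; exact MeasurableSet.univ_pi fun _ => hU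
  have hpre : (fun (y : ι → ℝ) (b : ι) => y (e b)) ⁻¹' (Oev σ ∩ {y | ∀ l, y l ∈ U})
      = Oev σ' ∩ {y | ∀ l, y l ∈ U} := by
    ext y
    simp only [Set.mem_preimage, Set.mem_inter_iff, Oev, Set.mem_setOf_eq]
    constructor
    · rintro ⟨h1, h2⟩
      refine ⟨?_, fun l => by simpa using h2 (e.symm l)⟩
      have : ∀ i, y (e (σ i)) = y (σ' i) := fun i => by simp [e]
      simpa only [this] using h1
    · rintro ⟨h1, h2⟩
      refine ⟨?_, fun l => h2 (e l)⟩
      have : ∀ i, y (e (σ i)) = y (σ' i) := fun i => by simp [e]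
      simpa only [this] using h1
  calc ρ (Oev σ ∩ {y | ∀ l, y l ∈ U})
      = ρ.map (fun y b => y (e b)) (Oev σ ∩ {y | ∀ l, y l ∈ U}) := by
        rw [pi_map_comp]
    _ = ρ ((fun (y : ι → ℝ) (b : ι) => y (e b)) ⁻¹' (Oev σ ∩ {y | ∀ l, y l ∈ U})) := by
        rw [Measure.map_apply hm ((hOm σ).inter hbox)]
    _ = ρ (Oev σ' ∩ {y | ∀ l, y l ∈ U}) := by rw [hpre]

lemma sum_Oev_box (hatom : ∀ t : ℝ, ν {t} = 0) (U : Set ℝ) (hU : MeasurableSet U)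
    (hOm : ∀ τ : Fin (Fintype.card ι) ≃ ι, MeasurableSet (Oev τ)) :
    ∑ σ : Fin (Fintype.card ι) ≃ ι, (Measure.pi fun _ : ι => ν) (Oev σ ∩ {y | ∀ l, y l ∈ U})
      = (ν U) ^ (Fintype.card ι) := by
  classical
  set ρ := (Measure.pi fun _ : ι => ν) with hρ
  have hbox : MeasurableSet {y : ι → ℝ | ∀ l, y l ∈ U} := by
    have : {y : ι → ℝ | ∀ l, y l ∈ U} = Set.pi Set.univ (fun _ => U) := by
      ext y; simp [Set.mem_pi]
    rw [this]; exact MeasurableSet.univ_pi fun _ => hU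
  have hdisj : Pairwise (Function.onFun Disjoint fun σ : Fin (Fintype.card ι) ≃ ι =>
      Oev σ ∩ {y : ι → ℝ | ∀ l, y l ∈ U}) := by
    intro σ σ' hne
    exact (Oev_disjoint σ σ' hne).mono Set.inter_subset_left Set.inter_subset_left
  have hsum : ρ (⋃ σ : Fin (Fintype.card ι) ≃ ι, (Oev σ ∩ {y | ∀ l, y l ∈ U}))
      = ∑ σ : Fin (Fintype.card ι) ≃ ι, ρ (Oev σ ∩ {y | ∀ l, y l ∈ U}) := by
    rw [measure_iUnion hdisj (fun σ => (hOm σ).inter hbox), tsum_fintype]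
  rw [← hsum]
  have hunion : (⋃ σ : Fin (Fintype.card ι) ≃ ι, (Oev σ ∩ {y | ∀ l, y l ∈ U}))
      = {y : ι → ℝ | ∀ l, y l ∈ U} \ {y | ¬ Function.Injective y} := by
    ext y
    simp only [Set.mem_iUnion, Set.mem_inter_iff, Set.mem_diff, Set.mem_setOf_eq, not_not]
    constructor
    · rintro ⟨σ, h1, h2⟩
      exact ⟨h2, Oev_subset_inj σ h1⟩
    · rintro ⟨h2, h1⟩
      obtain ⟨σ, hσ⟩ := Set.mem_iUnion.mp (inj_subset_union h1)
      exact ⟨σ, hσ, h2⟩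
  rw [hunion, measure_diff_null (notinj_null ν hatom)]
  have : {y : ι → ℝ | ∀ l, y l ∈ U} = Set.pi Set.univ (fun _ => U) := by
    ext y; simp [Set.mem_pi]
  rw [this, Measure.pi_pi]
  simp [Finset.prod_const]

theorem pattern_measure (hatom : ∀ t : ℝ, ν {t} = 0)
    (P : Set (ι → ℝ)) (hPm : MeasurableSet P)
    (hP : ∀ y z : ι → ℝ, (∀ a b : ι, (y a < y b ↔ z a < z b)) → (y ∈ P ↔ z ∈ P))
    (x : ℝ) :
    (Measure.pi fun _ : ι => ν) (P ∩ {y | ∀ l, y l < x})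
      = (Measure.pi fun _ : ι => ν) P * (ν (Set.Iio x)) ^ (Fintype.card ι) := by
  classical
  set n := Fintype.card ι with hn
  set ρ := (Measure.pi fun _ : ι => ν) with hρ
  have hOm : ∀ τ : Fin n ≃ ι, MeasurableSet (Oev τ) := fun τ => Oev_measurable τ
  -- canonical representative of the order type of σ
  let yrep : (Fin n ≃ ι) → (ι → ℝ) := fun σ a => ((σ.symm a : Fin n) : ℕ)
  have hPOev : ∀ (σ : Fin n ≃ ι) (y : ι → ℝ), y ∈ Oev σ → (y ∈ P ↔ yrep σ ∈ P) := by
    intro σ y hy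
    apply hP
    intro a b
    have h1 : y a < y b ↔ σ.symm a < σ.symm b := by
      have hsm : StrictMono (fun i => y (σ i)) := hy
      conv_lhs => rw [show y a = y (σ (σ.symm a)) by simp, show y b = y (σ (σ.symm b)) by simp]
      exact hsm.lt_iff_lt
    have h2 : yrep σ a < yrep σ b ↔ σ.symm a < σ.symm b := by
      simp only [yrep]
      rw [Nat.cast_lt]
      exact Fin.lt_def.symm
    rw [h1, h2]
  let T : Finset (Fin n ≃ ι) := Finset.univ.filter (fun σ => yrep σ ∈ P)
  let σ₀ : Fin n ≃ ι := (Fintype.equivFin ι).symm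
  have hbox : ∀ U : Set ℝ, MeasurableSet U → MeasurableSet {y : ι → ℝ | ∀ l, y l ∈ U} := by
    intro U hU
    have : {y : ι → ℝ | ∀ l, y l ∈ U} = Set.pi Set.univ (fun _ => U) := by
      ext y; simp [Set.mem_pi]
    rw [this]; exact MeasurableSet.univ_pi fun _ => hU
  have hdecomp : ∀ U : Set ℝ, MeasurableSet U →
      ρ (P ∩ {y | ∀ l, y l ∈ U}) = T.card * ρ (Oev σ₀ ∩ {y | ∀ l, y l ∈ U}) := by
    intro U hU
    have hstep : (P ∩ {y : ι → ℝ | ∀ l, y l ∈ U}) \ {y : ι → ℝ | ¬ Function.Injective y}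
        = ⋃ σ ∈ T, (Oev σ ∩ {y | ∀ l, y l ∈ U}) := by
      ext y
      simp only [Set.mem_diff, Set.mem_inter_iff, Set.mem_setOf_eq, not_not, Set.mem_iUnion,
        T, Finset.mem_filter, Finset.mem_univ, true_and]
      constructor
      · rintro ⟨⟨hyP, hyU⟩, hyinj⟩
        obtain ⟨σ, hσ⟩ := Set.mem_iUnion.mp (inj_subset_union hyinj)
        exact ⟨σ, (hPOev σ y hσ).mp hyP, hσ, hyU⟩
      · rintro ⟨σ, hσT, hσ, hyU⟩
        exact ⟨⟨(hPOev σ y hσ).mpr hσT, hyU⟩, Oev_subset_inj σ hσ⟩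
    have h1 : ρ (P ∩ {y | ∀ l, y l ∈ U})
        = ρ ((P ∩ {y : ι → ℝ | ∀ l, y l ∈ U}) \ {y : ι → ℝ | ¬ Function.Injective y}) :=
      (measure_diff_null (notinj_null ν hatom)).symm
    rw [h1, hstep, measure_biUnion_finset ?hd ?hm]
    case hd =>
      intro σ hσ σ' hσ' hne
      exact (Oev_disjoint σ σ' hne).mono Set.inter_subset_left Set.inter_subset_left
    case hm =>
      intro σ _
      exact (hOm σ).inter (hbox U hU)
    rw [Finset.sum_congr rfl (fun σ _ => Oev_box_const ν U hU σ σ₀ hOm)]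
    rw [Finset.sum_const, nsmul_eq_mul]
  have hK : ∀ U : Set ℝ, MeasurableSet U →
      (Fintype.card (Fin n ≃ ι) : ℝ≥0∞) * ρ (Oev σ₀ ∩ {y | ∀ l, y l ∈ U}) = (ν U) ^ n := by
    intro U hU
    have := sum_Oev_box ν hatom U hU hOm
    rw [Finset.sum_congr rfl (fun σ _ => Oev_box_const ν U hU σ σ₀ hOm)] at this
    rw [Finset.sum_const, nsmul_eq_mul, Finset.card_univ] at this
    exact this
  have hbx : {y : ι → ℝ | ∀ l, y l < x} = {y : ι → ℝ | ∀ l, y l ∈ Set.Iio x} := rfl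
  have h1 := hdecomp (Set.Iio x) measurableSet_Iio
  have h2 := hdecomp Set.univ MeasurableSet.univ
  have huniv : {y : ι → ℝ | ∀ l, y l ∈ Set.univ} = Set.univ := by ext y; simp
  rw [huniv, Set.inter_univ, Set.inter_univ] at h2
  rw [hbx, h1, h2]
  set K : ℝ≥0∞ := (Fintype.card (Fin n ≃ ι) : ℝ≥0∞) with hKdef
  have hK0 : K ≠ 0 := by
    have : Nonempty (Fin n ≃ ι) := ⟨σ₀⟩
    simp [hKdef, Fintype.card_ne_zero]
  have hKtop : K ≠ ∞ := ENNReal.natCast_ne_top _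
  have hKx := hK (Set.Iio x) measurableSet_Iio
  have hKu := hK Set.univ MeasurableSet.univ
  rw [measure_univ, one_pow, huniv, Set.inter_univ] at hKu
  apply (ENNReal.mul_right_inj hK0 hKtop).mp
  calc K * ((T.card : ℝ≥0∞) * ρ (Oev σ₀ ∩ {y | ∀ l, y l ∈ Set.Iio x}))
      = (T.card : ℝ≥0∞) * (K * ρ (Oev σ₀ ∩ {y | ∀ l, y l ∈ Set.Iio x})) := by ring
    _ = (T.card : ℝ≥0∞) * (ν (Set.Iio x)) ^ n := by rw [hKx]
    _ = (T.card : ℝ≥0∞) * ((K * ρ (Oev σ₀)) * (ν (Set.Iio x)) ^ n) := by rw [hKu, one_mul]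
    _ = K * ((T.card : ℝ≥0∞) * ρ (Oev σ₀) * (ν (Set.Iio x)) ^ n) := by ring

end core

/-- Distribution of the first record value along a compatible subsequence in which
`|C (nseq t)| + 1 = nseq t` (e.g. total comparison). With
`B j = {L(1) = nseq j}` the event that the first record along the subsequence
occurs at index `nseq j`,
`P(X_{L(1)} < x) = ∑_j P(L(1) = nseq j) · F(x) ^ (nseq j)`. -/
theorem first_record_value_distribution
    {Ω : Type*} [MeasurableSpace Ω] (μ : Measure Ω) [IsProbabilityMeasure μ]
    (X : ℕ → Ω → ℝ) (hmeas : ∀ i, Measurable (X i))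
    (hindep : iIndepFun X μ)
    (F : ℝ → ℝ) (hF : Continuous F) (hF0 : ∀ x, 0 ≤ F x)
    (hcdf : ∀ i x, μ {ω | X i ω < x} = ENNReal.ofReal (F x))
    (nseq : ℕ → ℕ) (hmono : StrictMono nseq) (hone : ∀ t, 1 ≤ nseq t)
    (C : ℕ → Finset ℕ)
    (hsub : ∀ t, C (nseq t) ⊆ Finset.Icc 1 (nseq t - 1))
    (ha1 : ∀ t, C (nseq t) ⊂ C (nseq (t + 1)))
    (ha2 : ∀ t, nseq t ∈ C (nseq (t + 1)))
    (hc : ∀ t, (C (nseq t)).card + 1 = nseq t)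
    (A : ℕ → Set Ω)
    (hA : ∀ n, A n = {ω | ∀ l ∈ C n, X l ω < X n ω})
    (B : ℕ → Set Ω)
    (hB : ∀ j, B j = (⋂ t ∈ Finset.range j, (A (nseq t))ᶜ) ∩ A (nseq j))
    (x : ℝ) :
    μ (⋃ j, B j ∩ {ω | X (nseq j) ω < x})
      = ∑' j, μ (B j) * ENNReal.ofReal (F x ^ (nseq j)) := by
  classical
  set ν : Measure ℝ := μ.map (X 0) with hνdef
  have hprob : ∀ k, IsProbabilityMeasure (μ.map (X k)) :=
    fun k => Measure.isProbabilityMeasure_map (hmeas k).aemeasurable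
  have hIio : ∀ k t, (μ.map (X k)) (Set.Iio t) = ENNReal.ofReal (F t) := by
    intro k t
    rw [Measure.map_apply (hmeas k) measurableSet_Iio]
    exact hcdf k t
  haveI : IsProbabilityMeasure ν := hprob 0
  have hνi : ∀ i, μ.map (X i) = ν := by
    intro i
    haveI := hprob i
    apply Measure.ext_of_Iic
    intro a
    rw [nu_Iic _ hF (hIio i), nu_Iic _ hF (hIio 0)]
  have hνIio : ∀ t, ν (Set.Iio t) = ENNReal.ofReal (F t) := hIio 0
  have hatom : ∀ t : ℝ, ν {t} = 0 := nu_atom ν hF hνIio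
  have hAm : ∀ n, MeasurableSet (A n) := by
    intro n
    rw [hA n]
    have : {ω | ∀ l ∈ C n, X l ω < X n ω} = ⋂ l ∈ C n, {ω | X l ω < X n ω} := by
      ext ω; simp
    rw [this]
    exact MeasurableSet.biInter (Set.to_countable _)
      fun l _ => measurableSet_lt (hmeas l) (hmeas n)
  have hBm : ∀ j, MeasurableSet (B j) := by
    intro j
    rw [hB j]
    exact MeasurableSet.inter
      (MeasurableSet.biInter (Set.to_countable _) fun t _ => (hAm _).compl) (hAm _)
  have hCmono : ∀ t k, t ≤ k → C (nseq t) ⊆ C (nseq k) := by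
    intro t k h
    induction k with
    | zero =>
      have : t = 0 := Nat.le_zero.mp h
      subst this; exact Finset.Subset.refl _
    | succ k ih =>
      rcases Nat.lt_or_ge t (k + 1) with h'|h'
      · exact (ih (Nat.lt_succ_iff.mp h')).trans (ha1 k).subset
      · have : t = k + 1 := le_antisymm h h'
        subst this; exact Finset.Subset.refl _
  have hCin : ∀ t k, t < k → nseq t ∈ C (nseq k) :=
    fun t k h => hCmono (t + 1) k h (ha2 t)
  have key : ∀ j, μ (B j ∩ {ω | X (nseq j) ω < x})
      = μ (B j) * ENNReal.ofReal (F x ^ nseq j) := by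
    intro j
    set S : Finset ℕ := insert (nseq j) (C (nseq j)) with hSdef
    have hnotmem : nseq j ∉ C (nseq j) := by
      intro hmem
      have h1 := Finset.mem_Icc.mp (hsub j hmem)
      have h2 := hone j
      omega
    have hcard : S.card = nseq j := by
      rw [hSdef, Finset.card_insert_of_notMem hnotmem]
      have := hc j
      omega
    have hCS : C (nseq j) ⊆ S := Finset.subset_insert _ _
    have hCtS : ∀ t, t ≤ j → C (nseq t) ⊆ S := fun t ht => (hCmono t j ht).trans hCS
    have hnjS : nseq j ∈ S := Finset.mem_insert_self _ _
    have hntS : ∀ t, t ≤ j → nseq t ∈ S := by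
      intro t ht
      rcases eq_or_lt_of_le ht with rfl|h
      · exact hnjS
      · exact hCS (hCin t j h)
    let Y : Ω → ({i // i ∈ S} → ℝ) := fun ω l => X l.1 ω
    have hYm : Measurable Y := measurable_pi_lambda _ fun l => hmeas l.1
    let ext : ({i // i ∈ S} → ℝ) → ℕ → ℝ := fun y i => if h : i ∈ S then y ⟨i, h⟩ else 0
    have hexti : ∀ (y : {i // i ∈ S} → ℝ) (i : ℕ) (h : i ∈ S), ext y i = y ⟨i, h⟩ := by
      intro y i h; simp [ext, h]
    have hextY : ∀ (ω : Ω) (i : ℕ), i ∈ S → ext (Y ω) i = X i ω := by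
      intro ω i h; rw [hexti (Y ω) i h]
    let P : Set ({i // i ∈ S} → ℝ) :=
      {y | (∀ t ∈ Finset.range j, ¬ (∀ l ∈ C (nseq t), ext y l < ext y (nseq t)))
        ∧ (∀ l ∈ C (nseq j), ext y l < ext y (nseq j))}
    have hmemA : ∀ (ω : Ω) (t : ℕ), t ≤ j →
        (ω ∈ A (nseq t) ↔ ∀ l ∈ C (nseq t), ext (Y ω) l < ext (Y ω) (nseq t)) := by
      intro ω t ht
      rw [hA (nseq t)]
      simp only [Set.mem_setOf_eq]
      apply forall₂_congr
      intro l hl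
      rw [hextY ω l (hCtS t ht hl), hextY ω (nseq t) (hntS t ht)]
    have hBY : B j = Y ⁻¹' P := by
      rw [hB j]
      ext ω
      simp only [Set.mem_inter_iff, Set.mem_iInter, Set.mem_compl_iff, Set.mem_preimage,
        P, Set.mem_setOf_eq]
      constructor
      · rintro ⟨h1, h2⟩
        exact ⟨fun t ht h => (h1 t ht) ((hmemA ω t (Nat.lt_succ_iff.mp
            (Nat.lt_succ_of_lt (Finset.mem_range.mp ht)))).mpr h),
          (hmemA ω j le_rfl).mp h2⟩
      · rintro ⟨h1, h2⟩
        refine ⟨fun t ht h => h1 t ht ((hmemA ω t (le_of_lt (Finset.mem_range.mp ht))).mp h),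
          (hmemA ω j le_rfl).mpr h2⟩
    have hBxY : B j ∩ {ω | X (nseq j) ω < x}
        = Y ⁻¹' (P ∩ {y | ∀ l, y l < x}) := by
      rw [Set.preimage_inter, ← hBY]
      ext ω
      simp only [Set.mem_inter_iff, Set.mem_preimage, Set.mem_setOf_eq]
      constructor
      · rintro ⟨h1, h2⟩
        refine ⟨h1, fun l => ?_⟩
        have hl' : l.1 ∈ insert (nseq j) (C (nseq j)) := l.2
        rcases Finset.mem_insert.mp hl' with heq|hmem
        · have hx1 : X l.1 ω = X (nseq j) ω := by rw [heq]
          show X l.1 ω < x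
          rw [hx1]; exact h2
        · have hA2 : ω ∈ A (nseq j) := by rw [hB j] at h1; exact h1.2
          rw [hA (nseq j)] at hA2
          have := hA2 l.1 hmem
          calc X l.1 ω < X (nseq j) ω := this
            _ < x := h2
      · rintro ⟨h1, h2⟩
        exact ⟨h1, h2 ⟨nseq j, hnjS⟩⟩
    have hextm : ∀ i : ℕ, Measurable (fun y : {i // i ∈ S} → ℝ => ext y i) := by
      intro i
      by_cases h : i ∈ S
      · simpa [ext, h] using measurable_pi_apply (⟨i, h⟩ : {i // i ∈ S})
      · simpa [ext, h] using measurable_const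
    have hPm : MeasurableSet P := by
      have hP1 : ∀ t : ℕ, MeasurableSet {y : {i // i ∈ S} → ℝ |
          ∀ l ∈ C (nseq t), ext y l < ext y (nseq t)} := by
        intro t
        have : {y : {i // i ∈ S} → ℝ | ∀ l ∈ C (nseq t), ext y l < ext y (nseq t)}
            = ⋂ l ∈ C (nseq t), {y | ext y l < ext y (nseq t)} := by
          ext y; simp
        rw [this]
        exact MeasurableSet.biInter (Set.to_countable _)
          fun l _ => measurableSet_lt (hextm l) (hextm (nseq t))
      have : P = (⋂ t ∈ Finset.range j, ({y : {i // i ∈ S} → ℝ |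
          ∀ l ∈ C (nseq t), ext y l < ext y (nseq t)})ᶜ)
          ∩ {y | ∀ l ∈ C (nseq j), ext y l < ext y (nseq j)} := by
        ext y
        simp only [P, Set.mem_setOf_eq, Set.mem_inter_iff, Set.mem_iInter, Set.mem_compl_iff]
      rw [this]
      exact MeasurableSet.inter
        (MeasurableSet.biInter (Set.to_countable _) fun t _ => (hP1 t).compl) (hP1 j)
    have hPinv : ∀ y z : {i // i ∈ S} → ℝ,
        (∀ a b : {i // i ∈ S}, (y a < y b ↔ z a < z b)) → (y ∈ P ↔ z ∈ P) := by
      intro y z hyz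
      have hyz' : ∀ t, t ≤ j → ∀ l ∈ C (nseq t),
          (ext y l < ext y (nseq t) ↔ ext z l < ext z (nseq t)) := by
        intro t ht l hl
        rw [hexti y l (hCtS t ht hl), hexti y (nseq t) (hntS t ht),
          hexti z l (hCtS t ht hl), hexti z (nseq t) (hntS t ht)]
        exact hyz _ _
      simp only [P, Set.mem_setOf_eq]
      apply and_congr
      · apply forall₂_congr
        intro t ht
        apply not_congr
        apply forall₂_congr
        intro l hl
        exact hyz' t (le_of_lt (Finset.mem_range.mp ht)) l hl
      · apply forall₂_congr
        intro l hl
        exact hyz' j le_rfl l hl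
    have hlaw : μ.map Y = Measure.pi (fun _ : {i // i ∈ S} => ν) := by
      symm
      apply Measure.pi_eq
      intro s hs
      rw [Measure.map_apply hYm (MeasurableSet.univ_pi hs)]
      set s' : ℕ → Set ℝ := fun i => if h : i ∈ S then s ⟨i, h⟩ else Set.univ with hs'def
      have hs'm : ∀ i, MeasurableSet (s' i) := by
        intro i
        by_cases h : i ∈ S
        · simpa [hs'def, h] using hs ⟨i, h⟩
        · simp [hs'def, h]
      have hpre : Y ⁻¹' (Set.pi Set.univ s) = ⋂ i ∈ S, X i ⁻¹' (s' i) := by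
        ext ω
        simp only [Set.mem_preimage, Set.mem_pi, Set.mem_univ, true_implies, Set.mem_iInter]
        constructor
        · intro h i hi
          have := h ⟨i, hi⟩
          simp only [hs'def, dif_pos hi]
          exact this
        · intro h l
          have := h l.1 l.2
          simp only [hs'def, dif_pos l.2] at this
          exact this
      rw [hpre, hindep.measure_inter_preimage_eq_mul S (fun i _ => hs'm i)]
      have hXis : ∀ i ∈ S, μ (X i ⁻¹' s' i) = ν (s' i) := by
        intro i _
        rw [← Measure.map_apply (hmeas i) (hs'm i), hνi i]
      rw [Finset.prod_congr rfl hXis]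
      rw [← Finset.prod_coe_sort S (fun i => ν (s' i))]
      apply Finset.prod_congr rfl
      intro l _
      congr 1
      simp [hs'def, dif_pos l.2]
    have hboxm : MeasurableSet {y : {i // i ∈ S} → ℝ | ∀ l, y l < x} := by
      have : {y : {i // i ∈ S} → ℝ | ∀ l, y l < x}
          = Set.pi Set.univ (fun _ => Set.Iio x) := by
        ext y; simp [Set.mem_pi]
      rw [this]
      exact MeasurableSet.univ_pi fun _ => measurableSet_Iio
    have hcardι : Fintype.card {i // i ∈ S} = nseq j := by
      rw [Fintype.card_coe]; exact hcard
    calc μ (B j ∩ {ω | X (nseq j) ω < x})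
        = (μ.map Y) (P ∩ {y | ∀ l, y l < x}) := by
          rw [Measure.map_apply hYm (hPm.inter hboxm), ← hBxY]
      _ = (Measure.pi fun _ : {i // i ∈ S} => ν) (P ∩ {y | ∀ l, y l < x}) := by rw [hlaw]
      _ = (Measure.pi fun _ : {i // i ∈ S} => ν) P
            * (ν (Set.Iio x)) ^ (Fintype.card {i // i ∈ S}) :=
          pattern_measure ν hatom P hPm hPinv x
      _ = μ (B j) * ENNReal.ofReal (F x ^ nseq j) := by
          rw [hBY, ← Measure.map_apply hYm hPm, hlaw, hνIio, hcardι,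
            ← ENNReal.ofReal_pow (hF0 x)]
  have hdisjB : ∀ i j, i < j → Disjoint (B i) (B j) := by
    intro i j hij
    rw [Set.disjoint_left]
    intro ω hωi hωj
    rw [hB i] at hωi
    rw [hB j] at hωj
    have h1 : ω ∈ A (nseq i) := hωi.2
    have h2 : ω ∉ A (nseq i) := by
      have := hωj.1
      rw [Set.mem_iInter₂] at this
      exact this i (Finset.mem_range.mpr hij)
    exact h2 h1
  have hdisj : Pairwise (Function.onFun Disjoint fun j => B j ∩ {ω | X (nseq j) ω < x}) := by
    intro i j hij
    rcases lt_or_gt_of_ne hij with h|h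
    · exact (hdisjB i j h).mono Set.inter_subset_left Set.inter_subset_left
    · exact ((hdisjB j i h).symm).mono Set.inter_subset_left Set.inter_subset_left
  rw [measure_iUnion hdisj
    (fun j => (hBm j).inter (measurableSet_lt (hmeas _) measurable_const))]
  exact tsum_congr key
end

section
/- Let X_1, X_2, ... be i.i.d. with continuous cdf F and classical records (total comparison). For every r ≥ 1 and x ∈ ℝ, P(X_{L(r)} < x) = E[F(x)^{L(r)}], where L(r) is the index of the r-th record. -/
open MeasureTheory ProbabilityTheory
open scoped ENNReal

namespace RecordThm

open Set

variable {n : ℕ}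

/-- The chamber of tuples whose strict-order pattern is given by `σ`. -/
def chamber (σ : Equiv.Perm (Fin n)) : Set (Fin n → ℝ) :=
  {v | ∀ i j, v i < v j ↔ σ.symm i < σ.symm j}

def ties (n : ℕ) : Set (Fin n → ℝ) := {v | ∃ i j : Fin n, i ≠ j ∧ v i = v j}

def box (n : ℕ) (x : ℝ) : Set (Fin n → ℝ) := {v | ∀ i, v i < x}

/-- pattern-determined sets -/
def patternDet (B : Set (Fin n → ℝ)) : Prop :=
  ∀ v w : Fin n → ℝ, (∀ i j, v i < v j ↔ w i < w j) → v ∈ B → w ∈ B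

lemma measurableSet_chamber (σ : Equiv.Perm (Fin n)) : MeasurableSet (chamber σ) := by
  have h : chamber σ = ⋂ (i : Fin n) (j : Fin n),
      (if σ.symm i < σ.symm j then {v : Fin n → ℝ | v i < v j}
        else {v : Fin n → ℝ | v i < v j}ᶜ) := by
    ext v
    simp only [chamber, mem_setOf_eq, mem_iInter]
    refine forall_congr' fun i => forall_congr' fun j => ?_
    split_ifs with h
    · simp [h]
    · simp [h]
  rw [h]
  refine MeasurableSet.iInter fun i => MeasurableSet.iInter fun j => ?_
  split_ifs
  · exact measurableSet_lt (measurable_pi_apply i) (measurable_pi_apply j)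
  · exact (measurableSet_lt (measurable_pi_apply i) (measurable_pi_apply j)).compl

lemma measurableSet_box (x : ℝ) : MeasurableSet (box n x) := by
  have h : box n x = ⋂ i : Fin n, {v : Fin n → ℝ | v i < x} := by
    ext v; simp [box]
  rw [h]
  exact MeasurableSet.iInter fun i =>
    measurableSet_lt (measurable_pi_apply i) measurable_const

lemma measurable_compPerm (σ : Equiv.Perm (Fin n)) :
    Measurable (fun v : Fin n → ℝ => v ∘ σ) :=
  measurable_pi_lambda _ fun _ => measurable_pi_apply _

lemma measurePreserving_compPerm (ν : Measure ℝ) [IsProbabilityMeasure ν]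
    (σ : Equiv.Perm (Fin n)) :
    MeasurePreserving (fun v : Fin n → ℝ => v ∘ σ)
      (Measure.pi fun _ => ν) (Measure.pi fun _ => ν) := by
  refine ⟨measurable_compPerm σ, ?_⟩
  refine (Measure.pi_eq fun s hs => ?_).symm
  rw [Measure.map_apply (measurable_compPerm σ) (MeasurableSet.univ_pi hs)]
  have h : (fun v : Fin n → ℝ => v ∘ σ) ⁻¹' (univ.pi s)
      = univ.pi (fun j => s (σ.symm j)) := by
    ext v
    simp only [mem_preimage, mem_univ_pi, Function.comp_apply]
    constructor
    · intro h j
      simpa using h (σ.symm j)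
    · intro h i
      simpa using h (σ i)
  rw [h, Measure.pi_pi]
  exact Equiv.prod_comp σ.symm (fun j => ν (s j))

lemma compPerm_preimage_chamber (σ τ : Equiv.Perm (Fin n)) :
    (fun v : Fin n → ℝ => v ∘ σ) ⁻¹' chamber τ = chamber (σ * τ) := by
  ext v
  simp only [chamber, mem_preimage, mem_setOf_eq, Function.comp_apply]
  have hsymm : ∀ k : Fin n, (σ * τ).symm k = τ.symm (σ.symm k) := fun k => rfl
  constructor
  · intro h i j
    have := h (σ.symm i) (σ.symm j)
    simpa [hsymm] using this
  · intro h i j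
    have := h (σ i) (σ j)
    simpa [hsymm] using this

lemma compPerm_preimage_box (σ : Equiv.Perm (Fin n)) (x : ℝ) :
    (fun v : Fin n → ℝ => v ∘ σ) ⁻¹' box n x = box n x := by
  ext v
  simp only [box, mem_preimage, mem_setOf_eq, Function.comp_apply]
  exact ⟨fun h i => by simpa using h (σ.symm i), fun h i => h (σ i)⟩

lemma perm_eq_of_mem_chamber {σ τ : Equiv.Perm (Fin n)} {v : Fin n → ℝ}
    (hσ : v ∈ chamber σ) (hτ : v ∈ chamber τ) : σ = τ := by
  have hf : StrictMono (fun a => σ.symm (τ a)) := by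
    intro a b hab
    have h1 : v (τ a) < v (τ b) := (hτ (τ a) (τ b)).2 (by simpa using hab)
    exact (hσ (τ a) (τ b)).1 h1
  have hsurj : Function.Surjective (fun a => σ.symm (τ a)) :=
    (σ.symm.surjective).comp τ.surjective
  have hid : (fun a => σ.symm (τ a)) = id := by
    haveI inst : WellFoundedLT (Fin n) := inferInstance
    have h := @StrictMono.range_inj (Fin n) (Fin n) inferInstance inferInstance inst
      _ id hf strictMono_id
    exact h.1 (by rw [hsurj.range_eq, Set.range_id])
  ext a
  have h1 : σ.symm (τ a) = a := congrFun hid a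
  have h2 : τ a = σ a := by
    have := congrArg σ h1
    simpa using this
  exact congrArg Fin.val h2.symm

lemma chamber_subset_compl_ties (σ : Equiv.Perm (Fin n)) : chamber σ ⊆ (ties n)ᶜ := by
  intro v hv ⟨i, j, hij, hvij⟩
  rcases lt_trichotomy (σ.symm i) (σ.symm j) with h | h | h
  · exact absurd ((hv i j).2 h) (by simp [hvij])
  · exact hij (by simpa using σ.symm.injective h)
  · exact absurd ((hv j i).2 h) (by simp [hvij])

lemma mem_chamber_sort {v : Fin n → ℝ} (hv : v ∉ ties n) : v ∈ chamber (Tuple.sort v) := by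
  have hinj : Function.Injective v := by
    intro a b hab
    by_contra h
    exact hv ⟨a, b, h, hab⟩
  have hsm : StrictMono (v ∘ Tuple.sort v) :=
    (Tuple.monotone_sort v).strictMono_of_injective (hinj.comp (Equiv.injective _))
  intro i j
  have h1 : v i = (v ∘ Tuple.sort v) ((Tuple.sort v).symm i) := by simp
  have h2 : v j = (v ∘ Tuple.sort v) ((Tuple.sort v).symm j) := by simp
  rw [h1, h2]
  exact hsm.lt_iff_lt

lemma ties_null (ν : Measure ℝ) [IsProbabilityMeasure ν] [NullSingletonClass ν] :
    Measure.pi (fun _ : Fin n => ν) (ties n) = 0 := by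
  classical
  set π := Measure.pi (fun _ : Fin n => ν) with hπ
  have key : ∀ i j : Fin n, i ≠ j → π {v : Fin n → ℝ | v i = v j} = 0 := by
    intro i j hij
    set w : (Fin n → ℝ) → ℝ × ℝ := fun v => (v i, v j) with hw
    have hwm : Measurable w := (measurable_pi_apply i).prodMk (measurable_pi_apply j)
    have hmap : ν.prod ν = π.map w := by
      refine Measure.prod_eq fun s t hs ht => ?_
      rw [Measure.map_apply hwm (hs.prod ht)]
      have hpre : w ⁻¹' (s ×ˢ t)
          = univ.pi (fun k => if k = i then s else if k = j then t else univ) := by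
        ext v
        simp only [hw, mem_preimage, mem_prod, mem_univ_pi]
        constructor
        · intro ⟨h1, h2⟩ k
          split_ifs with hk1 hk2
          · rwa [hk1]
          · rwa [hk2]
          · trivial
        · intro h
          refine ⟨?_, ?_⟩
          · have := h i; rwa [if_pos rfl] at this
          · have := h j
            rwa [if_neg (fun hh => hij hh.symm), if_pos rfl] at this
      rw [hpre, Measure.pi_pi]
      have hfac : ∀ k : Fin n,
          ν (if k = i then s else if k = j then t else univ)
            = (if k = i then ν s else 1) * (if k = j then ν t else 1) := by
        intro k
        split_ifs with h1 h2
        · exact absurd (h1 ▸ h2 : i = j) hij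
        · simp
        · simp
        · simp
      rw [Finset.prod_congr rfl (fun k _ => hfac k), Finset.prod_mul_distrib,
        Finset.prod_ite_eq' Finset.univ i (fun _ => ν s),
        Finset.prod_ite_eq' Finset.univ j (fun _ => ν t)]
      simp
    have hdiag : MeasurableSet {p : ℝ × ℝ | p.1 = p.2} :=
      measurableSet_eq_fun measurable_fst measurable_snd
    have heq : {v : Fin n → ℝ | v i = v j} = w ⁻¹' {p : ℝ × ℝ | p.1 = p.2} := rfl
    rw [heq, ← Measure.map_apply hwm hdiag, ← hmap, Measure.prod_apply hdiag]
    have hslice : ∀ a : ℝ, ν (Prod.mk a ⁻¹' {p : ℝ × ℝ | p.1 = p.2}) = 0 := by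
      intro a
      have : Prod.mk a ⁻¹' {p : ℝ × ℝ | p.1 = p.2} = {a} := by
        ext b; simp [eq_comm]
      rw [this]
      exact measure_singleton a
    simp [hslice]
  have hsub : ties n ⊆ ⋃ (i : Fin n) (j : Fin n) (_ : i ≠ j), {v : Fin n → ℝ | v i = v j} := by
    rintro v ⟨i, j, hij, hv⟩
    exact mem_iUnion.2 ⟨i, mem_iUnion.2 ⟨j, mem_iUnion.2 ⟨hij, hv⟩⟩⟩
  refine measure_mono_null hsub ?_
  refine measure_iUnion_null fun i => measure_iUnion_null fun j => ?_
  by_cases h : i = j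
  · simp [h]
  · simpa [h] using key i j h

open scoped Classical in
lemma measure_patternDet_inter (ν : Measure ℝ) [IsProbabilityMeasure ν] [NullSingletonClass ν]
    {B : Set (Fin n → ℝ)} (hB : patternDet B) {D : Set (Fin n → ℝ)} (hD : MeasurableSet D)
    (hDinv : ∀ σ : Equiv.Perm (Fin n), (fun v : Fin n → ℝ => v ∘ σ) ⁻¹' D = D) :
    Measure.pi (fun _ : Fin n => ν) (B ∩ D)
      = (Finset.univ.filter (fun σ : Equiv.Perm (Fin n) => chamber σ ⊆ B)).card
        * Measure.pi (fun _ : Fin n => ν) (chamber (1 : Equiv.Perm (Fin n)) ∩ D) := by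
  set π := Measure.pi (fun _ : Fin n => ν) with hπdef
  set S := Finset.univ.filter (fun σ : Equiv.Perm (Fin n) => chamber σ ⊆ B) with hS
  have h0 : π (B ∩ D) = π ((B ∩ D) ∩ (ties n)ᶜ) := by
    refine le_antisymm ?_ (measure_mono inter_subset_left)
    calc π (B ∩ D) ≤ π (((B ∩ D) ∩ (ties n)ᶜ) ∪ ties n) :=
        measure_mono (fun v hv => by
          by_cases hvt : v ∈ ties n
          · exact Or.inr hvt
          · exact Or.inl ⟨hv, hvt⟩)
      _ ≤ π ((B ∩ D) ∩ (ties n)ᶜ) + π (ties n) := measure_union_le _ _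
      _ = π ((B ∩ D) ∩ (ties n)ᶜ) := by rw [ties_null ν, add_zero]
  have hset : (B ∩ D) ∩ (ties n)ᶜ = ⋃ σ ∈ S, chamber σ ∩ D := by
    ext v
    constructor
    · rintro ⟨⟨hvB, hvD⟩, hvt⟩
      have hvc : v ∈ chamber (Tuple.sort v) := mem_chamber_sort hvt
      have hsub : chamber (Tuple.sort v) ⊆ B := by
        intro w hw
        exact hB v w (fun i j => (hvc i j).trans (hw i j).symm) hvB
      exact mem_biUnion (Finset.mem_filter.2 ⟨Finset.mem_univ _, hsub⟩) ⟨hvc, hvD⟩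
    · intro hv
      rcases mem_iUnion₂.1 hv with ⟨σ, hσ, hvc, hvD⟩
      have hsub : chamber σ ⊆ B := (Finset.mem_filter.1 hσ).2
      exact ⟨⟨hsub hvc, hvD⟩, chamber_subset_compl_ties σ hvc⟩
  have hdisj : Set.PairwiseDisjoint (↑S) (fun σ : Equiv.Perm (Fin n) => chamber σ ∩ D) :=
    fun σ _ τ _ hστ => Set.disjoint_left.2 fun v hvσ hvτ =>
      hστ (perm_eq_of_mem_chamber hvσ.1 hvτ.1)
  rw [h0, hset, measure_biUnion_finset hdisj (fun σ _ => (measurableSet_chamber σ).inter hD)]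
  have hconst : ∀ σ ∈ S, π (chamber σ ∩ D) = π (chamber (1 : Equiv.Perm (Fin n)) ∩ D) := by
    intro σ _
    have hp := (measurePreserving_compPerm ν σ⁻¹).measure_preimage
      (((measurableSet_chamber σ).inter hD).nullMeasurableSet)
    rw [preimage_inter, compPerm_preimage_chamber, hDinv] at hp
    rw [inv_mul_cancel] at hp
    exact hp.symm ▸ hp
  rw [Finset.sum_congr rfl hconst, Finset.sum_const, nsmul_eq_mul]

lemma measure_box (ν : Measure ℝ) [IsProbabilityMeasure ν] (x : ℝ) :
    Measure.pi (fun _ : Fin n => ν) (box n x) = ν (Iio x) ^ n := by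
  have h : box n x = univ.pi (fun _ : Fin n => Iio x) := by
    ext v; simp [box, mem_univ_pi, mem_Iio]
  rw [h, Measure.pi_pi]
  simp [Finset.prod_const, Finset.card_univ]

lemma measure_patternDet_mul (ν : Measure ℝ) [IsProbabilityMeasure ν] [NullSingletonClass ν]
    {B : Set (Fin n → ℝ)} (hB : patternDet B) (x : ℝ) :
    Measure.pi (fun _ : Fin n => ν) (B ∩ box n x)
      = Measure.pi (fun _ : Fin n => ν) B * Measure.pi (fun _ : Fin n => ν) (box n x) := by
  classical
  set π := Measure.pi (fun _ : Fin n => ν) with hπdef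
  have hunivB : patternDet (univ : Set (Fin n → ℝ)) := fun _ _ _ _ => mem_univ _
  have hDuniv : ∀ σ : Equiv.Perm (Fin n),
      (fun v : Fin n → ℝ => v ∘ σ) ⁻¹' (univ : Set (Fin n → ℝ)) = univ := fun σ => preimage_univ
  have h1 := measure_patternDet_inter ν hB (measurableSet_box x)
    (fun σ => compPerm_preimage_box σ x)
  have h2 := measure_patternDet_inter ν hB MeasurableSet.univ hDuniv
  have h3 := measure_patternDet_inter ν hunivB (measurableSet_box x)
    (fun σ => compPerm_preimage_box σ x)
  have h4 := measure_patternDet_inter ν hunivB MeasurableSet.univ hDuniv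
  have hBuniv : π (B ∩ univ) = π B := by rw [inter_univ]
  have hboxuniv : π ((univ : Set (Fin n → ℝ)) ∩ box n x) = π (box n x) := by rw [univ_inter]
  have huniv1 : π ((univ : Set (Fin n → ℝ)) ∩ univ) = 1 := by
    rw [inter_univ]; exact measure_univ
  set k := ((Finset.univ.filter (fun σ : Equiv.Perm (Fin n) => chamber σ ⊆ B)).card : ℝ≥0∞)
  set N := ((Finset.univ.filter
    (fun σ : Equiv.Perm (Fin n) => chamber σ ⊆ (univ : Set (Fin n → ℝ)))).card : ℝ≥0∞)
  set c := π (chamber (1 : Equiv.Perm (Fin n)) ∩ box n x)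
  set d := π (chamber (1 : Equiv.Perm (Fin n)) ∩ univ)
  have e1 : π (B ∩ box n x) = k * c := h1
  have e2 : π B = k * d := by rw [← hBuniv]; exact h2
  have e3 : π (box n x) = N * c := by rw [← hboxuniv]; exact h3
  have e4 : N * d = 1 := by rw [← h4]; exact huniv1
  rw [e1, e2, e3]
  calc k * c = k * c * 1 := by rw [mul_one]
    _ = k * c * (N * d) := by rw [e4]
    _ = k * d * (N * c) := by ring


/-! ### Sequence-level record combinatorics -/

def recOK (y : ℕ → ℝ) (n : ℕ) : Prop := ∀ j, 1 ≤ j → j < n → y j < y n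

open scoped Classical in
noncomputable def cnt (y : ℕ → ℝ) (n : ℕ) : ℕ :=
  ((Finset.Icc 1 n).filter (fun k => recOK y k)).card

lemma recOK_one (y : ℕ → ℝ) : recOK y 1 := fun j hj1 hj => absurd hj1 (by omega)

open scoped Classical in
lemma cnt_succ {y : ℕ → ℝ} {m m' : ℕ} (hmm : m < m') (hrec : recOK y m')
    (hmin : ∀ k, m < k → k < m' → ¬ recOK y k) : cnt y m' = cnt y m + 1 := by
  have hset : (Finset.Icc 1 m').filter (fun k => recOK y k)
      = insert m' ((Finset.Icc 1 m).filter (fun k => recOK y k)) := by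
    ext k
    simp only [Finset.mem_filter, Finset.mem_insert, Finset.mem_Icc]
    constructor
    · rintro ⟨⟨hk1, hk2⟩, hkrec⟩
      rcases lt_trichotomy k m' with h | h | h
      · rcases le_or_gt k m with h2 | h2
        · exact Or.inr ⟨⟨hk1, h2⟩, hkrec⟩
        · exact absurd hkrec (hmin k h2 h)
      · exact Or.inl h
      · omega
    · rintro (rfl | ⟨⟨hk1, hk2⟩, hkrec⟩)
      · exact ⟨⟨by omega, le_refl _⟩, hrec⟩
      · exact ⟨⟨hk1, by omega⟩, hkrec⟩
  have hnotmem : m' ∉ (Finset.Icc 1 m).filter (fun k => recOK y k) := by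
    intro hmem
    exact absurd (Finset.mem_Icc.1 (Finset.mem_filter.1 hmem).1).2 (by omega)
  unfold cnt
  rw [hset, Finset.card_insert_of_notMem hnotmem]

open scoped Classical in
lemma recMain (y : ℕ → ℝ) (ℓ : ℕ → ℕ) (hG : ∀ m, ∃ k, m < k ∧ recOK y k)
    (hℓ0 : ℓ 0 = 0) (hℓs : ∀ r, ℓ (r + 1) = sInf {k | ℓ r < k ∧ recOK y k}) :
    ∀ r, 1 ≤ r → (1 ≤ ℓ r ∧ recOK y (ℓ r) ∧ cnt y (ℓ r) = r) := by
  intro r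
  induction r with
  | zero => omega
  | succ r IH =>
    intro _
    rcases Nat.eq_zero_or_pos r with rfl | hr
    · have h1 : ℓ 1 = 1 := by
        rw [hℓs 0, hℓ0]
        have hmem : 1 ∈ {k | 0 < k ∧ recOK y k} := ⟨one_pos, recOK_one y⟩
        have hle : sInf {k | 0 < k ∧ recOK y k} ≤ 1 := Nat.sInf_le hmem
        have hpos : 0 < sInf {k | 0 < k ∧ recOK y k} := (Nat.sInf_mem ⟨1, hmem⟩).1
        omega
      rw [h1]
      refine ⟨le_refl _, recOK_one y, ?_⟩
      unfold cnt
      rw [Finset.Icc_self, Finset.filter_singleton, if_pos (recOK_one y)]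
      rfl
    · obtain ⟨hℓ1, hrec, hcnt⟩ := IH hr
      have hAne : {k | ℓ r < k ∧ recOK y k}.Nonempty := by
        obtain ⟨k, hk1, hk2⟩ := hG (ℓ r)
        exact ⟨k, hk1, hk2⟩
      have hmem : ℓ r < ℓ (r + 1) ∧ recOK y (ℓ (r + 1)) := by
        have := Nat.sInf_mem hAne
        rw [← hℓs r] at this
        exact this
      have hmin : ∀ k, ℓ r < k → k < ℓ (r + 1) → ¬ recOK y k := by
        intro k h1 h2 h3
        have : ℓ (r + 1) ≤ k := by rw [hℓs r]; exact Nat.sInf_le ⟨h1, h3⟩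
        omega
      refine ⟨by omega, hmem.2, ?_⟩
      rw [cnt_succ hmem.1 hmem.2 hmin, hcnt]

open scoped Classical in
lemma cnt_lt_of_lt {y : ℕ → ℝ} {a b : ℕ} (h1 : 1 ≤ b) (hab : a < b) (hrb : recOK y b) :
    cnt y a < cnt y b := by
  have hsub : (Finset.Icc 1 a).filter (fun k => recOK y k)
      ⊆ (Finset.Icc 1 b).filter (fun k => recOK y k) :=
    Finset.filter_subset_filter _ (Finset.Icc_subset_Icc_right (by omega))
  have hss : (Finset.Icc 1 a).filter (fun k => recOK y k)
      ⊂ (Finset.Icc 1 b).filter (fun k => recOK y k) := by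
    refine (Finset.ssubset_iff_of_subset hsub).2 ?_
    refine ⟨b, Finset.mem_filter.2 ⟨Finset.mem_Icc.2 ⟨h1, le_refl _⟩, hrb⟩, ?_⟩
    intro hmem
    exact absurd (Finset.mem_Icc.1 (Finset.mem_filter.1 hmem).1).2 (by omega)
  exact Finset.card_lt_card hss

lemma rec_unique {y : ℕ → ℝ} {a b : ℕ} (ha1 : 1 ≤ a) (hb1 : 1 ≤ b)
    (hra : recOK y a) (hrb : recOK y b) (hc : cnt y a = cnt y b) : a = b := by
  rcases lt_trichotomy a b with h | h | h
  · exact absurd hc (Nat.ne_of_lt (cnt_lt_of_lt hb1 h hrb))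
  · exact h
  · exact absurd hc.symm (Nat.ne_of_lt (cnt_lt_of_lt ha1 h hra))

lemma recOK_congr {y y' : ℕ → ℝ} {n k : ℕ} (h : ∀ j, 1 ≤ j → j ≤ n → y j = y' j)
    (hk : k ≤ n) : recOK y k ↔ recOK y' k := by
  constructor
  · intro hy j hj1 hjk
    rw [← h j hj1 (by omega), ← h k (by omega) hk]
    exact hy j hj1 hjk
  · intro hy j hj1 hjk
    rw [h j hj1 (by omega), h k (by omega) hk]
    exact hy j hj1 hjk

open scoped Classical in
lemma cnt_congr {y y' : ℕ → ℝ} {n : ℕ} (h : ∀ j, 1 ≤ j → j ≤ n → y j = y' j) :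
    cnt y n = cnt y' n := by
  simp only [cnt]
  congr 1
  apply Finset.filter_congr
  intro k hk
  have hk' := Finset.mem_Icc.1 hk
  first
  | exact recOK_congr h hk'.2
  | exact propext (recOK_congr h hk'.2)

/-! ### Tuple versions -/

/-- Extension of a tuple to a sequence; coordinate `i : Fin n` holds the value of `X (i+1)`. -/
noncomputable def seqOf (n : ℕ) (v : Fin n → ℝ) : ℕ → ℝ :=
  fun k => if h : 1 ≤ k ∧ k ≤ n then v ⟨k - 1, by omega⟩ else 0

lemma seqOf_eq {n : ℕ} (v : Fin n → ℝ) {k : ℕ} (h1 : 1 ≤ k) (h2 : k ≤ n) :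
    seqOf n v k = v ⟨k - 1, by omega⟩ := dif_pos ⟨h1, h2⟩

/-- The tuple-level event `{the last index is a record and there are exactly r records}`. -/
def recEvent (n r : ℕ) : Set (Fin n → ℝ) :=
  {v | recOK (seqOf n v) n ∧ cnt (seqOf n v) n = r}

lemma patternDet_recEvent {n : ℕ} (hn : 1 ≤ n) (r : ℕ) : patternDet (recEvent n r) := by
  intro v w hvw hv
  have hcmp : ∀ j k : ℕ, 1 ≤ j → j ≤ n → 1 ≤ k → k ≤ n →
      (seqOf n v j < seqOf n v k ↔ seqOf n w j < seqOf n w k) := by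
    intro j k hj1 hj2 hk1 hk2
    rw [seqOf_eq v hj1 hj2, seqOf_eq v hk1 hk2, seqOf_eq w hj1 hj2, seqOf_eq w hk1 hk2]
    exact hvw _ _
  have hrec : ∀ k, 1 ≤ k → k ≤ n → (recOK (seqOf n v) k ↔ recOK (seqOf n w) k) := by
    intro k hk1 hk2
    constructor
    · intro hy j hj1 hjk
      exact (hcmp j k hj1 (by omega) hk1 hk2).1 (hy j hj1 hjk)
    · intro hy j hj1 hjk
      exact (hcmp j k hj1 (by omega) hk1 hk2).2 (hy j hj1 hjk)
  have hcnteq : cnt (seqOf n v) n = cnt (seqOf n w) n := by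
    classical
    simp only [cnt]
    congr 1
    apply Finset.filter_congr
    intro k hk
    have hk' := Finset.mem_Icc.1 hk
    first
    | exact hrec k hk'.1 hk'.2
    | exact propext (hrec k hk'.1 hk'.2)
  exact ⟨(hrec n hn (le_refl n)).1 hv.1, by rw [← hcnteq]; exact hv.2⟩

lemma measurable_seqOf_apply {n : ℕ} (k : ℕ) : Measurable (fun v : Fin n → ℝ => seqOf n v k) := by
  by_cases h : 1 ≤ k ∧ k ≤ n
  · have heq : (fun v : Fin n → ℝ => seqOf n v k) = fun v => v ⟨k - 1, by omega⟩ := by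
      funext v
      exact seqOf_eq v h.1 h.2
    rw [heq]
    exact measurable_pi_apply _
  · have heq : (fun v : Fin n → ℝ => seqOf n v k) = fun _ => 0 := by
      funext v
      exact dif_neg h
    rw [heq]
    exact measurable_const

lemma measurableSet_recOK_seqOf {n : ℕ} (k : ℕ) :
    MeasurableSet {v : Fin n → ℝ | recOK (seqOf n v) k} := by
  have h : {v : Fin n → ℝ | recOK (seqOf n v) k}
      = ⋂ (j : ℕ) (_ : 1 ≤ j) (_ : j < k), {v : Fin n → ℝ | seqOf n v j < seqOf n v k} := by
    ext v
    simp only [mem_setOf_eq, mem_iInter, recOK]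
  rw [h]
  exact MeasurableSet.iInter fun j => MeasurableSet.iInter fun _ =>
    MeasurableSet.iInter fun _ =>
      measurableSet_lt (measurable_seqOf_apply j) (measurable_seqOf_apply k)

open scoped Classical in
lemma measurable_cnt_seqOf {n : ℕ} : Measurable (fun v : Fin n → ℝ => cnt (seqOf n v) n) := by
  have h : (fun v : Fin n → ℝ => cnt (seqOf n v) n)
      = fun v => ∑ k ∈ Finset.Icc 1 n, if recOK (seqOf n v) k then 1 else 0 := by
    funext v
    unfold cnt
    rw [Finset.card_filter]
  rw [h]
  exact Finset.measurable_sum _ fun k _ =>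
    Measurable.ite (measurableSet_recOK_seqOf k) measurable_const measurable_const

lemma measurableSet_recEvent (n r : ℕ) : MeasurableSet (recEvent n r) := by
  have h : recEvent n r
      = {v : Fin n → ℝ | recOK (seqOf n v) n} ∩ ((fun v => cnt (seqOf n v) n) ⁻¹' {r}) := rfl
  rw [h]
  exact (measurableSet_recOK_seqOf n).inter (measurable_cnt_seqOf (measurableSet_singleton r))

/-- Strict argmax sets. -/
def argmaxSet (n : ℕ) (q : Fin n) : Set (Fin n → ℝ) := {v | ∀ i, i ≠ q → v i < v q}

lemma measurableSet_argmaxSet (n : ℕ) (q : Fin n) : MeasurableSet (argmaxSet n q) := by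
  have h : argmaxSet n q = ⋂ (i : Fin n) (_ : i ≠ q), {v : Fin n → ℝ | v i < v q} := by
    ext v
    simp only [argmaxSet, mem_setOf_eq, mem_iInter]
  rw [h]
  exact MeasurableSet.iInter fun i => MeasurableSet.iInter fun _ =>
    measurableSet_lt (measurable_pi_apply i) (measurable_pi_apply q)

lemma compPerm_preimage_argmaxSet {n : ℕ} (σ : Equiv.Perm (Fin n)) (q : Fin n) :
    (fun v : Fin n → ℝ => v ∘ σ) ⁻¹' argmaxSet n q = argmaxSet n (σ q) := by
  ext v
  simp only [argmaxSet, mem_preimage, mem_setOf_eq, Function.comp_apply]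
  constructor
  · intro h i hi
    have := h (σ.symm i) (fun hc => hi (by rw [← σ.apply_symm_apply i, hc]))
    simpa using this
  · intro h i hi
    exact h (σ i) (fun hc => hi (σ.injective hc))

lemma argmaxSet_measure_le (ν : Measure ℝ) [IsProbabilityMeasure ν] {n : ℕ} (q : Fin n) :
    (n : ℝ≥0∞) * Measure.pi (fun _ : Fin n => ν) (argmaxSet n q) ≤ 1 := by
  have hconst : ∀ q' : Fin n, Measure.pi (fun _ : Fin n => ν) (argmaxSet n q')
      = Measure.pi (fun _ : Fin n => ν) (argmaxSet n q) := by
    intro q'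
    have hp := (measurePreserving_compPerm ν (Equiv.swap q q')).measure_preimage
      ((measurableSet_argmaxSet n q).nullMeasurableSet)
    rw [compPerm_preimage_argmaxSet, Equiv.swap_apply_left] at hp
    exact hp
  have hdisj : Pairwise (Function.onFun Disjoint (fun q' : Fin n => argmaxSet n q')) := by
    intro a b hab
    refine Set.disjoint_left.2 fun v hva hvb => ?_
    exact lt_asymm (hva b (Ne.symm hab)) (hvb a hab)
  have hun := measure_iUnion (μ := Measure.pi (fun _ : Fin n => ν)) hdisj
    (fun q' => measurableSet_argmaxSet n q')
  have hle : Measure.pi (fun _ : Fin n => ν) (⋃ q', argmaxSet n q') ≤ 1 :=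
    prob_le_one
  rw [hun, tsum_fintype] at hle
  calc (n : ℝ≥0∞) * Measure.pi (fun _ : Fin n => ν) (argmaxSet n q)
      = ∑ q' : Fin n, Measure.pi (fun _ : Fin n => ν) (argmaxSet n q') := by
        rw [Finset.sum_congr rfl (fun q' _ => hconst q'), Finset.sum_const,
          Finset.card_univ, Fintype.card_fin, nsmul_eq_mul]
    _ ≤ 1 := hle


lemma measurableSet_ties (n : ℕ) : MeasurableSet (ties n) := by
  have h : ties n = ⋃ (i : Fin n) (j : Fin n) (_ : i ≠ j), {v : Fin n → ℝ | v i = v j} := by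
    ext v
    simp only [ties, mem_setOf_eq, mem_iUnion]
    constructor
    · rintro ⟨i, j, hij, hv⟩; exact ⟨i, j, hij, hv⟩
    · rintro ⟨i, j, hij, hv⟩; exact ⟨i, j, hij, hv⟩
  rw [h]
  exact MeasurableSet.iUnion fun i => MeasurableSet.iUnion fun j =>
    MeasurableSet.iUnion fun _ =>
      measurableSet_eq_fun (measurable_pi_apply i) (measurable_pi_apply j)

lemma argmaxSet_measure_const (ν : Measure ℝ) [IsProbabilityMeasure ν] {n : ℕ} (q q' : Fin n) :
    Measure.pi (fun _ : Fin n => ν) (argmaxSet n q')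
      = Measure.pi (fun _ : Fin n => ν) (argmaxSet n q) := by
  have hp := (measurePreserving_compPerm ν (Equiv.swap q q')).measure_preimage
    ((measurableSet_argmaxSet n q).nullMeasurableSet)
  rw [compPerm_preimage_argmaxSet, Equiv.swap_apply_left] at hp
  exact hp

/-! ### CDF facts -/

variable {Ω : Type*} [MeasurableSpace Ω]

open Filter in
lemma measure_le_cdf (μ : Measure Ω) {f : Ω → ℝ}
    (F : ℝ → ℝ) (hF : Continuous F) (hcdf : ∀ x, μ {ω | f ω < x} = ENNReal.ofReal (F x))
    (a : ℝ) : μ {ω | f ω ≤ a} = ENNReal.ofReal (F a) := by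
  refine le_antisymm ?_ ?_
  · have hlim : Tendsto (fun b => ENNReal.ofReal (F b)) (nhdsWithin a (Ioi a))
        (nhds (ENNReal.ofReal (F a))) :=
      ((ENNReal.continuous_ofReal.comp hF).tendsto a).mono_left nhdsWithin_le_nhds
    refine ge_of_tendsto hlim ?_
    refine Filter.eventually_of_mem self_mem_nhdsWithin ?_
    intro b hb
    rw [← hcdf b]
    exact measure_mono fun ω (h : f ω ≤ a) => show f ω < b from lt_of_le_of_lt h hb
  · rw [← hcdf a]
    exact measure_mono fun ω (h : f ω < a) => le_of_lt h

lemma map_eq_of_cdf (μ : Measure Ω) [IsProbabilityMeasure μ] {f g : Ω → ℝ}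
    (hfm : Measurable f) (hgm : Measurable g) (F : ℝ → ℝ) (hF : Continuous F)
    (hcdff : ∀ x, μ {ω | f ω < x} = ENNReal.ofReal (F x))
    (hcdfg : ∀ x, μ {ω | g ω < x} = ENNReal.ofReal (F x)) :
    μ.map f = μ.map g := by
  have : IsProbabilityMeasure (μ.map f) := Measure.isProbabilityMeasure_map hfm.aemeasurable
  refine Measure.ext_of_Iic (μ.map f) (μ.map g) fun a => ?_
  rw [Measure.map_apply hfm measurableSet_Iic, Measure.map_apply hgm measurableSet_Iic]
  have h1 : f ⁻¹' Iic a = {ω | f ω ≤ a} := rfl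
  have h2 : g ⁻¹' Iic a = {ω | g ω ≤ a} := rfl
  rw [h1, h2, measure_le_cdf μ F hF hcdff a, measure_le_cdf μ F hF hcdfg a]

lemma noAtoms_map (μ : Measure Ω) {f : Ω → ℝ} (hfm : Measurable f)
    (F : ℝ → ℝ) (hF : Continuous F)
    (hcdf : ∀ x, μ {ω | f ω < x} = ENNReal.ofReal (F x)) :
    NullSingletonClass (μ.map f) := by
  refine ⟨fun a => ?_⟩
  rw [Measure.map_apply hfm (measurableSet_singleton a)]
  have hsplit : {ω | f ω ≤ a} = {ω | f ω < a} ∪ f ⁻¹' {a} := by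
    ext ω
    simp only [mem_setOf_eq, mem_union, mem_preimage, mem_singleton_iff]
    exact le_iff_lt_or_eq
  have hdisj : Disjoint {ω | f ω < a} (f ⁻¹' {a}) := by
    rw [Set.disjoint_left]
    intro ω h1 h2
    rw [mem_preimage, mem_singleton_iff] at h2
    exact absurd (h2 ▸ h1) (lt_irrefl a)
  have hm2 : MeasurableSet (f ⁻¹' {a}) := hfm (measurableSet_singleton a)
  have hU := measure_union (μ := μ) hdisj hm2
  rw [← hsplit, measure_le_cdf μ F hF hcdf a, hcdf a] at hU
  have hkey : ENNReal.ofReal (F a) + 0 = ENNReal.ofReal (F a) + μ (f ⁻¹' {a}) := by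
    rw [add_zero]; exact hU
  exact ((ENNReal.add_right_inj ENNReal.ofReal_ne_top).1 hkey).symm

/-! ### pushforward of tuples -/

lemma map_tuple_pi (μ : Measure Ω) [IsProbabilityMeasure μ] (X : ℕ → Ω → ℝ)
    (hmeas : ∀ i, Measurable (X i))
    (hindep : iIndepFun X μ)
    (ν : Measure ℝ) [IsProbabilityMeasure ν] (hν : ∀ k, 1 ≤ k → μ.map (X k) = ν) (n : ℕ) :
    μ.map (fun ω (i : Fin n) => X (i.1 + 1) ω) = Measure.pi (fun _ : Fin n => ν) := by
  classical
  have hYm : Measurable (fun ω (i : Fin n) => X (i.1 + 1) ω) :=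
    measurable_pi_lambda _ fun i => hmeas _
  refine (Measure.pi_eq fun s hs => ?_).symm
  rw [Measure.map_apply hYm (MeasurableSet.univ_pi hs)]
  set sets : ℕ → Set ℝ := fun k => if h : 1 ≤ k ∧ k ≤ n then s ⟨k - 1, by omega⟩ else univ
    with hsets
  have hseq : ∀ i : Fin n, sets (i.1 + 1) = s i := by
    intro i
    have hi := i.isLt
    simp only [hsets]
    rw [dif_pos ⟨by omega, by omega⟩]
    congr 1
  have hS : ((fun ω (i : Fin n) => X (i.1 + 1) ω) ⁻¹' univ.pi s)
      = ⋂ k ∈ Finset.image (fun i : Fin n => i.1 + 1) Finset.univ, X k ⁻¹' sets k := by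
    ext ω
    simp only [mem_preimage, mem_univ_pi, mem_iInter, Finset.mem_image, Finset.mem_univ,
      true_and]
    constructor
    · rintro h k ⟨i, rfl⟩
      rw [hseq i]
      exact h i
    · intro h i
      have h2 := h (i.1 + 1) ⟨i, rfl⟩
      rwa [hseq i] at h2
  have hsetsmeas : ∀ k, k ∈ Finset.image (fun i : Fin n => i.1 + 1) Finset.univ →
      MeasurableSet (sets k) := by
    intro k _
    simp only [hsets]
    split_ifs
    · exact hs _
    · exact MeasurableSet.univ
  rw [hS, hindep.measure_inter_preimage_eq_mul _ hsetsmeas]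
  rw [Finset.prod_image (by intro a _ b _ hab; exact Fin.ext (by simp only at hab; omega))]
  refine Finset.prod_congr rfl fun i _ => ?_
  rw [hseq i, ← Measure.map_apply (hmeas _) (hs i), hν (i.1 + 1) (by omega)]


/-! ### Ω-level events -/

def goodΩ (X : ℕ → Ω → ℝ) : Set Ω :=
  {ω | ∀ m, ∃ k, m < k ∧ recOK (fun j => X j ω) k}

def recEventΩ (X : ℕ → Ω → ℝ) (n rr : ℕ) : Set Ω :=
  {ω | recOK (fun j => X j ω) n ∧ cnt (fun j => X j ω) n = rr}

end RecordThm

open Set RecordThm in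
/-- Distribution of the `r`-th classical record value: if `L r` is the `r`-th
record time (with `L 0 = 0` and `L (r+1)` the first index after `L r` at which a
record occurs), then for every `r ≥ 1` and `x : ℝ`,
`P(X_{L r} < x) = E[F(x) ^ (L r)]`. -/
theorem rth_record_value_distribution
    {Ω : Type*} [MeasurableSpace Ω] (μ : Measure Ω) [IsProbabilityMeasure μ]
    (X : ℕ → Ω → ℝ) (hmeas : ∀ i, Measurable (X i))
    (hindep : iIndepFun X μ)
    (F : ℝ → ℝ) (hF : Continuous F) (hF0 : ∀ x, 0 ≤ F x)
    (hcdf : ∀ i x, μ {ω | X i ω < x} = ENNReal.ofReal (F x))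
    (L : ℕ → Ω → ℕ) (hLmeas : ∀ r, Measurable (L r))
    (hL0 : ∀ ω, L 0 ω = 0)
    (hL : ∀ r ω, L (r + 1) ω
      = sInf {n | L r ω < n ∧ ∀ j, 1 ≤ j → j < n → X j ω < X n ω})
    (r : ℕ) (hr : 1 ≤ r) (x : ℝ) :
    μ {ω | X (L r ω) ω < x} = ∫⁻ ω, ENNReal.ofReal (F x ^ (L r ω)) ∂μ := by
  classical
  set ν : Measure ℝ := μ.map (X 1) with hνdef
  have hνk : ∀ k, 1 ≤ k → μ.map (X k) = ν := fun k _ =>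
    map_eq_of_cdf μ (hmeas k) (hmeas 1) F hF (hcdf k) (hcdf 1)
  haveI hνprob : IsProbabilityMeasure ν := by
    rw [hνdef]; exact Measure.isProbabilityMeasure_map (hmeas 1).aemeasurable
  haveI hνatoms : NullSingletonClass ν := by
    rw [hνdef]; exact noAtoms_map μ (hmeas 1) F hF (hcdf 1)
  have hνIio : ∀ x' : ℝ, ν (Iio x') = ENNReal.ofReal (F x') := by
    intro x'
    rw [hνdef, Measure.map_apply (hmeas 1) measurableSet_Iio]
    exact hcdf 1 x'
  have hmap : ∀ n : ℕ, μ.map (fun ω (i : Fin n) => X (i.1 + 1) ω)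
      = Measure.pi (fun _ : Fin n => ν) := fun n =>
    map_tuple_pi μ X hmeas hindep ν hνk n
  -- bad events are null
  have hBad : ∀ m : ℕ, μ {ω | ∀ k, m < k → ¬ recOK (fun j => X j ω) k} = 0 := by
    intro m
    have hbound : ∀ N : ℕ, (hmN : m < N) → μ {ω | ∀ k, m < k → ¬ recOK (fun j => X j ω) k}
        ≤ (m : ℝ≥0∞) * Measure.pi (fun _ : Fin N => ν) (argmaxSet N ⟨0, by omega⟩) := by
      intro N hmN
      have hYm : Measurable (fun ω (i : Fin N) => X (i.1 + 1) ω) :=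
        measurable_pi_lambda _ fun i => hmeas _
      have hTiesN : μ ((fun ω (i : Fin N) => X (i.1 + 1) ω) ⁻¹' ties N) = 0 := by
        rw [← Measure.map_apply hYm (measurableSet_ties N), hmap N]
        exact ties_null ν
      have hsub : {ω | ∀ k, m < k → ¬ recOK (fun j => X j ω) k}
          ⊆ ((fun ω (i : Fin N) => X (i.1 + 1) ω) ⁻¹' ties N)
          ∪ ⋃ q ∈ Finset.univ.filter (fun q : Fin N => q.1 < m),
              ((fun ω (i : Fin N) => X (i.1 + 1) ω) ⁻¹' argmaxSet N q) := by
        intro ω hω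
        by_cases hties : ω ∈ ((fun ω (i : Fin N) => X (i.1 + 1) ω) ⁻¹' ties N)
        · exact Or.inl hties
        · refine Or.inr ?_
          have hdist : ∀ i j : Fin N, i ≠ j → X (i.1 + 1) ω ≠ X (j.1 + 1) ω := by
            intro i j hij heq
            exact hties ⟨i, j, hij, heq⟩
          obtain ⟨q, -, hq⟩ := Finset.exists_max_image Finset.univ
            (fun i : Fin N => X (i.1 + 1) ω) ⟨⟨0, by omega⟩, Finset.mem_univ _⟩
          have hqstrict : ∀ i : Fin N, i ≠ q → X (i.1 + 1) ω < X (q.1 + 1) ω := by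
            intro i hi
            exact lt_of_le_of_ne (hq i (Finset.mem_univ _)) (hdist i q hi)
          have hqm : q.1 < m := by
            by_contra hqmc
            push_neg at hqmc
            refine hω (q.1 + 1) (by omega) ?_
            intro j hj1 hjk
            have hjN : j - 1 < N := by have := q.isLt; omega
            have hne : (⟨j - 1, hjN⟩ : Fin N) ≠ q := by
              intro hc
              have := congrArg Fin.val hc
              simp only at this
              omega
            have hlt := hqstrict ⟨j - 1, hjN⟩ hne
            have h1 : X (j - 1 + 1) ω = X j ω := by congr 1; omega
            show X j ω < X (q.1 + 1) ω
            rw [← h1]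
            exact hlt
          refine Set.mem_biUnion (Finset.mem_filter.2 ⟨Finset.mem_univ _, hqm⟩) ?_
          intro i hi
          exact hqstrict i hi
      calc μ {ω | ∀ k, m < k → ¬ recOK (fun j => X j ω) k}
          ≤ μ (((fun ω (i : Fin N) => X (i.1 + 1) ω) ⁻¹' ties N)
            ∪ ⋃ q ∈ Finset.univ.filter (fun q : Fin N => q.1 < m),
              ((fun ω (i : Fin N) => X (i.1 + 1) ω) ⁻¹' argmaxSet N q)) := measure_mono hsub
        _ ≤ μ ((fun ω (i : Fin N) => X (i.1 + 1) ω) ⁻¹' ties N)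
            + μ (⋃ q ∈ Finset.univ.filter (fun q : Fin N => q.1 < m),
              ((fun ω (i : Fin N) => X (i.1 + 1) ω) ⁻¹' argmaxSet N q)) := measure_union_le _ _
        _ = μ (⋃ q ∈ Finset.univ.filter (fun q : Fin N => q.1 < m),
              ((fun ω (i : Fin N) => X (i.1 + 1) ω) ⁻¹' argmaxSet N q)) := by
            rw [hTiesN, zero_add]
        _ ≤ ∑ q ∈ Finset.univ.filter (fun q : Fin N => q.1 < m),
              μ ((fun ω (i : Fin N) => X (i.1 + 1) ω) ⁻¹' argmaxSet N q) :=
            measure_biUnion_finset_le _ _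
        _ = ∑ _q ∈ Finset.univ.filter (fun q : Fin N => q.1 < m),
              Measure.pi (fun _ : Fin N => ν) (argmaxSet N ⟨0, by omega⟩) := by
            refine Finset.sum_congr rfl fun q _ => ?_
            rw [← Measure.map_apply hYm (measurableSet_argmaxSet N q), hmap N]
            exact argmaxSet_measure_const ν ⟨0, by omega⟩ q
        _ = ((Finset.univ.filter (fun q : Fin N => q.1 < m)).card : ℝ≥0∞)
              * Measure.pi (fun _ : Fin N => ν) (argmaxSet N ⟨0, by omega⟩) := by
            rw [Finset.sum_const, nsmul_eq_mul]
        _ ≤ (m : ℝ≥0∞) * Measure.pi (fun _ : Fin N => ν) (argmaxSet N ⟨0, by omega⟩) := by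
            refine mul_le_mul_left ?_ _
            refine Nat.cast_le.2 ?_
            calc (Finset.univ.filter (fun q : Fin N => q.1 < m)).card
                ≤ (Finset.range m).card := by
                  refine Finset.card_le_card_of_injOn (fun q => q.1) ?_ ?_
                  · intro q hq
                    exact Finset.mem_range.2 (Finset.mem_filter.1 hq).2
                  · intro a _ b _ hab
                    exact Fin.ext hab
              _ = m := Finset.card_range m
    by_contra hne
    have hpos : μ {ω | ∀ k, m < k → ¬ recOK (fun j => X j ω) k} ≠ 0 := hne
    have hfin : (m : ℝ≥0∞) / μ {ω | ∀ k, m < k → ¬ recOK (fun j => X j ω) k} ≠ ∞ :=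
      (ENNReal.div_lt_top (by simp) hpos).ne
    obtain ⟨N0, hN0⟩ := ENNReal.exists_nat_gt hfin
    have hmN : m < max N0 (m + 1) := lt_of_lt_of_le (Nat.lt_succ_self m) (le_max_right _ _)
    have hb := hbound (max N0 (m + 1)) hmN
    have hc := argmaxSet_measure_le ν (n := max N0 (m + 1)) ⟨0, by omega⟩
    have hmulN : μ {ω | ∀ k, m < k → ¬ recOK (fun j => X j ω) k} * (max N0 (m + 1) : ℕ) ≤ m := by
      calc μ {ω | ∀ k, m < k → ¬ recOK (fun j => X j ω) k} * ((max N0 (m + 1) : ℕ) : ℝ≥0∞)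
          ≤ ((m : ℝ≥0∞) * Measure.pi (fun _ : Fin (max N0 (m + 1)) => ν)
              (argmaxSet (max N0 (m + 1)) ⟨0, by omega⟩)) * ((max N0 (m + 1) : ℕ) : ℝ≥0∞) :=
            mul_le_mul_left hb _
        _ = (m : ℝ≥0∞) * (((max N0 (m + 1) : ℕ) : ℝ≥0∞)
              * Measure.pi (fun _ : Fin (max N0 (m + 1)) => ν)
              (argmaxSet (max N0 (m + 1)) ⟨0, by omega⟩)) := by ring
        _ ≤ (m : ℝ≥0∞) * 1 := mul_le_mul_right hc _
        _ = m := mul_one _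
    have hlt : (m : ℝ≥0∞) / μ {ω | ∀ k, m < k → ¬ recOK (fun j => X j ω) k}
        < ((max N0 (m + 1) : ℕ) : ℝ≥0∞) := by
      refine lt_of_lt_of_le hN0 ?_
      exact_mod_cast Nat.cast_le.2 (le_max_left N0 (m + 1))
    have hlt2 : (m : ℝ≥0∞) < ((max N0 (m + 1) : ℕ) : ℝ≥0∞)
        * μ {ω | ∀ k, m < k → ¬ recOK (fun j => X j ω) k} :=
      (ENNReal.div_lt_iff (Or.inl hpos) (Or.inl (measure_ne_top μ _))).1 hlt
    rw [mul_comm] at hlt2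
    exact absurd hmulN (not_le.2 hlt2)
  have hGc : μ (goodΩ X)ᶜ = 0 := by
    have hGceq : (goodΩ X)ᶜ = ⋃ m : ℕ, {ω | ∀ k, m < k → ¬ recOK (fun j => X j ω) k} := by
      ext ω
      simp only [goodΩ, mem_compl_iff, mem_setOf_eq, mem_iUnion]
      push_neg
      rfl
    rw [hGceq]
    exact measure_iUnion_null fun m => hBad m
  have hnullEq : ∀ A B : Set Ω, A ∩ goodΩ X = B ∩ goodΩ X → μ A = μ B := by
    intro A B hAB
    have key : ∀ C D : Set Ω, C ∩ goodΩ X = D ∩ goodΩ X → μ C ≤ μ D := by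
      intro C D hCD
      calc μ C ≤ μ ((C ∩ goodΩ X) ∪ (goodΩ X)ᶜ) := measure_mono (fun ω hω => by
            by_cases hg : ω ∈ goodΩ X
            · exact Or.inl ⟨hω, hg⟩
            · exact Or.inr hg)
        _ ≤ μ (C ∩ goodΩ X) + μ (goodΩ X)ᶜ := measure_union_le _ _
        _ = μ (D ∩ goodΩ X) := by rw [hGc, add_zero, hCD]
        _ ≤ μ D := measure_mono inter_subset_left
    exact le_antisymm (key A B hAB) (key B A hAB.symm)
  have hLprop : ∀ ω, ω ∈ goodΩ X → ∀ r', 1 ≤ r' →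
      1 ≤ L r' ω ∧ recOK (fun j => X j ω) (L r' ω) ∧ cnt (fun j => X j ω) (L r' ω) = r' :=
    fun ω hω r' hr' =>
      recMain (fun j => X j ω) (fun s => L s ω) hω (hL0 ω) (fun s => hL s ω) r' hr'
  have hEG : ∀ n, 1 ≤ n → {ω | L r ω = n} ∩ goodΩ X = recEventΩ X n r ∩ goodΩ X := by
    intro n hn
    ext ω
    simp only [mem_inter_iff, mem_setOf_eq, recEventΩ]
    constructor
    · rintro ⟨hLn, hω⟩
      obtain ⟨h1, h2, h3⟩ := hLprop ω hω r hr
      rw [hLn] at h2 h3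
      exact ⟨⟨h2, h3⟩, hω⟩
    · rintro ⟨⟨hrec, hcnt⟩, hω⟩
      obtain ⟨h1, h2, h3⟩ := hLprop ω hω r hr
      have := rec_unique hn h1 hrec h2 (hcnt.trans h3.symm)
      exact ⟨this.symm, hω⟩
  have hL0null : μ {ω | L r ω = 0} = 0 := by
    have h := hnullEq {ω | L r ω = 0} ∅ ?_
    · rw [h]; exact measure_empty
    · ext ω
      simp only [mem_inter_iff, mem_setOf_eq, mem_empty_iff_false, false_and, iff_false,
        not_and]
      intro h0 hω
      have := (hLprop ω hω r hr).1
      omega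
  -- term computation
  have hterm : ∀ n, 1 ≤ n → μ (recEventΩ X n r ∩ {ω | X n ω < x})
      = μ (recEventΩ X n r) * ENNReal.ofReal (F x) ^ n := by
    intro n hn
    have hYm : Measurable (fun ω (i : Fin n) => X (i.1 + 1) ω) :=
      measurable_pi_lambda _ fun i => hmeas _
    have hagree : ∀ ω : Ω, ∀ j, 1 ≤ j → j ≤ n →
        X j ω = seqOf n (fun i : Fin n => X (i.1 + 1) ω) j := by
      intro ω j hj1 hj2
      rw [seqOf_eq _ hj1 hj2]
      show X j ω = X (j - 1 + 1) ω
      congr 1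
      omega
    have hEpull : recEventΩ X n r
        = (fun ω (i : Fin n) => X (i.1 + 1) ω) ⁻¹' recEvent n r := by
      ext ω
      simp only [recEventΩ, mem_setOf_eq, mem_preimage, recEvent]
      constructor
      · rintro ⟨h1, h2⟩
        refine ⟨(recOK_congr (fun j a b => hagree ω j a b) (le_refl n)).1 h1, ?_⟩
        rw [← cnt_congr (fun j a b => hagree ω j a b)]
        exact h2
      · rintro ⟨h1, h2⟩
        refine ⟨(recOK_congr (fun j a b => hagree ω j a b) (le_refl n)).2 h1, ?_⟩
        rw [cnt_congr (fun j a b => hagree ω j a b)]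
        exact h2
    have hboxpull : recEventΩ X n r ∩ {ω | X n ω < x}
        = (fun ω (i : Fin n) => X (i.1 + 1) ω) ⁻¹' (recEvent n r ∩ box n x) := by
      ext ω
      simp only [mem_inter_iff, mem_preimage, mem_setOf_eq]
      constructor
      · rintro ⟨hE, hx⟩
        have hE' : (fun i : Fin n => X (i.1 + 1) ω) ∈ recEvent n r := by
          have : ω ∈ (fun ω (i : Fin n) => X (i.1 + 1) ω) ⁻¹' recEvent n r := by
            rw [← hEpull]; exact hE
          exact this
        refine ⟨hE', ?_⟩
        intro i
        show X (i.1 + 1) ω < x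
        rcases eq_or_lt_of_le (show i.1 + 1 ≤ n from i.isLt) with heq | hlt
        · rw [heq]; exact hx
        · have hrec : recOK (fun j => X j ω) n := hE.1
          exact lt_trans (hrec (i.1 + 1) (by omega) hlt) hx
      · rintro ⟨hE', hbox⟩
        have hE : ω ∈ recEventΩ X n r := by
          rw [hEpull]; exact hE'
        refine ⟨hE, ?_⟩
        have hb := hbox ⟨n - 1, by omega⟩
        show X n ω < x
        have h1 : X (n - 1 + 1) ω = X n ω := by congr 1; omega
        rw [← h1]
        exact hb
    rw [hboxpull, ← Measure.map_apply hYm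
        ((measurableSet_recEvent n r).inter (measurableSet_box x)), hmap n,
      measure_patternDet_mul ν (patternDet_recEvent hn r) x, measure_box ν x, hνIio x,
      hEpull, ← Measure.map_apply hYm (measurableSet_recEvent n r), hmap n]
  have hmeasLn : ∀ n, MeasurableSet {ω | L r ω = n} := fun n =>
    hLmeas r (measurableSet_singleton n)
  have hdisjL : Pairwise (Function.onFun Disjoint (fun n => {ω | L r ω = n})) := by
    intro a b hab
    exact Set.disjoint_left.2 fun ω (ha : L r ω = a) (hb : L r ω = b) => hab (ha.symm.trans hb)
  have hkey : ∀ n : ℕ, μ ({ω | L r ω = n} ∩ {ω | X n ω < x})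
      = μ {ω | L r ω = n} * ENNReal.ofReal (F x ^ n) := by
    intro n
    rcases Nat.eq_zero_or_pos n with rfl | hn
    · have hle : μ ({ω | L r ω = 0} ∩ {ω | X 0 ω < x}) ≤ μ {ω | L r ω = 0} :=
        measure_mono inter_subset_left
      rw [hL0null, zero_mul]
      exact le_antisymm (hL0null ▸ hle) zero_le
    · have h1 : μ ({ω | L r ω = n} ∩ {ω | X n ω < x})
          = μ (recEventΩ X n r ∩ {ω | X n ω < x}) := by
        refine hnullEq _ _ ?_
        have h := hEG n hn
        ext ω
        have h2 := Set.ext_iff.1 h ω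
        simp only [mem_inter_iff] at h2 ⊢
        tauto
      have h2 : μ {ω | L r ω = n} = μ (recEventΩ X n r) := hnullEq _ _ (hEG n hn)
      rw [h1, hterm n hn, ← h2, ← ENNReal.ofReal_pow (hF0 x)]
  have hdecomp : {ω | X (L r ω) ω < x}
      = ⋃ n : ℕ, ({ω | L r ω = n} ∩ {ω | X n ω < x}) := by
    ext ω
    simp only [mem_setOf_eq, mem_iUnion, mem_inter_iff]
    constructor
    · intro h
      exact ⟨L r ω, rfl, h⟩
    · rintro ⟨n, hn, hx⟩
      rw [hn]
      exact hx
  have hdisj2 : Pairwise (Function.onFun Disjoint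
      (fun n => {ω | L r ω = n} ∩ {ω | X n ω < x})) := by
    intro a b hab
    exact Set.disjoint_left.2 fun ω ha hb => hab (ha.1.symm.trans hb.1)
  have hUuniv : (⋃ n : ℕ, {ω | L r ω = n}) = (univ : Set Ω) := by
    ext ω
    simp only [mem_iUnion, mem_setOf_eq, mem_univ, iff_true]
    exact ⟨L r ω, rfl⟩
  have hRHS : ∫⁻ ω, ENNReal.ofReal (F x ^ (L r ω)) ∂μ
      = ∑' n : ℕ, μ {ω | L r ω = n} * ENNReal.ofReal (F x ^ n) := by
    rw [← setLIntegral_univ, ← hUuniv, lintegral_iUnion hmeasLn hdisjL]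
    refine tsum_congr fun n => ?_
    have hcong : ∫⁻ ω in {ω | L r ω = n}, ENNReal.ofReal (F x ^ (L r ω)) ∂μ
        = ∫⁻ _ω in {ω | L r ω = n}, ENNReal.ofReal (F x ^ n) ∂μ := by
      refine setLIntegral_congr_fun (hmeasLn n) ?_
      intro ω hω
      beta_reduce
      rw [show L r ω = n from hω]
    rw [hcong, setLIntegral_const, mul_comm]
  rw [hdecomp, measure_iUnion hdisj2 (fun n => (hmeasLn n).inter
    (measurableSet_lt (hmeas n) measurable_const)), hRHS]
  exact tsum_congr hkey
end
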